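/- arXiv:1201.2157 — 5 statements merged into one kernel-verified Lean document; each statement's English description precedes it below -/
import Mathlib

section
/- Fix θ > 0 and x ∈ [0,1]. Let (σ_N)_{N≥1} be independent random permutations defined on a common probability space, with σ_N Ewens(θ)-distributed on S_N. Then almost surely lim_{N→∞} F^{(N)}_{σ_N}(x) = (1 − (1−x)^2)/2. -/
open scoped BigOperators Classical
open Finset

noncomputable section

/-- Total number of cycles of a permutation of `Fin N`, fixed points included. -/
def cycleCount {N : ℕ} (σ : Equiv.Perm (Fin N)) : ℕ :=
  Multiset.card σ.cycleType + (N - σ.cycleType.sum)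

/-- Expectation of `f` under the Ewens measure with parameter `θ` on `S_N`. -/
def ewensE (θ : ℝ) (N : ℕ) (f : Equiv.Perm (Fin N) → ℝ) : ℝ :=
  (∑ σ : Equiv.Perm (Fin N), θ ^ cycleCount σ * f σ) / ∏ k ∈ Finset.range N, (θ + (k : ℝ))

/-- Probability of an event under the Ewens measure. -/
def ewensP (θ : ℝ) (N : ℕ) (A : Set (Equiv.Perm (Fin N))) : ℝ :=
  ewensE θ N (fun σ => if σ ∈ A then 1 else 0)

/-- The Bernoulli random variable `B^{(N)}_{i,s}`, equal to 1 iff `σ i = s`. -/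
def Bis {N : ℕ} (i s : Fin N) (σ : Equiv.Perm (Fin N)) : ℝ :=
  if σ i = s then 1 else 0

/-- The set partitions of a finset `S`, encoded as finsets of nonempty disjoint finsets
covering `S`. -/
def partitionsOf {ι : Type*} [DecidableEq ι] (S : Finset ι) : Finset (Finset (Finset ι)) :=
  S.powerset.powerset.filter
    (fun P => (∀ C ∈ P, C.Nonempty) ∧ ∀ j ∈ S, ∃! C, C ∈ P ∧ j ∈ C)

/-- The joint cumulant of the family of random variables indexed by `S`, expressed through
the moments function `M` : `κ = Σ_π (−1)^{#π−1} (#π−1)! Π_{C ∈ π} M C`. -/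
def cumulantOn {ι 𝕜 : Type*} [DecidableEq ι] [Field 𝕜] (S : Finset ι) (M : Finset ι → 𝕜) : 𝕜 :=
  ∑ P ∈ partitionsOf S,
    (-1 : 𝕜) ^ (P.card - 1) * ((P.card - 1).factorial : 𝕜) * ∏ C ∈ P, M C


/-- Number of weak exceedances among the first `k` positions (1-indexed positions
`1,…,k` correspond to `i : Fin N` with `(i:ℕ) < k`). -/
def countExc {N : ℕ} (σ : Equiv.Perm (Fin N)) (k : ℕ) : ℕ :=
  (Finset.univ.filter (fun i : Fin N => (i : ℕ) < k ∧ (i : ℕ) ≤ (σ i : ℕ))).card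

/-- The function `F^{(N)}_σ : [0,1] → ℝ`: equal to `(1/N) Σ_{i=1}^{Nx} B^{ex,N}_i(σ)` when
`Nx` is an integer, and affine on each interval `[i/N,(i+1)/N]`. -/
def Fex {N : ℕ} (σ : Equiv.Perm (Fin N)) (x : ℝ) : ℝ :=
  ((countExc σ ⌊(N : ℝ) * x⌋₊ : ℝ)
    + ((N : ℝ) * x - (⌊(N : ℝ) * x⌋₊ : ℝ)) *
        ((countExc σ (⌊(N : ℝ) * x⌋₊ + 1) : ℝ) - (countExc σ ⌊(N : ℝ) * x⌋₊ : ℝ))) / N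

namespace EwensProof

open Equiv Equiv.Perm


open Equiv Equiv.Perm

variable {α : Type*} [Fintype α] [DecidableEq α]

/-- merging a fixed point into a cycle gives a cycle -/
lemma isCycle_swap_mul_of_fixed {c : Perm α} (hc : IsCycle c) {a b : α}
    (hca : c a = a) (hb : c b ≠ b) : IsCycle (swap a b * c) := by
  have hab : a ≠ b := by rintro rfl; exact hb hca
  set h := swap a b * c with hh
  have hha : h a = b := by
    simp [hh, Equiv.Perm.mul_apply, hca, Equiv.swap_apply_left]
  -- key iteration claim
  have key : ∀ j : ℕ, j < orderOf c → (h ^ (j + 1)) a = (c ^ j) b := by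
    intro j
    induction j with
    | zero => intro _; simpa using hha
    | succ j ih =>
      intro hj
      have hj' : j < orderOf c := Nat.lt_of_succ_lt hj
      have ihv := ih hj'
      have hmem : (c ^ (j + 1)) b ∈ c.support := by
        rw [Equiv.Perm.pow_apply_mem_support, Equiv.Perm.mem_support]; exact hb
      have hne_a : (c ^ (j + 1)) b ≠ a := by
        intro hEq
        have : a ∈ c.support := hEq ▸ hmem
        rw [Equiv.Perm.mem_support] at this; exact this hca
      have hne_b : (c ^ (j + 1)) b ≠ b := by
        intro hEq
        have h1 : c ^ (j + 1) = 1 := (hc.pow_eq_one_iff' hb).mpr hEq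
        have := Nat.le_of_dvd (Nat.succ_pos j) (orderOf_dvd_of_pow_eq_one h1)
        omega
      have : (h ^ (j + 1 + 1)) a = h ((h ^ (j + 1)) a) := by
        rw [pow_succ' h (j + 1)]; rfl
      rw [this, ihv]
      show (swap a b * c) ((c ^ j) b) = (c ^ (j + 1)) b
      have hcc : c ((c ^ j) b) = (c ^ (j + 1)) b := by
        rw [pow_succ' c j, Equiv.Perm.mul_apply]
      rw [Equiv.Perm.mul_apply, hcc, Equiv.swap_apply_of_ne_of_ne hne_a hne_b]
  refine ⟨a, by rw [hha]; exact fun hEq => hab hEq.symm, ?_⟩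
  intro y hy
  by_cases hya : y = a
  · subst hya; exact Equiv.Perm.SameCycle.refl _ _
  · have hcy : c y ≠ y := by
      intro hcyy
      apply hy
      by_cases hyb : y = b
      · exact absurd (hyb ▸ hcyy) hb
      · simp [hh, Equiv.Perm.mul_apply, hcyy, Equiv.swap_apply_of_ne_of_ne hya hyb]
    obtain ⟨n, hn⟩ := hc.exists_pow_eq hb hcy
    have hord : 0 < orderOf c := orderOf_pos c
    have hmlt : n % orderOf c < orderOf c := Nat.mod_lt _ hord
    have hmn : (c ^ (n % orderOf c)) b = y := by rw [pow_mod_orderOf]; exact hn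
    refine ⟨((n % orderOf c) + 1 : ℕ), ?_⟩
    rw [zpow_natCast]
    rw [key _ hmlt]; exact hmn

/-- support of swap a b * f when f fixes a -/
lemma support_swap_mul_of_fixed {f : Perm α} {a b : α} (hfa : f a = a) (hab : a ≠ b) :
    (swap a b * f).support = insert a (insert b f.support) := by
  ext x
  simp only [Equiv.Perm.mem_support, Finset.mem_insert, Equiv.Perm.mul_apply]
  by_cases hxa : x = a
  · subst hxa
    constructor
    · intro _; left; rfl
    · intro _; rw [hfa, Equiv.swap_apply_left]; exact fun h => hab h.symm
  by_cases hxb : x = b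
  · subst hxb
    by_cases hfb : f x = x
    · constructor
      · intro _; right; left; rfl
      · intro _; rw [hfb, Equiv.swap_apply_right]; exact fun h => hxa h.symm
    · have hfbne_a : f x ≠ a := by
        intro hEq; exact hxa (f.injective (hEq.trans hfa.symm))
      constructor
      · intro _; right; right; exact hfb
      · intro _
        by_cases hfb2 : f x = x
        · exact absurd hfb2 hfb
        · rw [Equiv.swap_apply_of_ne_of_ne hfbne_a hfb]  -- f x ≠ b since x = b, f x ≠ x
          exact hfb
  · -- x ∉ {a, b}
    have hfx_ne_a : f x ≠ a := fun hEq => hxa (f.injective (hEq.trans hfa.symm))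
    constructor
    · intro hne
      right; right
      intro hfx
      rw [hfx, Equiv.swap_apply_of_ne_of_ne hxa hxb] at hne
      exact hne rfl
    · rintro (h | h | h)
      · exact absurd h hxa
      · exact absurd h hxb
      · by_cases hfxb : f x = b
        · rw [hfxb, Equiv.swap_apply_right]; exact fun hEq => hxa hEq.symm
        · rw [Equiv.swap_apply_of_ne_of_ne hfx_ne_a hfxb]; exact h


/-- card of cycleType after multiplying by a swap merging a fixed point -/
lemma card_cycleType_swap_mul {f : Perm α} {a b : α} (hfa : f a = a) (hab : a ≠ b) :
    Multiset.card (swap a b * f).cycleType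
      = Multiset.card f.cycleType + (if f b = b then 1 else 0) := by
  by_cases hfb : f b = b
  · -- disjoint case
    have hd : (swap a b).Disjoint f := by
      intro x
      by_cases hxa : x = a
      · right; rw [hxa, hfa]
      by_cases hxb : x = b
      · right; rw [hxb, hfb]
      · left; exact Equiv.swap_apply_of_ne_of_ne hxa hxb
    rw [hd.cycleType_mul, if_pos hfb]
    have : Multiset.card (swap a b).cycleType = 1 :=
      card_cycleType_eq_one.mpr (isCycle_swap hab)
    simp [this]; omega
  · -- merge case
    rw [if_neg hfb]
    set c := f.cycleOf b with hc_def
    have hbmem : b ∈ f.support := Equiv.Perm.mem_support.mpr hfb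
    have hc_cycle : IsCycle c := isCycle_cycleOf f hfb
    have hcb : c b = f b := cycleOf_apply_self f b
    have hcbne : c b ≠ b := by rw [hcb]; exact hfb
    have hca : c a = a := by
      by_contra hca
      have : a ∈ c.support := Equiv.Perm.mem_support.mpr hca
      have : a ∈ f.support := support_cycleOf_le f b this
      rw [Equiv.Perm.mem_support] at this; exact this hfa
    have hmem : c ∈ f.cycleFactorsFinset := cycleOf_mem_cycleFactorsFinset_iff.mpr hbmem
    have hdisj : (f * c⁻¹).Disjoint c := disjoint_mul_inv_of_mem_cycleFactorsFinset hmem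
    set g := f * c⁻¹ with hg_def
    have hfgc : f = g * c := by rw [hg_def, inv_mul_cancel_right]
    have hsuppc_le : c.support ≤ f.support := support_cycleOf_le f b
    have hsuppg_le : g.support ≤ f.support := by
      intro x hx
      rcases Finset.mem_union.mp (support_mul_le f c⁻¹ hx) with h | h
      · exact h
      · rw [Equiv.Perm.support_inv] at h; exact hsuppc_le h
    have hmerge : IsCycle (swap a b * c) := isCycle_swap_mul_of_fixed hc_cycle hca hcbne
    have hsupp_merge : (swap a b * c).support = insert a c.support := by
      rw [support_swap_mul_of_fixed hca hab]
      congr 1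
      exact Finset.insert_eq_self.mpr (Equiv.Perm.mem_support.mpr hcbne)
    have hanotf : a ∉ f.support := by rw [Equiv.Perm.mem_support]; exact fun h => h hfa
    have hdisj2 : (swap a b * c).Disjoint g := by
      rw [disjoint_iff_disjoint_support, hsupp_merge]
      rw [Finset.disjoint_insert_left]
      constructor
      · exact fun h => hanotf (hsuppg_le h)
      · exact (disjoint_iff_disjoint_support.mp hdisj.symm).symm.symm
    have heq : swap a b * f = (swap a b * c) * g := by
      conv_lhs => rw [hfgc, ← hdisj.symm.commute.eq]
      rw [mul_assoc]
    rw [heq, hdisj2.cycleType_mul]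
    conv_rhs => rw [hfgc, hdisj.cycleType_mul]
    have h1 : Multiset.card (swap a b * c).cycleType = 1 := card_cycleType_eq_one.mpr hmerge
    have h2 : Multiset.card c.cycleType = 1 := card_cycleType_eq_one.mpr hc_cycle
    simp [h1, h2]; omega


def finSuccNe (n : ℕ) : Fin n ≃ {x : Fin (n + 1) // x ≠ 0} where
  toFun i := ⟨i.succ, Fin.succ_ne_zero i⟩
  invFun x := (x.1).pred x.2
  left_inv i := by simp
  right_inv x := by simp

lemma ins_zero_eq_extend {n : ℕ} (e : Perm (Fin n)) :
    Equiv.Perm.decomposeFin.symm ((0 : Fin (n + 1)), e) = e.extendDomain (finSuccNe n) := by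
  ext x
  refine Fin.cases ?_ ?_ x
  · rw [Equiv.Perm.decomposeFin_symm_apply_zero]
    rw [Equiv.Perm.extendDomain_apply_not_subtype]
    simp
  · intro i
    rw [Equiv.Perm.decomposeFin_symm_apply_succ]
    have : (i.succ : Fin (n + 1)) = ((finSuccNe n) i : Fin (n + 1)) := rfl
    rw [this, Equiv.Perm.extendDomain_apply_image]
    simp [finSuccNe]

lemma cycleType_ins_zero {n : ℕ} (e : Perm (Fin n)) :
    (Equiv.Perm.decomposeFin.symm ((0 : Fin (n + 1)), e)).cycleType = e.cycleType := by
  rw [ins_zero_eq_extend, Equiv.Perm.cycleType_extendDomain]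

lemma ins_eq_swap_mul {n : ℕ} (p : Fin (n + 1)) (e : Perm (Fin n)) :
    Equiv.Perm.decomposeFin.symm (p, e)
      = swap 0 p * Equiv.Perm.decomposeFin.symm ((0 : Fin (n + 1)), e) := by
  ext x
  refine Fin.cases ?_ ?_ x
  · rw [Equiv.Perm.decomposeFin_symm_apply_zero, Equiv.Perm.mul_apply,
      Equiv.Perm.decomposeFin_symm_apply_zero, Equiv.swap_apply_left]
  · intro i
    rw [Equiv.Perm.decomposeFin_symm_apply_succ, Equiv.Perm.mul_apply,
      Equiv.Perm.decomposeFin_symm_apply_succ]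
    simp

lemma cycleCount_ins {n : ℕ} (p : Fin (n + 1)) (e : Perm (Fin n)) :
    cycleCount (Equiv.Perm.decomposeFin.symm (p, e))
      = cycleCount e + (if p = 0 then 1 else 0) := by
  have hsum_e : e.cycleType.sum = e.support.card := Equiv.Perm.sum_cycleType e
  have hs_le : e.support.card ≤ n := by
    simpa using Finset.card_le_univ e.support
  by_cases hp : p = 0
  · subst hp
    unfold cycleCount
    rw [cycleType_ins_zero]
    rw [if_pos rfl, hsum_e]
    omega
  · set σ0 := Equiv.Perm.decomposeFin.symm ((0 : Fin (n + 1)), e) with hσ0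
    have hfix : σ0 0 = 0 := Equiv.Perm.decomposeFin_symm_apply_zero 0 e
    have hct0 : σ0.cycleType = e.cycleType := cycleType_ins_zero e
    have hsupp0 : σ0.support.card = e.support.card := by
      have := Equiv.Perm.sum_cycleType σ0
      rw [hct0, hsum_e] at this; omega
    have h0notin : (0 : Fin (n + 1)) ∉ σ0.support := by
      rw [Equiv.Perm.mem_support]; exact fun h => h hfix
    obtain ⟨q, rfl⟩ : ∃ q : Fin n, p = q.succ :=
      ⟨p.pred hp, (Fin.succ_pred p hp).symm⟩
    have hp0 : (q.succ : Fin (n + 1)) ≠ 0 := Fin.succ_ne_zero q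
    have happ : σ0 q.succ = (e q).succ := by
      rw [hσ0, Equiv.Perm.decomposeFin_symm_apply_succ]
      simp
    have hEqiv : σ0 q.succ = q.succ ↔ e q = q := by
      rw [happ]
      exact ⟨fun h => Fin.succ_injective n h, fun h => by rw [h]⟩
    rw [ins_eq_swap_mul]
    unfold cycleCount
    rw [← hσ0]
    have hcard := card_cycleType_swap_mul hfix (Ne.symm hp0)
    have hsum : (swap 0 q.succ * σ0).cycleType.sum = (swap 0 q.succ * σ0).support.card :=
      Equiv.Perm.sum_cycleType _
    rw [hcard, hsum, support_swap_mul_of_fixed hfix (Ne.symm hp0), hct0]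
    rw [if_neg hp]
    by_cases hq : e q = q
    · have hqs : σ0 q.succ = q.succ := hEqiv.mpr hq
      have hpnot : q.succ ∉ σ0.support := by
        rw [Equiv.Perm.mem_support]; exact fun h => h hqs
      have h0not2 : (0 : Fin (n + 1)) ∉ insert q.succ σ0.support := by
        rw [Finset.mem_insert]
        rintro (h | h)
        · exact hp0 h.symm
        · exact h0notin h
      rw [Finset.card_insert_of_notMem h0not2, Finset.card_insert_of_notMem hpnot, hsupp0]
      rw [if_pos hqs]
      -- e.support.card ≤ n - 1 since q ∉ e.support
      have hqnot : q ∉ e.support := by rw [Equiv.Perm.mem_support]; exact fun h => h hq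
      have : e.support.card < n := by
        have h1 : e.support ⊆ Finset.univ.erase q := by
          intro y hy
          rw [Finset.mem_erase]
          exact ⟨fun hEq => hqnot (hEq ▸ hy), Finset.mem_univ y⟩
        calc e.support.card ≤ (Finset.univ.erase q).card := Finset.card_le_card h1
          _ = n - 1 := by rw [Finset.card_erase_of_mem (Finset.mem_univ q)]; simp
          _ < n := by
              have : 0 < n := Fin.pos q
              omega
      rw [hsum_e] at *
      omega
    · have hqs : σ0 q.succ ≠ q.succ := fun h => hq (hEqiv.mp h)
      have hpin : q.succ ∈ σ0.support := Equiv.Perm.mem_support.mpr hqs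
      have hins : insert q.succ σ0.support = σ0.support := Finset.insert_eq_self.mpr hpin
      rw [hins, Finset.card_insert_of_notMem h0notin, hsupp0]
      rw [if_neg hqs, hsum_e]
      omega


section Wavg

variable {ι : Type*} [Fintype ι]

/-- weighted average -/
def wavg (w g : ι → ℝ) : ℝ := (∑ i, w i * g i) / (∑ i, w i)

lemma wavg_const (w : ι → ℝ) (hpos : (∑ i, w i) ≠ 0) (c : ℝ) :
    wavg w (fun _ => c) = c := by
  unfold wavg
  rw [← Finset.sum_mul, mul_comm, mul_div_assoc, div_self hpos, mul_one]

lemma wavg_zero (w : ι → ℝ) : wavg w (fun _ => 0) = 0 := by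
  unfold wavg; simp

lemma wavg_add (w f g : ι → ℝ) :
    wavg w (fun i => f i + g i) = wavg w f + wavg w g := by
  unfold wavg
  rw [← add_div, ← Finset.sum_add_distrib]
  congr 1
  exact Finset.sum_congr rfl fun i _ => by ring

lemma wavg_mul_left (w f : ι → ℝ) (c : ℝ) :
    wavg w (fun i => c * f i) = c * wavg w f := by
  unfold wavg
  rw [show (∑ i, w i * (fun i => c * f i) i) = c * ∑ i, w i * f i from by
    rw [Finset.mul_sum]; exact Finset.sum_congr rfl fun i _ => by ring]
  rw [mul_div_assoc]

lemma wavg_sum (w : ι → ℝ) {κ : Type*} (s : Finset κ) (F : κ → ι → ℝ) :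
    wavg w (fun i => ∑ j ∈ s, F j i) = ∑ j ∈ s, wavg w (F j) := by
  induction s using Finset.induction_on with
  | empty => simpa using wavg_zero w
  | insert a s' hnot ih =>
      rw [Finset.sum_insert hnot]
      rw [← ih]
      rw [← wavg_add]
      congr 1
      ext i
      rw [Finset.sum_insert hnot]

lemma wavg_mono (w : ι → ℝ) (hw : ∀ i, 0 ≤ w i) {f g : ι → ℝ} (h : ∀ i, f i ≤ g i) :
    wavg w f ≤ wavg w g := by
  unfold wavg
  rcases eq_or_lt_of_le (Finset.sum_nonneg fun i _ => hw i) with hS | hS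
  · rw [← hS]; simp
  · exact (div_le_div_iff_of_pos_right hS).mpr
      (Finset.sum_le_sum fun i _ => mul_le_mul_of_nonneg_left (h i) (hw i))

lemma wavg_nonneg (w : ι → ℝ) (hw : ∀ i, 0 ≤ w i) {f : ι → ℝ} (hf : ∀ i, 0 ≤ f i) :
    0 ≤ wavg w f :=
  div_nonneg (Finset.sum_nonneg fun i _ => mul_nonneg (hw i) (hf i))
    (Finset.sum_nonneg fun i _ => hw i)

lemma wavg_abs_le (w : ι → ℝ) (hw : ∀ i, 0 ≤ w i) (hpos : (∑ i, w i) ≠ 0)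
    {f : ι → ℝ} {C : ℝ} (h : ∀ i, |f i| ≤ C) : |wavg w f| ≤ C := by
  rw [abs_le]
  constructor
  · have := wavg_mono w hw (f := fun _ => -C) (g := f) (fun i => (abs_le.mp (h i)).1)
    rwa [wavg_const w hpos] at this
  · have := wavg_mono w hw (f := f) (g := fun _ => C) (fun i => (abs_le.mp (h i)).2)
    rwa [wavg_const w hpos] at this

lemma wavg_comm {κ : Type*} [Fintype κ] (w : ι → ℝ) (v : κ → ℝ) (f : ι → κ → ℝ) :
    wavg w (fun i => wavg v (fun j => f i j)) = wavg v (fun j => wavg w (fun i => f i j)) := by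
  have L1 : (∑ i, w i * ((∑ j, v j * f i j) / (∑ j, v j)))
      = (∑ i, w i * (∑ j, v j * f i j)) / (∑ j, v j) := by
    rw [Finset.sum_div]
    exact Finset.sum_congr rfl fun i _ => by ring
  have L2 : (∑ j, v j * ((∑ i, w i * f i j) / (∑ i, w i)))
      = (∑ j, v j * (∑ i, w i * f i j)) / (∑ i, w i) := by
    rw [Finset.sum_div]
    exact Finset.sum_congr rfl fun i _ => by ring
  show (∑ i, w i * ((∑ j, v j * f i j) / (∑ j, v j))) / (∑ i, w i)
      = (∑ j, v j * ((∑ i, w i * f i j) / (∑ i, w i))) / (∑ j, v j)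
  rw [L1, L2, div_div, div_div, mul_comm (∑ j, v j)]
  congr 1
  calc ∑ i, w i * ∑ j, v j * f i j
      = ∑ i, ∑ j, w i * (v j * f i j) :=
        Finset.sum_congr rfl fun i _ => by rw [Finset.mul_sum]
    _ = ∑ j, ∑ i, w i * (v j * f i j) := Finset.sum_comm
    _ = ∑ j, v j * ∑ i, w i * f i j := Finset.sum_congr rfl fun j _ => by
        rw [Finset.mul_sum]; exact Finset.sum_congr rfl fun i _ => by ring

end Wavg

section Ewens

open Equiv Equiv.Perm

lemma sum_ins {n : ℕ} (F : Perm (Fin (n + 1)) → ℝ) :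
    ∑ σ : Perm (Fin (n + 1)), F σ
      = ∑ p : Fin (n + 1), ∑ e : Perm (Fin n), F (Equiv.Perm.decomposeFin.symm (p, e)) := by
  rw [← Equiv.sum_comp (Equiv.Perm.decomposeFin (n := n)).symm F]
  exact Fintype.sum_prod_type _

lemma weight_ins {n : ℕ} (θ : ℝ) (p : Fin (n + 1)) (e : Perm (Fin n)) :
    θ ^ cycleCount (Equiv.Perm.decomposeFin.symm (p, e))
      = (if p = 0 then θ else 1) * θ ^ cycleCount e := by
  rw [cycleCount_ins]
  by_cases hp : p = 0 <;> simp [hp, pow_succ] <;> ring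

lemma cycleCount_fin_zero (σ : Perm (Fin 0)) : cycleCount σ = 0 := by
  have : σ = 1 := Subsingleton.elim σ 1
  subst this
  simp [cycleCount, Equiv.Perm.cycleType_one]

lemma sum_perm_fin_zero (F : Perm (Fin 0) → ℝ) : ∑ σ : Perm (Fin 0), F σ = F 1 := by
  have h1 : ∀ σ : Perm (Fin 0), F σ = F 1 := fun σ => by rw [Subsingleton.elim σ 1]
  rw [Finset.sum_congr rfl fun σ _ => h1 σ, Finset.sum_const, Finset.card_univ]
  have : Fintype.card (Perm (Fin 0)) = 1 := by simp [Fintype.card_perm]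
  rw [this, one_smul]

lemma sum_wP {n : ℕ} (θ : ℝ) :
    ∑ p : Fin (n + 1), (if p = 0 then θ else 1) = θ + n := by
  rw [Fin.sum_univ_succ]
  simp [Fin.succ_ne_zero]

lemma sum_weight (θ : ℝ) : ∀ n : ℕ,
    ∑ σ : Perm (Fin n), θ ^ cycleCount σ = ∏ k ∈ Finset.range n, (θ + (k : ℝ))
  | 0 => by rw [sum_perm_fin_zero]; simp [cycleCount_fin_zero]
  | n + 1 => by
    rw [sum_ins]
    have hterm : ∀ p : Fin (n + 1),
        ∑ e : Perm (Fin n), θ ^ cycleCount (Equiv.Perm.decomposeFin.symm (p, e))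
          = (if p = 0 then θ else 1) * ∏ k ∈ Finset.range n, (θ + (k : ℝ)) := by
      intro p
      rw [← sum_weight θ n, Finset.mul_sum]
      exact Finset.sum_congr rfl fun e _ => weight_ins θ p e
    rw [Finset.sum_congr rfl fun p _ => hterm p, ← Finset.sum_mul, sum_wP,
      Finset.prod_range_succ]
    ring

variable {θ : ℝ}

lemma Zpos (hθ : 0 < θ) (n : ℕ) : 0 < ∏ k ∈ Finset.range n, (θ + (k : ℝ)) :=
  Finset.prod_pos fun k _ => by positivity

lemma ewensE_eq_wavg (θ : ℝ) {n : ℕ} (f : Perm (Fin n) → ℝ) :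
    ewensE θ n f = wavg (fun σ : Perm (Fin n) => θ ^ cycleCount σ) f := by
  unfold ewensE wavg
  rw [sum_weight]

lemma W_nonneg (hθ : 0 < θ) {n : ℕ} : ∀ σ : Perm (Fin n), 0 ≤ θ ^ cycleCount σ :=
  fun σ => pow_nonneg hθ.le _

lemma sumW_ne (hθ : 0 < θ) (n : ℕ) :
    (∑ σ : Perm (Fin n), θ ^ cycleCount σ) ≠ 0 := by
  rw [sum_weight]; exact (Zpos hθ n).ne'

lemma wP_nonneg (hθ : 0 < θ) {n : ℕ} : ∀ p : Fin (n + 1), 0 ≤ (if p = 0 then θ else 1 : ℝ) :=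
  fun p => by by_cases hp : p = 0 <;> simp [hp, hθ.le]

lemma sum_wP_ne (hθ : 0 < θ) (n : ℕ) :
    (∑ p : Fin (n + 1), (if p = 0 then θ else 1 : ℝ)) ≠ 0 := by
  rw [sum_wP]; positivity

lemma ewensE_const (hθ : 0 < θ) (n : ℕ) (c : ℝ) : ewensE θ n (fun _ => c) = c := by
  rw [ewensE_eq_wavg]; exact wavg_const _ (sumW_ne hθ n) c

lemma ewensE_add (θ : ℝ) {n : ℕ} (f g : Perm (Fin n) → ℝ) :
    ewensE θ n (fun σ => f σ + g σ) = ewensE θ n f + ewensE θ n g := by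
  rw [ewensE_eq_wavg, ewensE_eq_wavg, ewensE_eq_wavg]; exact wavg_add _ f g

lemma ewensE_mul_left (θ : ℝ) {n : ℕ} (c : ℝ) (f : Perm (Fin n) → ℝ) :
    ewensE θ n (fun σ => c * f σ) = c * ewensE θ n f := by
  rw [ewensE_eq_wavg, ewensE_eq_wavg]; exact wavg_mul_left _ f c

lemma ewensE_sum (θ : ℝ) {n : ℕ} {κ : Type*} (s : Finset κ) (F : κ → Perm (Fin n) → ℝ) :
    ewensE θ n (fun σ => ∑ j ∈ s, F j σ) = ∑ j ∈ s, ewensE θ n (F j) := by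
  rw [ewensE_eq_wavg]
  rw [wavg_sum]
  exact Finset.sum_congr rfl fun j _ => (ewensE_eq_wavg θ (F j)).symm

lemma ewensE_mono (hθ : 0 < θ) {n : ℕ} {f g : Perm (Fin n) → ℝ} (h : ∀ σ, f σ ≤ g σ) :
    ewensE θ n f ≤ ewensE θ n g := by
  rw [ewensE_eq_wavg, ewensE_eq_wavg]; exact wavg_mono _ (W_nonneg hθ) h

lemma ewensE_peel (hθ : 0 < θ) {n : ℕ} (f : Perm (Fin (n + 1)) → ℝ) :
    ewensE θ (n + 1) f
      = wavg (fun p : Fin (n + 1) => if p = 0 then θ else 1)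
          (fun p => ewensE θ n (fun e => f (Equiv.Perm.decomposeFin.symm (p, e)))) := by
  unfold ewensE wavg
  rw [sum_wP, sum_ins, Finset.prod_range_succ]
  have R : (∑ p : Fin (n + 1), (if p = 0 then θ else 1)
        * ((∑ e : Perm (Fin n), θ ^ cycleCount e * f (Equiv.Perm.decomposeFin.symm (p, e)))
            / ∏ k ∈ Finset.range n, (θ + (k : ℝ))))
      = (∑ p : Fin (n + 1), (if p = 0 then θ else 1)
        * (∑ e : Perm (Fin n), θ ^ cycleCount e * f (Equiv.Perm.decomposeFin.symm (p, e))))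
            / ∏ k ∈ Finset.range n, (θ + (k : ℝ)) := by
    rw [Finset.sum_div]
    exact Finset.sum_congr rfl fun p _ => by ring
  rw [R, div_div]
  congr 1
  apply Finset.sum_congr rfl
  intro p _
  rw [Finset.mul_sum]
  apply Finset.sum_congr rfl
  intro e _
  rw [weight_ins]
  ring

end Ewens

section Lip

open Equiv Equiv.Perm

/-- Hamming distance between permutations -/
def Hd {n : ℕ} (σ τ : Perm (Fin n)) : ℕ :=
  (Finset.univ.filter fun x => σ x ≠ τ x).card

lemma countExc_lip {n : ℕ} (σ τ : Perm (Fin n)) (K : ℕ) :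
    |(countExc σ K : ℝ) - (countExc τ K : ℝ)| ≤ (Hd σ τ : ℝ) := by
  have key : ∀ ρ ρ' : Perm (Fin n), countExc ρ K ≤ countExc ρ' K + Hd ρ ρ' := by
    intro ρ ρ'
    unfold countExc Hd
    have hsub : (Finset.univ.filter fun i : Fin n => (i : ℕ) < K ∧ (i : ℕ) ≤ (ρ i : ℕ))
        ⊆ (Finset.univ.filter fun i : Fin n => (i : ℕ) < K ∧ (i : ℕ) ≤ (ρ' i : ℕ))
          ∪ (Finset.univ.filter fun x => ρ x ≠ ρ' x) := by
      intro i hi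
      rw [Finset.mem_filter] at hi
      by_cases hd : ρ i = ρ' i
      · rw [Finset.mem_union, Finset.mem_filter]
        left
        exact ⟨Finset.mem_univ i, hi.2.1, hd ▸ hi.2.2⟩
      · rw [Finset.mem_union, Finset.mem_filter, Finset.mem_filter]
        right
        exact ⟨Finset.mem_univ i, hd⟩
    calc _ ≤ _ := Finset.card_le_card hsub
      _ ≤ _ := Finset.card_union_le _ _
  have h1 := key σ τ
  have h2 := key τ σ
  have hsymm : Hd τ σ = Hd σ τ := by
    unfold Hd
    congr 1
    ext x
    simp [ne_comm]
  rw [hsymm] at h2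
  rw [abs_le]
  constructor
  · have := (Nat.cast_le (α := ℝ)).mpr h2
    push_cast at this ⊢
    linarith
  · have := (Nat.cast_le (α := ℝ)).mpr h1
    push_cast at this ⊢
    linarith

lemma Hd_ins_same {n : ℕ} (p : Fin (n + 1)) (e e' : Perm (Fin n)) :
    Hd (Equiv.Perm.decomposeFin.symm (p, e)) (Equiv.Perm.decomposeFin.symm (p, e')) ≤ Hd e e' := by
  unfold Hd
  have hsub : (Finset.univ.filter fun x : Fin (n + 1) =>
        Equiv.Perm.decomposeFin.symm (p, e) x ≠ Equiv.Perm.decomposeFin.symm (p, e') x)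
      ⊆ (Finset.univ.filter fun i : Fin n => e i ≠ e' i).map
          ⟨Fin.succ, Fin.succ_injective n⟩ := by
    intro x hx
    rw [Finset.mem_filter] at hx
    have hx0 : x ≠ 0 := by
      intro h
      apply hx.2
      rw [h, Equiv.Perm.decomposeFin_symm_apply_zero, Equiv.Perm.decomposeFin_symm_apply_zero]
    obtain ⟨i, rfl⟩ := Fin.exists_succ_eq.mpr hx0
    rw [Finset.mem_map]
    refine ⟨i, ?_, rfl⟩
    rw [Finset.mem_filter]
    refine ⟨Finset.mem_univ i, ?_⟩
    intro hEq
    apply hx.2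
    rw [Equiv.Perm.decomposeFin_symm_apply_succ, Equiv.Perm.decomposeFin_symm_apply_succ, hEq]
  calc _ ≤ _ := Finset.card_le_card hsub
    _ = _ := Finset.card_map _

lemma Hd_ins_p {n : ℕ} (p p' : Fin (n + 1)) (e : Perm (Fin n)) :
    Hd (Equiv.Perm.decomposeFin.symm (p, e)) (Equiv.Perm.decomposeFin.symm (p', e)) ≤ 3 := by
  unfold Hd
  set t := Equiv.Perm.decomposeFin.symm ((0 : Fin (n + 1)), e) with ht
  have h1 : Equiv.Perm.decomposeFin.symm (p, e) = swap 0 p * t := ins_eq_swap_mul p e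
  have h2 : Equiv.Perm.decomposeFin.symm (p', e) = swap 0 p' * t := ins_eq_swap_mul p' e
  have hsub : (Finset.univ.filter fun x : Fin (n + 1) =>
        Equiv.Perm.decomposeFin.symm (p, e) x ≠ Equiv.Perm.decomposeFin.symm (p', e) x)
      ⊆ Finset.univ.filter fun x => t x ∈ ({0, p, p'} : Finset (Fin (n + 1))) := by
    intro x hx
    rw [Finset.mem_filter] at hx ⊢
    refine ⟨Finset.mem_univ x, ?_⟩
    by_contra hmem
    simp only [Finset.mem_insert, Finset.mem_singleton] at hmem
    push_neg at hmem
    apply hx.2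
    rw [h1, h2, Equiv.Perm.mul_apply, Equiv.Perm.mul_apply,
      Equiv.swap_apply_of_ne_of_ne hmem.1 hmem.2.1,
      Equiv.swap_apply_of_ne_of_ne hmem.1 hmem.2.2]
  calc _ ≤ _ := Finset.card_le_card hsub
    _ ≤ ({0, p, p'} : Finset (Fin (n + 1))).card := by
        apply Finset.card_le_card_of_injOn (fun x => t x)
        · intro x hx
          rw [Finset.mem_coe, Finset.mem_filter] at hx
          exact hx.2
        · intro a _ b _ hab
          exact t.injective hab
    _ ≤ 3 := by
        apply (Finset.card_insert_le _ _).trans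
        have := Finset.card_insert_le p ({p'} : Finset (Fin (n + 1)))
        simp at this ⊢
        omega

end Lip

section Conc

open Equiv Equiv.Perm

variable {θ : ℝ}

lemma ewensE_fin_zero (θ : ℝ) (g : Perm (Fin 0) → ℝ) : ewensE θ 0 g = g 1 := by
  unfold ewensE
  rw [sum_perm_fin_zero]
  simp [cycleCount_fin_zero]

/-- weights for the first coordinate of the decomposition -/
def wp (θ : ℝ) (n : ℕ) : Fin (n + 1) → ℝ := fun p => if p = 0 then θ else 1

/-- conditional mean given the remaining permutation -/
def peelAvg (θ : ℝ) {n : ℕ} (f : Perm (Fin (n + 1)) → ℝ) (e : Perm (Fin n)) : ℝ :=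
  wavg (wp θ n) (fun p => f (Equiv.Perm.decomposeFin.symm (p, e)))

lemma wp_nonneg (hθ : 0 < θ) {n : ℕ} : ∀ p : Fin (n + 1), 0 ≤ wp θ n p := by
  intro p; unfold wp; by_cases hp : p = 0 <;> simp [hp, hθ.le]

lemma sum_wp_ne (hθ : 0 < θ) (n : ℕ) : (∑ p : Fin (n + 1), wp θ n p) ≠ 0 := by
  unfold wp; rw [sum_wP]; positivity

lemma ewensE_peel' (hθ : 0 < θ) {n : ℕ} (f : Perm (Fin (n + 1)) → ℝ) :
    ewensE θ (n + 1) f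
      = wavg (wp θ n) (fun p => ewensE θ n (fun e => f (Equiv.Perm.decomposeFin.symm (p, e)))) :=
  ewensE_peel hθ f

lemma peelAvg_lip (hθ : 0 < θ) {n : ℕ} (f : Perm (Fin (n + 1)) → ℝ)
    (hf : ∀ σ τ, |f σ - f τ| ≤ (Hd σ τ : ℝ)) :
    ∀ e e' : Perm (Fin n), |peelAvg θ f e - peelAvg θ f e'| ≤ (Hd e e' : ℝ) := by
  intro e e'
  unfold peelAvg
  have heq : wavg (wp θ n) (fun p => f (Equiv.Perm.decomposeFin.symm (p, e)))
        - wavg (wp θ n) (fun p => f (Equiv.Perm.decomposeFin.symm (p, e')))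
      = wavg (wp θ n) (fun p => f (Equiv.Perm.decomposeFin.symm (p, e))
          + (-1) * f (Equiv.Perm.decomposeFin.symm (p, e'))) := by
    rw [wavg_add, wavg_mul_left]; ring
  rw [heq]
  apply wavg_abs_le _ (wp_nonneg hθ) (sum_wp_ne hθ n)
  intro p
  calc |f (Equiv.Perm.decomposeFin.symm (p, e)) + (-1) * f (Equiv.Perm.decomposeFin.symm (p, e'))|
      = |f (Equiv.Perm.decomposeFin.symm (p, e)) - f (Equiv.Perm.decomposeFin.symm (p, e'))| := by
        ring_nf
    _ ≤ (Hd (Equiv.Perm.decomposeFin.symm (p, e)) (Equiv.Perm.decomposeFin.symm (p, e')) : ℝ) :=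
        hf _ _
    _ ≤ (Hd e e' : ℝ) := Nat.cast_le.mpr (Hd_ins_same p e e')

lemma peel_incr_bdd (hθ : 0 < θ) {n : ℕ} (f : Perm (Fin (n + 1)) → ℝ)
    (hf : ∀ σ τ, |f σ - f τ| ≤ (Hd σ τ : ℝ)) :
    ∀ (p : Fin (n + 1)) (e : Perm (Fin n)),
      |f (Equiv.Perm.decomposeFin.symm (p, e)) - peelAvg θ f e| ≤ 3 := by
  intro p e
  unfold peelAvg
  have heq : f (Equiv.Perm.decomposeFin.symm (p, e))
        - wavg (wp θ n) (fun p => f (Equiv.Perm.decomposeFin.symm (p, e)))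
      = wavg (wp θ n) (fun p' => f (Equiv.Perm.decomposeFin.symm (p, e))
          + (-1) * f (Equiv.Perm.decomposeFin.symm (p', e))) := by
    rw [wavg_add, wavg_mul_left, wavg_const _ (sum_wp_ne hθ n)]; ring
  rw [heq]
  apply wavg_abs_le _ (wp_nonneg hθ) (sum_wp_ne hθ n)
  intro p'
  calc |f (Equiv.Perm.decomposeFin.symm (p, e)) + (-1) * f (Equiv.Perm.decomposeFin.symm (p', e))|
      = |f (Equiv.Perm.decomposeFin.symm (p, e)) - f (Equiv.Perm.decomposeFin.symm (p', e))| := by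
        ring_nf
    _ ≤ (Hd (Equiv.Perm.decomposeFin.symm (p, e)) (Equiv.Perm.decomposeFin.symm (p', e)) : ℝ) :=
        hf _ _
    _ ≤ 3 := by
        have h3 := Hd_ins_p p p' e
        calc (Hd (Equiv.Perm.decomposeFin.symm (p, e)) (Equiv.Perm.decomposeFin.symm (p', e)) : ℝ)
            ≤ ((3 : ℕ) : ℝ) := Nat.cast_le.mpr h3
          _ = 3 := by norm_num

lemma peel_mean_zero (hθ : 0 < θ) {n : ℕ} (f : Perm (Fin (n + 1)) → ℝ) (e : Perm (Fin n)) :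
    wavg (wp θ n)
      (fun p => f (Equiv.Perm.decomposeFin.symm (p, e)) - peelAvg θ f e) = 0 := by
  rw [show (fun p : Fin (n+1) => f (Equiv.Perm.decomposeFin.symm (p, e)) - peelAvg θ f e)
      = (fun p : Fin (n+1) => f (Equiv.Perm.decomposeFin.symm (p, e))
          + (-1) * peelAvg θ f e) from funext fun p => by ring]
  rw [wavg_add, wavg_mul_left, wavg_const _ (sum_wp_ne hθ n)]
  unfold peelAvg
  ring

lemma peel_mean (hθ : 0 < θ) {n : ℕ} (f : Perm (Fin (n + 1)) → ℝ) :
    ewensE θ (n + 1) f = ewensE θ n (peelAvg θ f) := by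
  rw [ewensE_peel' hθ f]
  rw [show (fun p : Fin (n+1) => ewensE θ n fun e => f (Equiv.Perm.decomposeFin.symm (p, e)))
      = (fun p : Fin (n+1) => wavg (fun σ : Perm (Fin n) => θ ^ cycleCount σ)
          (fun e => f (Equiv.Perm.decomposeFin.symm (p, e))))
    from funext fun p => ewensE_eq_wavg θ _]
  rw [wavg_comm, ewensE_eq_wavg]
  rfl

lemma conc2 (hθ : 0 < θ) : ∀ (n : ℕ) (f : Equiv.Perm (Fin n) → ℝ),
    (∀ σ τ, |f σ - f τ| ≤ (Hd σ τ : ℝ)) →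
    ewensE θ n (fun σ => (f σ - ewensE θ n f) ^ 2) ≤ 9 * n
  | 0 => by
    intro f _
    rw [ewensE_fin_zero, ewensE_fin_zero]
    simp
  | n + 1 => by
    intro f hf
    have hLipg := peelAvg_lip hθ f hf
    have hdb := peel_incr_bdd hθ f hf
    have IH := conc2 hθ n (peelAvg θ f) hLipg
    have hm : ewensE θ (n + 1) f = ewensE θ n (peelAvg θ f) := peel_mean hθ f
    rw [ewensE_peel' hθ (fun σ => (f σ - ewensE θ (n+1) f) ^ 2)]
    have split : (fun p : Fin (n+1) => ewensE θ n
          (fun e => ((fun σ => (f σ - ewensE θ (n+1) f) ^ 2)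
            (Equiv.Perm.decomposeFin.symm (p, e)))))
        = (fun p : Fin (n+1) =>
            ewensE θ n (fun e => (peelAvg θ f e - ewensE θ (n+1) f) ^ 2)
            + (2 * ewensE θ n (fun e => (peelAvg θ f e - ewensE θ (n+1) f)
                * (f (Equiv.Perm.decomposeFin.symm (p, e)) - peelAvg θ f e))
              + ewensE θ n (fun e =>
                  (f (Equiv.Perm.decomposeFin.symm (p, e)) - peelAvg θ f e) ^ 2))) := by
      funext p
      rw [← ewensE_mul_left, ← ewensE_add, ← ewensE_add]
      congr 1
      funext e
      ring
    rw [split, wavg_add, wavg_const _ (sum_wp_ne hθ n), wavg_add]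
    have hcross : wavg (wp θ n) (fun p => 2 * ewensE θ n
        (fun e => (peelAvg θ f e - ewensE θ (n+1) f)
          * (f (Equiv.Perm.decomposeFin.symm (p, e)) - peelAvg θ f e))) = 0 := by
      rw [wavg_mul_left]
      rw [show (fun p : Fin (n+1) => ewensE θ n
            (fun e => (peelAvg θ f e - ewensE θ (n+1) f)
              * (f (Equiv.Perm.decomposeFin.symm (p, e)) - peelAvg θ f e)))
          = (fun p : Fin (n+1) => wavg (fun σ : Perm (Fin n) => θ ^ cycleCount σ)
            (fun e => (peelAvg θ f e - ewensE θ (n+1) f)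
              * (f (Equiv.Perm.decomposeFin.symm (p, e)) - peelAvg θ f e)))
        from funext fun p => ewensE_eq_wavg θ _]
      rw [wavg_comm]
      rw [show (fun e : Perm (Fin n) => wavg (wp θ n)
            (fun p => (peelAvg θ f e - ewensE θ (n+1) f)
              * (f (Equiv.Perm.decomposeFin.symm (p, e)) - peelAvg θ f e)))
          = (fun _ : Perm (Fin n) => (0 : ℝ)) from funext fun e => by
            rw [wavg_mul_left, peel_mean_zero hθ f e, mul_zero]]
      rw [wavg_zero, mul_zero]
    rw [hcross]
    have h3 : wavg (wp θ n) (fun p => ewensE θ n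
        (fun e => (f (Equiv.Perm.decomposeFin.symm (p, e)) - peelAvg θ f e) ^ 2)) ≤ 9 := by
      have hb : ∀ p : Fin (n+1), ewensE θ n
          (fun e => (f (Equiv.Perm.decomposeFin.symm (p, e)) - peelAvg θ f e) ^ 2) ≤ 9 := by
        intro p
        have hmono := ewensE_mono hθ
          (f := fun e => (f (Equiv.Perm.decomposeFin.symm (p, e)) - peelAvg θ f e) ^ 2)
          (g := fun _ => (9 : ℝ)) (fun e => by
            show (f (Equiv.Perm.decomposeFin.symm (p, e)) - peelAvg θ f e) ^ 2 ≤ 9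
            have h := abs_le.mp (hdb p e)
            nlinarith [h.1, h.2])
        rwa [ewensE_const hθ] at hmono
      have := wavg_mono (wp θ n) (wp_nonneg hθ) hb
      rwa [wavg_const _ (sum_wp_ne hθ n)] at this
    have h1 : ewensE θ n (fun e => (peelAvg θ f e - ewensE θ (n+1) f) ^ 2) ≤ 9 * n := by
      rw [hm]; exact IH
    push_cast
    linarith

lemma conc4 (hθ : 0 < θ) : ∀ (n : ℕ) (f : Equiv.Perm (Fin n) → ℝ),
    (∀ σ τ, |f σ - f τ| ≤ (Hd σ τ : ℝ)) →
    ewensE θ n (fun σ => (f σ - ewensE θ n f) ^ 4) ≤ 500 * (n : ℝ) ^ 2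
  | 0 => by
    intro f _
    rw [ewensE_fin_zero, ewensE_fin_zero]
    simp
  | n + 1 => by
    intro f hf
    have hLipg := peelAvg_lip hθ f hf
    have hdb := peel_incr_bdd hθ f hf
    have IH := conc4 hθ n (peelAvg θ f) hLipg
    have IH2 := conc2 hθ n (peelAvg θ f) hLipg
    have hm : ewensE θ (n + 1) f = ewensE θ n (peelAvg θ f) := peel_mean hθ f
    rw [ewensE_peel' hθ (fun σ => (f σ - ewensE θ (n+1) f) ^ 4)]
    have split : (fun p : Fin (n+1) => ewensE θ n
          (fun e => ((fun σ => (f σ - ewensE θ (n+1) f) ^ 4)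
            (Equiv.Perm.decomposeFin.symm (p, e)))))
        = (fun p : Fin (n+1) =>
            ewensE θ n (fun e => (peelAvg θ f e - ewensE θ (n+1) f) ^ 4)
            + (4 * ewensE θ n (fun e => (peelAvg θ f e - ewensE θ (n+1) f) ^ 3
                * (f (Equiv.Perm.decomposeFin.symm (p, e)) - peelAvg θ f e))
              + ewensE θ n (fun e =>
                  6 * (peelAvg θ f e - ewensE θ (n+1) f) ^ 2
                      * (f (Equiv.Perm.decomposeFin.symm (p, e)) - peelAvg θ f e) ^ 2
                    + 4 * (peelAvg θ f e - ewensE θ (n+1) f)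
                      * (f (Equiv.Perm.decomposeFin.symm (p, e)) - peelAvg θ f e) ^ 3
                    + (f (Equiv.Perm.decomposeFin.symm (p, e)) - peelAvg θ f e) ^ 4))) := by
      funext p
      rw [← ewensE_mul_left, ← ewensE_add, ← ewensE_add]
      congr 1
      funext e
      ring
    rw [split, wavg_add, wavg_const _ (sum_wp_ne hθ n), wavg_add]
    have hcross : wavg (wp θ n) (fun p => 4 * ewensE θ n
        (fun e => (peelAvg θ f e - ewensE θ (n+1) f) ^ 3
          * (f (Equiv.Perm.decomposeFin.symm (p, e)) - peelAvg θ f e))) = 0 := by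
      rw [wavg_mul_left]
      rw [show (fun p : Fin (n+1) => ewensE θ n
            (fun e => (peelAvg θ f e - ewensE θ (n+1) f) ^ 3
              * (f (Equiv.Perm.decomposeFin.symm (p, e)) - peelAvg θ f e)))
          = (fun p : Fin (n+1) => wavg (fun σ : Perm (Fin n) => θ ^ cycleCount σ)
            (fun e => (peelAvg θ f e - ewensE θ (n+1) f) ^ 3
              * (f (Equiv.Perm.decomposeFin.symm (p, e)) - peelAvg θ f e)))
        from funext fun p => ewensE_eq_wavg θ _]
      rw [wavg_comm]
      rw [show (fun e : Perm (Fin n) => wavg (wp θ n)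
            (fun p => (peelAvg θ f e - ewensE θ (n+1) f) ^ 3
              * (f (Equiv.Perm.decomposeFin.symm (p, e)) - peelAvg θ f e)))
          = (fun _ : Perm (Fin n) => (0 : ℝ)) from funext fun e => by
            rw [wavg_mul_left, peel_mean_zero hθ f e, mul_zero]]
      rw [wavg_zero, mul_zero]
    rw [hcross]
    have h3 : wavg (wp θ n) (fun p => ewensE θ n (fun e =>
          6 * (peelAvg θ f e - ewensE θ (n+1) f) ^ 2
              * (f (Equiv.Perm.decomposeFin.symm (p, e)) - peelAvg θ f e) ^ 2
            + 4 * (peelAvg θ f e - ewensE θ (n+1) f)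
              * (f (Equiv.Perm.decomposeFin.symm (p, e)) - peelAvg θ f e) ^ 3
            + (f (Equiv.Perm.decomposeFin.symm (p, e)) - peelAvg θ f e) ^ 4))
        ≤ 72 * (9 * n) + 243 := by
      have hb : ∀ p : Fin (n+1), ewensE θ n (fun e =>
          6 * (peelAvg θ f e - ewensE θ (n+1) f) ^ 2
              * (f (Equiv.Perm.decomposeFin.symm (p, e)) - peelAvg θ f e) ^ 2
            + 4 * (peelAvg θ f e - ewensE θ (n+1) f)
              * (f (Equiv.Perm.decomposeFin.symm (p, e)) - peelAvg θ f e) ^ 3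
            + (f (Equiv.Perm.decomposeFin.symm (p, e)) - peelAvg θ f e) ^ 4)
          ≤ 72 * (9 * n) + 243 := by
        intro p
        have hmono := ewensE_mono hθ
          (f := fun e => 6 * (peelAvg θ f e - ewensE θ (n+1) f) ^ 2
              * (f (Equiv.Perm.decomposeFin.symm (p, e)) - peelAvg θ f e) ^ 2
            + 4 * (peelAvg θ f e - ewensE θ (n+1) f)
              * (f (Equiv.Perm.decomposeFin.symm (p, e)) - peelAvg θ f e) ^ 3
            + (f (Equiv.Perm.decomposeFin.symm (p, e)) - peelAvg θ f e) ^ 4)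
          (g := fun e => 72 * (peelAvg θ f e - ewensE θ (n+1) f) ^ 2 + 243) (fun e => by
            show 6 * (peelAvg θ f e - ewensE θ (n+1) f) ^ 2
                  * (f (Equiv.Perm.decomposeFin.symm (p, e)) - peelAvg θ f e) ^ 2
                + 4 * (peelAvg θ f e - ewensE θ (n+1) f)
                  * (f (Equiv.Perm.decomposeFin.symm (p, e)) - peelAvg θ f e) ^ 3
                + (f (Equiv.Perm.decomposeFin.symm (p, e)) - peelAvg θ f e) ^ 4
              ≤ 72 * (peelAvg θ f e - ewensE θ (n+1) f) ^ 2 + 243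
            set M := peelAvg θ f e - ewensE θ (n+1) f with hM
            set d := f (Equiv.Perm.decomposeFin.symm (p, e)) - peelAvg θ f e with hD
            have h := abs_le.mp (hdb p e)
            rw [← hD] at h
            have hd9 : d ^ 2 ≤ 9 := by nlinarith [h.1, h.2]
            have hd4 : d ^ 4 ≤ 81 := by nlinarith [hd9, sq_nonneg d]
            have hx1 : 4 * M * d ^ 3 ≤ 2 * M ^ 2 * d ^ 2 + 2 * d ^ 4 := by
              nlinarith [sq_nonneg (M * d - d ^ 2)]
            have hx2 : M ^ 2 * d ^ 2 ≤ 9 * M ^ 2 := by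
              nlinarith [hd9, sq_nonneg M]
            nlinarith [hx1, hx2, hd4])
        have hrhs : ewensE θ n (fun e =>
            72 * (peelAvg θ f e - ewensE θ (n+1) f) ^ 2 + 243)
            = 72 * ewensE θ n (fun e => (peelAvg θ f e - ewensE θ (n+1) f) ^ 2) + 243 := by
          rw [ewensE_add, ewensE_mul_left, ewensE_const hθ]
        have h2' : ewensE θ n (fun e => (peelAvg θ f e - ewensE θ (n+1) f) ^ 2) ≤ 9 * n := by
          rw [hm]; exact IH2
        calc _ ≤ _ := hmono
          _ = _ := hrhs
          _ ≤ 72 * (9 * n) + 243 := by linarith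
      have := wavg_mono (wp θ n) (wp_nonneg hθ) hb
      rwa [wavg_const _ (sum_wp_ne hθ n)] at this
    have h1 : ewensE θ n (fun e => (peelAvg θ f e - ewensE θ (n+1) f) ^ 4)
        ≤ 500 * (n : ℝ) ^ 2 := by
      rw [hm]; exact IH
    push_cast
    nlinarith [Nat.cast_nonneg (α := ℝ) n]

end Conc

section Mean

open Equiv Equiv.Perm

variable {θ : ℝ}

/-- weak exceedance indicator -/
def Bex {n : ℕ} (j : Fin n) (σ : Perm (Fin n)) : ℝ :=
  if (j : ℕ) ≤ (σ j : ℕ) then 1 else 0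

lemma Bex_ins {n : ℕ} (j : Fin n) (p : Fin (n + 1)) (e : Perm (Fin n)) :
    Bex j.succ (Equiv.Perm.decomposeFin.symm (p, e))
      = if p = (e j).succ then 0 else Bex j e := by
  unfold Bex
  rw [Equiv.Perm.decomposeFin_symm_apply_succ]
  by_cases hp : p = (e j).succ
  · subst hp
    rw [if_pos rfl, Equiv.swap_apply_right]
    have : ¬ ((j.succ : ℕ) ≤ ((0 : Fin (n+1)) : ℕ)) := by
      simp [Fin.val_succ]
    rw [if_neg this]
  · rw [if_neg hp]
    have hne0 : ((e j).succ : Fin (n + 1)) ≠ 0 := Fin.succ_ne_zero _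
    rw [Equiv.swap_apply_of_ne_of_ne hne0 (fun h => hp h.symm)]
    have : ((j.succ : Fin (n+1)) : ℕ) ≤ (((e j).succ : Fin (n+1)) : ℕ) ↔ (j : ℕ) ≤ ((e j) : ℕ) := by
      simp [Fin.val_succ]
    by_cases hle : (j : ℕ) ≤ ((e j) : ℕ)
    · rw [if_pos (this.mpr hle), if_pos hle]
    · rw [if_neg (fun hc => hle (this.mp hc)), if_neg hle]

lemma peelAvg_Bex (hθ : 0 < θ) {n : ℕ} (j : Fin n) (e : Perm (Fin n)) :
    peelAvg θ (Bex j.succ) e = ((θ + n - 1) / (θ + n)) * Bex j e := by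
  unfold peelAvg wavg
  have hnum : (∑ p : Fin (n + 1), wp θ n p * Bex j.succ (Equiv.Perm.decomposeFin.symm (p, e)))
      = (θ + n - 1) * Bex j e := by
    set t := ((e j).succ : Fin (n + 1)) with ht
    have htne : t ≠ 0 := Fin.succ_ne_zero _
    have hterm : ∀ p : Fin (n + 1), wp θ n p * Bex j.succ (Equiv.Perm.decomposeFin.symm (p, e))
        = (if p = t then 0 else wp θ n p * Bex j e) := by
      intro p
      rw [Bex_ins]
      by_cases hp : p = t
      · rw [if_pos hp, if_pos hp, mul_zero]
      · rw [if_neg hp, if_neg hp]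
    rw [Finset.sum_congr rfl fun p _ => hterm p]
    rw [← Finset.add_sum_erase _ _ (Finset.mem_univ t), if_pos rfl, zero_add]
    have h1 : ∑ p ∈ Finset.univ.erase t, (if p = t then (0:ℝ) else wp θ n p * Bex j e)
        = ∑ p ∈ Finset.univ.erase t, wp θ n p * Bex j e := by
      apply Finset.sum_congr rfl
      intro p hp
      rw [if_neg (Finset.mem_erase.mp hp).1]
    rw [h1]
    have h2 : ∑ p ∈ Finset.univ.erase t, wp θ n p * Bex j e
        = (∑ p : Fin (n + 1), wp θ n p * Bex j e) - wp θ n t * Bex j e := by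
      rw [← Finset.add_sum_erase _ (fun p => wp θ n p * Bex j e) (Finset.mem_univ t)]
      ring
    rw [h2, ← Finset.sum_mul]
    have h3 : (∑ p : Fin (n + 1), wp θ n p) = θ + n := by unfold wp; exact sum_wP θ
    have h4 : wp θ n t = 1 := by unfold wp; rw [if_neg htne]
    rw [h3, h4]
    ring
  have hden : (∑ p : Fin (n + 1), wp θ n p) = θ + n := by unfold wp; exact sum_wP θ
  rw [hnum, hden]
  ring

lemma marg (hθ : 0 < θ) : ∀ (n : ℕ) (j : Fin n),
    ewensE θ n (Bex j) = (θ + n - 1 - (j : ℕ)) / (θ + n - 1)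
  | 0 => fun j => j.elim0
  | n + 1 => by
    intro j
    refine Fin.cases ?_ ?_ j
    · have h1 : (Bex (0 : Fin (n + 1))) = fun _ => (1 : ℝ) := by
        funext σ
        unfold Bex
        rw [if_pos]
        simp
      rw [h1, ewensE_const hθ]
      have hpos : (0:ℝ) < θ + (n + 1 : ℕ) - 1 := by push_cast; linarith
      rw [eq_div_iff hpos.ne']
      have : (((0 : Fin (n+1)) : ℕ) : ℝ) = 0 := by norm_num
      rw [this]
      push_cast
      ring
    · intro j'
      have hn1 : 1 ≤ n := Nat.one_le_iff_ne_zero.mpr (by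
        intro h; subst h; exact j'.elim0)
      rw [peel_mean hθ (Bex j'.succ)]
      rw [show peelAvg θ (Bex j'.succ)
          = fun e => ((θ + n - 1) / (θ + n)) * Bex j' e from funext fun e => peelAvg_Bex hθ j' e]
      rw [ewensE_mul_left, marg hθ n j']
      have hp1 : (0:ℝ) < θ + n - 1 := by
        have : (1:ℝ) ≤ (n:ℝ) := by exact_mod_cast hn1
        linarith
      have hp2 : (0:ℝ) < θ + n := by positivity
      have hval : ((j'.succ : Fin (n+1)) : ℕ) = (j' : ℕ) + 1 := Fin.val_succ j'
      rw [hval]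
      have hQ : (0:ℝ) < θ + ((n + 1 : ℕ) : ℝ) - 1 := by push_cast; linarith
      rw [div_mul_div_comm, div_eq_div_iff (by positivity) hQ.ne']
      push_cast
      ring

lemma countExc_repr {n : ℕ} (σ : Perm (Fin n)) (K : ℕ) :
    (countExc σ K : ℝ) = ∑ j : Fin n, (if (j : ℕ) < K then Bex j σ else 0) := by
  unfold countExc
  rw [Finset.card_filter]
  push_cast
  apply Finset.sum_congr rfl
  intro j _
  unfold Bex
  by_cases h1 : (j : ℕ) < K
  · by_cases h2 : (j : ℕ) ≤ (σ j : ℕ)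
    · simp [h1, h2]
    · simp [h1, h2]
  · simp [h1]

lemma mean_countExc (hθ : 0 < θ) (n K : ℕ) (hK : K ≤ n) :
    ewensE θ n (fun σ => (countExc σ K : ℝ))
      = ∑ j ∈ Finset.range K, (θ + n - 1 - (j : ℕ)) / (θ + n - 1) := by
  rw [show (fun σ : Perm (Fin n) => (countExc σ K : ℝ))
      = fun σ => ∑ j : Fin n, (if (j : ℕ) < K then Bex j σ else 0)
    from funext fun σ => countExc_repr σ K]
  rw [ewensE_sum]
  have hterm : ∀ j : Fin n, ewensE θ n (fun σ => if (j : ℕ) < K then Bex j σ else 0)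
      = (if (j : ℕ) < K then (θ + n - 1 - (j : ℕ)) / (θ + n - 1) else 0) := by
    intro j
    by_cases hj : (j : ℕ) < K
    · simp only [hj, if_true]
      exact marg hθ n j
    · simp only [hj, if_false]
      exact ewensE_const hθ n 0
  rw [Finset.sum_congr rfl fun j _ => hterm j]
  have hfin : ∑ j : Fin n, (if (j : ℕ) < K then (θ + n - 1 - ((j : ℕ) : ℝ)) / (θ + n - 1) else 0)
      = ∑ j ∈ Finset.range n, (if j < K then (θ + n - 1 - (j : ℝ)) / (θ + n - 1) else 0) :=
    Fin.sum_univ_eq_sum_range (fun j => if j < K then (θ + n - 1 - (j : ℝ)) / (θ + n - 1) else 0) n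
  rw [hfin, ← Finset.sum_filter]
  congr 1
  ext j
  simp only [Finset.mem_filter, Finset.mem_range]
  omega

end Mean

section Tail

open Equiv Equiv.Perm Filter

variable {θ : ℝ}

lemma countExc_mono {n : ℕ} (σ : Perm (Fin n)) {k l : ℕ} (h : k ≤ l) :
    countExc σ k ≤ countExc σ l := by
  unfold countExc
  apply Finset.card_le_card
  intro i hi
  rw [Finset.mem_filter] at hi ⊢
  exact ⟨hi.1, lt_of_lt_of_le hi.2.1 h, hi.2.2⟩

lemma countExc_succ_le {n : ℕ} (σ : Perm (Fin n)) (k : ℕ) :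
    countExc σ (k + 1) ≤ countExc σ k + 1 := by
  unfold countExc
  have hsub : (Finset.univ.filter fun i : Fin n => (i : ℕ) < k + 1 ∧ (i : ℕ) ≤ (σ i : ℕ))
      ⊆ (Finset.univ.filter fun i : Fin n => (i : ℕ) < k ∧ (i : ℕ) ≤ (σ i : ℕ))
        ∪ (Finset.univ.filter fun i : Fin n => (i : ℕ) = k) := by
    intro i hi
    rw [Finset.mem_filter] at hi
    rw [Finset.mem_union, Finset.mem_filter, Finset.mem_filter]
    rcases Nat.lt_succ_iff_lt_or_eq.mp hi.2.1 with h | h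
    · exact Or.inl ⟨hi.1, h, hi.2.2⟩
    · exact Or.inr ⟨hi.1, h⟩
  have hone : (Finset.univ.filter fun i : Fin n => (i : ℕ) = k).card ≤ 1 := by
    apply Finset.card_le_one.mpr
    intro a ha b hb
    rw [Finset.mem_filter] at ha hb
    exact Fin.val_injective (ha.2.trans hb.2.symm)
  calc _ ≤ _ := Finset.card_le_card hsub
    _ ≤ _ := Finset.card_union_le _ _
    _ ≤ _ := by omega

lemma Fex_close {N : ℕ} (hN : 1 ≤ N) (σ : Perm (Fin N)) {x : ℝ} (hx : 0 ≤ x) :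
    |Fex σ x - (countExc σ ⌊(N : ℝ) * x⌋₊ : ℝ) / N| ≤ 1 / N := by
  unfold Fex
  have hNpos : (0:ℝ) < N := by exact_mod_cast hN
  set K := ⌊(N : ℝ) * x⌋₊ with hK
  have h1 : countExc σ K ≤ countExc σ (K + 1) := countExc_mono σ (Nat.le_succ K)
  have h2 : countExc σ (K + 1) ≤ countExc σ K + 1 := countExc_succ_le σ K
  have hfr0 : 0 ≤ (N : ℝ) * x - K := by
    rw [sub_nonneg, hK]
    exact Nat.floor_le (by positivity)
  have hfr1 : (N : ℝ) * x - K ≤ 1 := by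
    have := Nat.lt_floor_add_one ((N : ℝ) * x)
    rw [← hK] at this
    linarith
  have heq : ((countExc σ K : ℝ)
        + ((N : ℝ) * x - K) * ((countExc σ (K + 1) : ℝ) - (countExc σ K : ℝ))) / N
      - (countExc σ K : ℝ) / N
      = (((N : ℝ) * x - K) * ((countExc σ (K + 1) : ℝ) - (countExc σ K : ℝ))) / N := by
    ring
  rw [heq, abs_div, abs_of_pos hNpos]
  have hd0 : (0:ℝ) ≤ (countExc σ (K + 1) : ℝ) - (countExc σ K : ℝ) := by
    rw [sub_nonneg]; exact_mod_cast h1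
  have hd1 : (countExc σ (K + 1) : ℝ) - (countExc σ K : ℝ) ≤ 1 := by
    have : (countExc σ (K + 1) : ℝ) ≤ (countExc σ K : ℝ) + 1 := by exact_mod_cast h2
    linarith
  have hbound : |((N : ℝ) * x - K) * ((countExc σ (K + 1) : ℝ) - (countExc σ K : ℝ))| ≤ 1 := by
    rw [abs_of_nonneg (mul_nonneg hfr0 hd0)]
    nlinarith
  exact (div_le_div_iff_of_pos_right hNpos).mpr hbound

lemma tail_bound (hθ : 0 < θ) (n K : ℕ) {δ : ℝ} (hδ : 0 < δ) :
    ∑ σ ∈ Finset.univ.filter (fun σ : Perm (Fin n) =>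
        δ * n < |(countExc σ K : ℝ) - ewensE θ n (fun σ' => (countExc σ' K : ℝ))|),
      θ ^ cycleCount σ / (∏ k ∈ Finset.range n, (θ + (k : ℝ)))
    ≤ 500 / (δ ^ 4 * (n : ℝ) ^ 2) := by
  rcases Nat.eq_zero_or_pos n with hn0 | hn
  · subst hn0
    have : (Finset.univ.filter (fun σ : Perm (Fin 0) =>
        δ * (0:ℕ) < |(countExc σ K : ℝ) - ewensE θ 0 (fun σ' => (countExc σ' K : ℝ))|)) = ∅ := by
      apply Finset.filter_false_of_mem
      intro σ _
      have h1 : countExc σ K = 0 := by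
        unfold countExc
        apply Finset.card_eq_zero.mpr
        apply Finset.eq_empty_of_forall_notMem
        intro i
        exact absurd i.2 (by omega)
      have h2 : ewensE θ 0 (fun σ' : Perm (Fin 0) => (countExc σ' K : ℝ)) = 0 := by
        rw [ewensE_fin_zero]
        have : countExc (1 : Perm (Fin 0)) K = 0 := by
          unfold countExc
          apply Finset.card_eq_zero.mpr
          apply Finset.eq_empty_of_forall_notMem
          intro i
          exact absurd i.2 (by omega)
        rw [this]; norm_num
      rw [h1, h2]
      simp
    rw [this]
    simp only [Finset.sum_empty]
    positivity
  · set m := ewensE θ n (fun σ' : Perm (Fin n) => (countExc σ' K : ℝ)) with hm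
    set Z := ∏ k ∈ Finset.range n, (θ + (k : ℝ)) with hZ
    have hZpos : 0 < Z := Zpos hθ n
    have hnpos : (0:ℝ) < n := by exact_mod_cast hn
    have hδn : (0:ℝ) < δ * n := by positivity
    set A := Finset.univ.filter (fun σ : Perm (Fin n) =>
        δ * n < |(countExc σ K : ℝ) - m|) with hA
    have hstep1 : ∀ σ ∈ A, θ ^ cycleCount σ
        ≤ θ ^ cycleCount σ * (((countExc σ K : ℝ) - m) / (δ * n)) ^ 4 := by
      intro σ hσ
      rw [hA, Finset.mem_filter] at hσ
      have habs : 1 ≤ |(countExc σ K : ℝ) - m| / (δ * n) := by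
        rw [le_div_iff₀ hδn]
        linarith [hσ.2]
      have hq : 1 ≤ (((countExc σ K : ℝ) - m) / (δ * n)) ^ 4 := by
        have hy : ∀ y : ℝ, y ^ 4 = |y| ^ 4 := fun y => by
          rw [← abs_pow]
          exact (abs_of_nonneg (by positivity)).symm
        rw [hy, abs_div, abs_of_pos hδn]
        have habs' : 1 ≤ |(countExc σ K : ℝ) - m| / (δ * n) := habs
        exact one_le_pow₀ habs
      nlinarith [pow_nonneg hθ.le (cycleCount σ), hq]
    have hstep2 : ∑ σ ∈ A, θ ^ cycleCount σ
        ≤ ∑ σ : Perm (Fin n), θ ^ cycleCount σ * (((countExc σ K : ℝ) - m) / (δ * n)) ^ 4 := by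
      calc ∑ σ ∈ A, θ ^ cycleCount σ
          ≤ ∑ σ ∈ A, θ ^ cycleCount σ * (((countExc σ K : ℝ) - m) / (δ * n)) ^ 4 :=
            Finset.sum_le_sum hstep1
        _ ≤ _ := by
            apply Finset.sum_le_sum_of_subset_of_nonneg (Finset.subset_univ A)
            intro σ _ _
            positivity
    have hconc := conc4 hθ n (fun σ => (countExc σ K : ℝ)) (fun σ τ => countExc_lip σ τ K)
    have hsum4 : ∑ σ : Perm (Fin n), θ ^ cycleCount σ * ((countExc σ K : ℝ) - m) ^ 4
        ≤ 500 * (n:ℝ) ^ 2 * Z := by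
      have hE : ewensE θ n (fun σ => ((countExc σ K : ℝ) - m) ^ 4)
          = (∑ σ : Perm (Fin n), θ ^ cycleCount σ * ((countExc σ K : ℝ) - m) ^ 4) / Z := rfl
      rw [hE] at hconc
      rw [div_le_iff₀ hZpos] at hconc
      linarith
    have hrw : ∑ σ : Perm (Fin n), θ ^ cycleCount σ * (((countExc σ K : ℝ) - m) / (δ * n)) ^ 4
        = (∑ σ : Perm (Fin n), θ ^ cycleCount σ * ((countExc σ K : ℝ) - m) ^ 4) / (δ * n) ^ 4 := by
      rw [Finset.sum_div]
      apply Finset.sum_congr rfl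
      intro σ _
      rw [div_pow]
      ring
    have hrw2 : ∑ σ ∈ A, θ ^ cycleCount σ / Z = (∑ σ ∈ A, θ ^ cycleCount σ) / Z := by
      rw [Finset.sum_div]
    rw [hrw2]
    have hfinal : (∑ σ ∈ A, θ ^ cycleCount σ) / Z
        ≤ (500 * (n:ℝ) ^ 2 * Z / (δ * n) ^ 4) / Z := by
      apply (div_le_div_iff_of_pos_right hZpos).mpr
      calc ∑ σ ∈ A, θ ^ cycleCount σ
          ≤ ∑ σ : Perm (Fin n), θ ^ cycleCount σ * (((countExc σ K : ℝ) - m) / (δ * n)) ^ 4 :=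
            hstep2
        _ = (∑ σ : Perm (Fin n), θ ^ cycleCount σ * ((countExc σ K : ℝ) - m) ^ 4)
              / (δ * n) ^ 4 := hrw
        _ ≤ 500 * (n:ℝ) ^ 2 * Z / (δ * n) ^ 4 :=
            (div_le_div_iff_of_pos_right (by positivity)).mpr hsum4
    calc (∑ σ ∈ A, θ ^ cycleCount σ) / Z ≤ _ := hfinal
      _ = 500 / (δ ^ 4 * (n : ℝ) ^ 2) := by
          field_simp

end Tail

section Limit

open Equiv Equiv.Perm Filter

variable {θ : ℝ}

lemma gauss_sum (K : ℕ) : ∑ j ∈ Finset.range K, ((j : ℕ) : ℝ) = (K : ℝ) * ((K : ℝ) - 1) / 2 := by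
  rcases Nat.eq_zero_or_pos K with h0 | h1
  · subst h0; simp
  · have h2 := Finset.sum_range_id_mul_two K
    have h3 := congrArg (Nat.cast : ℕ → ℝ) h2
    push_cast [Nat.cast_sub h1] at h3
    linarith

lemma mean_closed (hθ : 0 < θ) (N K : ℕ) (hK : K ≤ N) (hN : 1 ≤ N) :
    ewensE θ N (fun σ => (countExc σ K : ℝ))
      = (K : ℝ) - ((K : ℝ) * ((K : ℝ) - 1) / 2) / (θ + N - 1) := by
  rw [mean_countExc hθ N K hK]
  have hNR : (1:ℝ) ≤ (N:ℝ) := by exact_mod_cast hN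
  have hc : (0:ℝ) < θ + N - 1 := by linarith
  rw [← Finset.sum_div]
  have hnum : ∑ j ∈ Finset.range K, (θ + (N:ℝ) - 1 - (j : ℕ))
      = (K:ℝ) * (θ + N - 1) - (K:ℝ) * ((K:ℝ) - 1) / 2 := by
    rw [Finset.sum_sub_distrib, Finset.sum_const, Finset.card_range, gauss_sum, nsmul_eq_mul]
  rw [hnum]
  field_simp

lemma floor_div_tendsto {x : ℝ} (hx0 : 0 ≤ x) :
    Tendsto (fun N : ℕ => ((⌊(N:ℝ) * x⌋₊ : ℕ) : ℝ) / N) atTop (nhds x) := by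
  apply tendsto_of_tendsto_of_tendsto_of_le_of_le'
    (g := fun N : ℕ => x - 1 / N) (h := fun _ : ℕ => x)
  · have h1 : Tendsto (fun N : ℕ => 1 / (N:ℝ)) atTop (nhds 0) :=
      tendsto_one_div_atTop_nhds_zero_nat
    have := tendsto_const_nhds (x := x) (f := atTop (α := ℕ)) |>.sub h1
    simpa using this
  · exact tendsto_const_nhds
  · filter_upwards [eventually_ge_atTop 1] with N hN
    have hNpos : (0:ℝ) < N := by exact_mod_cast hN
    have hfl := Nat.lt_floor_add_one ((N:ℝ) * x)
    rw [sub_le_iff_le_add, ← add_div, le_div_iff₀ hNpos]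
    nlinarith [hfl]
  · filter_upwards [eventually_ge_atTop 1] with N hN
    have hNpos : (0:ℝ) < N := by exact_mod_cast hN
    have hfl : ((⌊(N:ℝ) * x⌋₊ : ℕ) : ℝ) ≤ (N:ℝ) * x := Nat.floor_le (by positivity)
    rw [div_le_iff₀ hNpos]
    linarith [hfl]

lemma Nfrac_tendsto (hθ : 0 < θ) :
    Tendsto (fun N : ℕ => (N:ℝ) / (θ + N - 1)) atTop (nhds 1) := by
  have h1 : Tendsto (fun N : ℕ => (θ - 1) / (N:ℝ) + 1) atTop (nhds 1) := by
    have h0 : Tendsto (fun N : ℕ => (θ - 1) / (N:ℝ)) atTop (nhds 0) :=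
      tendsto_const_div_atTop_nhds_zero_nat (θ - 1)
    simpa using h0.add tendsto_const_nhds
  have h2 : Tendsto (fun N : ℕ => ((θ - 1) / (N:ℝ) + 1)⁻¹) atTop (nhds 1) := by
    have := h1.inv₀ one_ne_zero
    simpa using this
  apply h2.congr'
  filter_upwards [eventually_ge_atTop 1] with N hN
  have hNpos : (0:ℝ) < N := by exact_mod_cast hN
  have hc : (0:ℝ) < θ + N - 1 := by
    have : (1:ℝ) ≤ (N:ℝ) := by exact_mod_cast hN
    linarith
  have hEq : (θ - 1) / (N:ℝ) + 1 = (θ + N - 1) / N := by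
    rw [div_add_one hNpos.ne']
    ring_nf
  rw [hEq, inv_div]

lemma mean_ratio_tendsto (hθ : 0 < θ) {x : ℝ} (hx0 : 0 ≤ x) (hx1 : x ≤ 1) :
    Tendsto (fun N : ℕ => ewensE θ N (fun σ => (countExc σ ⌊(N:ℝ) * x⌋₊ : ℝ)) / N) atTop
      (nhds (x - x ^ 2 / 2)) := by
  have hKle : ∀ N : ℕ, ⌊(N:ℝ) * x⌋₊ ≤ N := by
    intro N
    have h1 : (N:ℝ) * x ≤ (N:ℝ) := by nlinarith [Nat.cast_nonneg (α := ℝ) N]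
    calc ⌊(N:ℝ) * x⌋₊ ≤ ⌊(N:ℝ)⌋₊ := Nat.floor_mono h1
      _ = N := Nat.floor_natCast N
  have hr := floor_div_tendsto hx0
  have hNf := Nfrac_tendsto (θ := θ) hθ
  have hK1 : Tendsto (fun N : ℕ => (((⌊(N:ℝ) * x⌋₊ : ℕ) : ℝ) - 1) / (θ + N - 1)) atTop
      (nhds x) := by
    have base := (hr.sub tendsto_one_div_atTop_nhds_zero_nat).mul hNf
    have hval : (x - 0) * 1 = x := by ring
    rw [hval] at base
    apply base.congr'
    filter_upwards [eventually_ge_atTop 1] with N hN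
    have hNpos : (0:ℝ) < N := by exact_mod_cast hN
    have hNR : (1:ℝ) ≤ (N:ℝ) := by exact_mod_cast hN
    have hc : (0:ℝ) < θ + N - 1 := by linarith
    rw [div_sub_div_same]
    rw [div_mul_div_comm]
    rw [div_eq_div_iff (by positivity) hc.ne']
    ring
  have hmain : (fun N : ℕ => ewensE θ N (fun σ => (countExc σ ⌊(N:ℝ) * x⌋₊ : ℝ)) / N)
      =ᶠ[atTop] (fun N : ℕ => ((⌊(N:ℝ) * x⌋₊ : ℕ) : ℝ) / N
        - ((((⌊(N:ℝ) * x⌋₊ : ℕ) : ℝ) / N)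
            * ((((⌊(N:ℝ) * x⌋₊ : ℕ) : ℝ) - 1) / (θ + N - 1))) / 2) := by
    filter_upwards [eventually_ge_atTop 1] with N hN
    rw [mean_closed hθ N _ (hKle N) hN]
    have hNpos : (0:ℝ) < N := by exact_mod_cast hN
    have hNR : (1:ℝ) ≤ (N:ℝ) := by exact_mod_cast hN
    have hc : (0:ℝ) < θ + N - 1 := by linarith
    field_simp
  have hlim := hr.sub ((hr.mul hK1).div_const 2)
  have hval2 : x - x * x / 2 = x - x ^ 2 / 2 := by ring
  rw [← hval2]
  exact Tendsto.congr' hmain.symm hlim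

end Limit

lemma countExc_fin_zero (σ : Equiv.Perm (Fin 0)) (J : ℕ) : countExc σ J = 0 := by
  unfold countExc
  apply Finset.card_eq_zero.mpr
  apply Finset.eq_empty_of_forall_notMem
  intro i
  exact absurd i.2 (by omega)

end EwensProof

/-- Theorem 1.2, first part: for independent Ewens(θ) random permutations `σ_N` on a common
probability space, almost surely `F^{(N)}_{σ_N}(x) → (1 − (1−x)²)/2`. -/
theorem Fex_as_convergence (θ : ℝ) (hθ : 0 < θ) (x : ℝ) (hx : x ∈ Set.Icc (0 : ℝ) 1)
    {Ω : Type} [MeasurableSpace Ω] (μ : MeasureTheory.Measure Ω)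
    [MeasureTheory.IsProbabilityMeasure μ]
    (S : (N : ℕ) → Ω → Equiv.Perm (Fin N))
    (hdist : ∀ (N : ℕ) (σ0 : Equiv.Perm (Fin N)),
      μ {ω | S N ω = σ0} =
        ENNReal.ofReal (θ ^ cycleCount σ0 / ∏ k ∈ Finset.range N, (θ + (k : ℝ))))
    (hindep : ProbabilityTheory.iIndepFun
      (m := fun N => (⊤ : MeasurableSpace (Equiv.Perm (Fin N)))) S μ) :
    ∀ᵐ ω ∂μ, Filter.Tendsto (fun N => Fex (S N ω) x) Filter.atTop
      (nhds ((1 - (1 - x) ^ 2) / 2)) := by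
  classical
  open EwensProof Filter in
  obtain ⟨hx0, hx1⟩ := hx
  set K : ℕ → ℕ := fun N => ⌊(N:ℝ) * x⌋₊ with hK
  set m : ℕ → ℝ := fun N => ewensE θ N (fun σ => (countExc σ (K N) : ℝ)) with hm
  set E : ℕ → ℕ → Set Ω := fun k N =>
    {ω | (1/((k:ℝ)+1)) * N < |(countExc (S N ω) (K N) : ℝ) - m N|} with hE
  have hδpos : ∀ k : ℕ, (0:ℝ) < 1/((k:ℝ)+1) := fun k => by positivity
  -- single event bound
  have hbound : ∀ k N : ℕ,
      μ (E k N) ≤ ENNReal.ofReal (500 / ((1/((k:ℝ)+1))^4 * (N:ℝ)^2)) := by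
    intro k N
    rcases Nat.eq_zero_or_pos N with h0 | hN1
    · subst h0
      have hempty : E k 0 = ∅ := by
        apply Set.eq_empty_iff_forall_notMem.mpr
        intro ω hω
        rw [hE] at hω
        simp only [Set.mem_setOf_eq] at hω
        have hc0 : countExc (S 0 ω) (K 0) = 0 := countExc_fin_zero _ _
        have hm0 : m 0 = 0 := by
          rw [hm]
          simp only
          rw [ewensE_fin_zero]
          rw [countExc_fin_zero]
          norm_num
        rw [hc0, hm0] at hω
        norm_num at hω
      rw [hempty]
      simp
    · set A : Finset (Equiv.Perm (Fin N)) := Finset.univ.filter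
        (fun σ : Equiv.Perm (Fin N) =>
          (1/((k:ℝ)+1)) * N < |(countExc σ (K N) : ℝ)
            - ewensE θ N (fun σ' => (countExc σ' (K N) : ℝ))|) with hA
      have hEeq : E k N = ⋃ σ0 ∈ A, {ω | S N ω = σ0} := by
        ext ω
        rw [hE]
        simp only [Set.mem_setOf_eq, Set.mem_iUnion]
        constructor
        · intro h
          exact ⟨S N ω, by rw [hA]; exact Finset.mem_filter.mpr ⟨Finset.mem_univ _, h⟩, rfl⟩
        · rintro ⟨σ0, hσ0, hs⟩
          rw [hA, Finset.mem_filter] at hσ0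
          rw [hs]
          exact hσ0.2
      calc μ (E k N) = μ (⋃ σ0 ∈ A, {ω | S N ω = σ0}) := by rw [hEeq]
        _ ≤ ∑ σ0 ∈ A, μ {ω | S N ω = σ0} := MeasureTheory.measure_biUnion_finset_le A _
        _ = ∑ σ0 ∈ A, ENNReal.ofReal
              (θ ^ cycleCount σ0 / ∏ j ∈ Finset.range N, (θ + (j : ℝ))) := by
            exact Finset.sum_congr rfl fun σ0 _ => hdist N σ0
        _ = ENNReal.ofReal (∑ σ0 ∈ A,
              θ ^ cycleCount σ0 / ∏ j ∈ Finset.range N, (θ + (j : ℝ))) := by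
            rw [ENNReal.ofReal_sum_of_nonneg]
            intro σ0 _
            have := Zpos hθ N
            positivity
        _ ≤ ENNReal.ofReal (500 / ((1/((k:ℝ)+1))^4 * (N:ℝ)^2)) := by
            apply ENNReal.ofReal_le_ofReal
            exact tail_bound hθ N (K N) (hδpos k)
  -- summability
  have hsumm : ∀ k : ℕ, (∑' N : ℕ, μ (E k N)) ≠ ⊤ := by
    intro k
    have hs : Summable (fun N : ℕ => 500 / ((1/((k:ℝ)+1))^4 * (N:ℝ)^2)) := by
      have h2 : Summable (fun N : ℕ => 1 / (N:ℝ)^2) :=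
        Real.summable_one_div_nat_pow.mpr one_lt_two
      have := h2.mul_left (500 / (1/((k:ℝ)+1))^4)
      apply this.congr
      intro N
      rw [div_mul_div_comm, mul_one]
    have hle : (∑' N : ℕ, μ (E k N))
        ≤ ∑' N : ℕ, ENNReal.ofReal (500 / ((1/((k:ℝ)+1))^4 * (N:ℝ)^2)) :=
      ENNReal.tsum_le_tsum (hbound k)
    have heq : (∑' N : ℕ, ENNReal.ofReal (500 / ((1/((k:ℝ)+1))^4 * (N:ℝ)^2)))
        = ENNReal.ofReal (∑' N : ℕ, 500 / ((1/((k:ℝ)+1))^4 * (N:ℝ)^2)) := by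
      rw [ENNReal.ofReal_tsum_of_nonneg]
      · intro N; positivity
      · exact hs
    rw [heq] at hle
    exact ne_top_of_le_ne_top ENNReal.ofReal_ne_top hle
  -- bad sets
  set Bad : ℕ → Set Ω := fun k => ⋂ M : ℕ, ⋃ N : ℕ, ⋃ (_ : M ≤ N), E k N with hBadDef
  have hBad : ∀ k, μ (Bad k) = 0 := by
    intro k
    have h1 : ∀ M : ℕ, μ (Bad k) ≤ ∑' j : ℕ, μ (E k (j + M)) := by
      intro M
      have hsub : Bad k ⊆ ⋃ j : ℕ, E k (j + M) := by
        intro ω hω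
        rw [hBadDef] at hω
        have := Set.mem_iInter.mp hω M
        rw [Set.mem_iUnion] at this
        obtain ⟨N, hN⟩ := this
        rw [Set.mem_iUnion] at hN
        obtain ⟨hMN, hωN⟩ := hN
        rw [Set.mem_iUnion]
        exact ⟨N - M, by rwa [Nat.sub_add_cancel hMN]⟩
      calc μ (Bad k) ≤ μ (⋃ j : ℕ, E k (j + M)) := MeasureTheory.measure_mono hsub
        _ ≤ ∑' j : ℕ, μ (E k (j + M)) := MeasureTheory.measure_iUnion_le _
    have h2 := ENNReal.tendsto_sum_nat_add (fun N => μ (E k N)) (hsumm k)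
    have h3 : μ (Bad k) ≤ 0 := ge_of_tendsto' h2 h1
    exact le_antisymm h3 zero_le
  have hBadU : μ (⋃ k : ℕ, Bad k) = 0 := MeasureTheory.measure_iUnion_null hBad
  -- reduce to pointwise statement
  rw [MeasureTheory.ae_iff]
  apply MeasureTheory.measure_mono_null ?_ hBadU
  intro ω hω
  rw [Set.mem_setOf_eq] at hω
  by_contra hnot
  apply hω
  -- ω is in no bad set
  have hgood : ∀ k : ℕ, ∃ M : ℕ, ∀ N : ℕ, M ≤ N → ω ∉ E k N := by
    intro k
    have : ω ∉ Bad k := fun hmem => hnot (Set.mem_iUnion.mpr ⟨k, hmem⟩)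
    rw [hBadDef] at this
    rw [Set.mem_iInter] at this
    push_neg at this
    obtain ⟨M, hM⟩ := this
    refine ⟨M, fun N hMN hωN => ?_⟩
    apply hM
    rw [Set.mem_iUnion]
    exact ⟨N, Set.mem_iUnion.mpr ⟨hMN, hωN⟩⟩
  -- step A : S/N - m/N → 0
  have hA : Tendsto (fun N : ℕ => (countExc (S N ω) (K N) : ℝ) / N - m N / N) atTop
      (nhds 0) := by
    rw [Metric.tendsto_atTop]
    intro ε hε
    obtain ⟨k, hk⟩ := exists_nat_one_div_lt hε
    obtain ⟨M, hM⟩ := hgood k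
    refine ⟨max M 1, fun N hN => ?_⟩
    have hNM : M ≤ N := le_trans (le_max_left _ _) hN
    have hN1 : 1 ≤ N := le_trans (le_max_right _ _) hN
    have hNpos : (0:ℝ) < N := by exact_mod_cast hN1
    have hnotE := hM N hNM
    rw [hE, Set.mem_setOf_eq, not_lt] at hnotE
    rw [Real.dist_eq, sub_zero]
    have heq : (countExc (S N ω) (K N) : ℝ) / N - m N / N
        = ((countExc (S N ω) (K N) : ℝ) - m N) / N := by ring
    rw [heq, abs_div, abs_of_pos hNpos]
    calc |(countExc (S N ω) (K N) : ℝ) - m N| / N ≤ ((1/((k:ℝ)+1)) * N) / N := by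
          apply (div_le_div_iff_of_pos_right hNpos).mpr hnotE
      _ = 1/((k:ℝ)+1) := by
          rw [mul_div_assoc, div_self hNpos.ne', mul_one]
      _ < ε := hk
  -- step B : m/N → x - x²/2
  have hB : Tendsto (fun N : ℕ => m N / N) atTop (nhds (x - x ^ 2 / 2)) :=
    mean_ratio_tendsto hθ hx0 hx1
  -- step C : S/N → x - x²/2
  have hC : Tendsto (fun N : ℕ => (countExc (S N ω) (K N) : ℝ) / N) atTop
      (nhds (x - x ^ 2 / 2)) := by
    have := hA.add hB
    rw [zero_add] at this
    apply this.congr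
    intro N
    ring
  -- step D : Fex → limit
  have hD0 : Tendsto (fun N : ℕ => Fex (S N ω) x
      - (countExc (S N ω) (K N) : ℝ) / N) atTop (nhds 0) := by
    rw [tendsto_zero_iff_abs_tendsto_zero]
    apply squeeze_zero' (g := fun N : ℕ => 1 / (N:ℝ))
    · filter_upwards with N
      exact abs_nonneg _
    · filter_upwards [eventually_ge_atTop 1] with N hN
      exact Fex_close hN (S N ω) hx0
    · exact tendsto_one_div_atTop_nhds_zero_nat
  have hfinal : Tendsto (fun N : ℕ => Fex (S N ω) x) atTop (nhds (x - x ^ 2 / 2)) := by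
    have := hD0.add hC
    rw [zero_add] at this
    apply this.congr
    intro N
    ring
  have hval : x - x ^ 2 / 2 = (1 - (1 - x) ^ 2) / 2 := by ring
  rw [hval] at hfinal
  exact hfinal

end
end

section
/- Let A^{(N)}_1, …, A^{(N)}_ℓ be ℓ sequences of (possibly complex-valued) random variables such that E[A^{(N)}_j] = 1 for all N and j, and such that all joint moments M^{(N)}_{A,Δ} = E[∏_{j∈Δ} A^{(N)}_j] are nonzero. For each Δ ⊆ [ℓ], define U^{(N)}_{A,Δ} as the unique family satisfying ∏_{δ ⊆ Δ} U^{(N)}_{A,δ} = M^{(N)}_{A,Δ} for all Δ ⊆ [ℓ], and let κ^{(N)}_{A,Δ} be the joint cumulant of the family (A^{(N)}_j)_{j∈Δ}. Then the following are equivalent: (I) for every Δ ⊆ [ℓ] with |Δ| ≥ 2, U^{(N)}_{A,Δ} = 1 + O(N^{−|Δ|+1}) as N → ∞; (II) for every Δ ⊆ [ℓ] with |Δ| ≥ 2, κ^{(N)}_{A,Δ} = O(N^{−|Δ|+1}) as N → ∞. -/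
open scoped BigOperators Classical
open Finset

noncomputable section

namespace QF
variable {ι : Type*} [DecidableEq ι]

lemma mem_partitionsOf {S : Finset ι} {P : Finset (Finset ι)} :
    P ∈ partitionsOf S ↔ ((∀ C ∈ P, C ⊆ S) ∧ (∀ C ∈ P, C.Nonempty) ∧
      ∀ j ∈ S, ∃! C, C ∈ P ∧ j ∈ C) := by
  unfold partitionsOf
  simp only [Finset.mem_filter, Finset.mem_powerset]
  constructor
  · rintro ⟨h1, h2, h3⟩
    exact ⟨fun C hC => Finset.mem_powerset.1 (h1 hC), h2, h3⟩
  · rintro ⟨h1, h2, h3⟩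
    exact ⟨fun C hC => Finset.mem_powerset.2 (h1 C hC), h2, h3⟩

variable {S : Finset ι} {P : Finset (Finset ι)}

lemma part_subset (hP : P ∈ partitionsOf S) {C : Finset ι} (hC : C ∈ P) : C ⊆ S :=
  (mem_partitionsOf.1 hP).1 C hC

lemma part_nonempty (hP : P ∈ partitionsOf S) {C : Finset ι} (hC : C ∈ P) : C.Nonempty :=
  (mem_partitionsOf.1 hP).2.1 C hC

lemma part_cover (hP : P ∈ partitionsOf S) {x : ι} (hx : x ∈ S) : ∃ C ∈ P, x ∈ C := by
  obtain ⟨C, hC, -⟩ := (mem_partitionsOf.1 hP).2.2 x hx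
  exact ⟨C, hC.1, hC.2⟩

lemma part_eq (hP : P ∈ partitionsOf S) {C D : Finset ι} (hC : C ∈ P) (hD : D ∈ P)
    {x : ι} (hxC : x ∈ C) (hxD : x ∈ D) : C = D := by
  have hxS : x ∈ S := part_subset hP hC hxC
  obtain ⟨E, -, hE⟩ := (mem_partitionsOf.1 hP).2.2 x hxS
  rw [hE C ⟨hC, hxC⟩, hE D ⟨hD, hxD⟩]

lemma part_disj (hP : P ∈ partitionsOf S) {C D : Finset ι} (hC : C ∈ P) (hD : D ∈ P)
    (hne : C ≠ D) : Disjoint C D := by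
  rw [Finset.disjoint_left]
  intro x hxC hxD
  exact hne (part_eq hP hC hD hxC hxD)

lemma part_biUnion (hP : P ∈ partitionsOf S) : P.biUnion id = S := by
  ext x
  simp only [Finset.mem_biUnion, id]
  exact ⟨fun ⟨C, hC, hx⟩ => part_subset hP hC hx, fun hx => part_cover hP hx⟩

lemma part_sum_card (hP : P ∈ partitionsOf S) : ∑ C ∈ P, C.card = S.card := by
  rw [← part_biUnion hP]
  exact (Finset.card_biUnion (fun C hC D hD hne => part_disj hP hC hD hne)).symm

lemma part_nonempty_of (hP : P ∈ partitionsOf S) (hS : S.Nonempty) : P.Nonempty := by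
  obtain ⟨x, hx⟩ := hS
  obtain ⟨C, hC, -⟩ := part_cover hP hx
  exact ⟨C, hC⟩

lemma top_mem_partitionsOf (hS : S.Nonempty) : {S} ∈ partitionsOf S := by
  rw [mem_partitionsOf]
  refine ⟨?_, ?_, ?_⟩
  · intro C hC; rw [Finset.mem_singleton] at hC; subst hC; rfl
  · intro C hC; rw [Finset.mem_singleton] at hC; subst hC; exact hS
  · intro j hj
    exact ⟨S, ⟨Finset.mem_singleton_self S, hj⟩, fun C hC => Finset.mem_singleton.1 hC.1⟩

lemma eq_top_of_top_subset (hP : P ∈ partitionsOf S) {C : Finset ι} (hC : C ∈ P)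
    (hSC : S ⊆ C) : P = {S} := by
  have hCS : C = S := le_antisymm (part_subset hP hC) hSC
  subst hCS
  ext D
  simp only [Finset.mem_singleton]
  constructor
  · intro hD
    obtain ⟨x, hx⟩ := part_nonempty hP hD
    exact part_eq hP hD hC hx (part_subset hP hD hx)
  · rintro rfl; exact hC

/-- cover S nonempty: partition of S containing a single element. -/
lemma part_card_pos (hP : P ∈ partitionsOf S) (hS : S.Nonempty) : 1 ≤ P.card :=
  Finset.card_pos.2 (part_nonempty_of hP hS)

end QF
set_option linter.unusedSectionVars false
set_option linter.unusedVariables false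
namespace QF2
open QF
variable {ι : Type*} [DecidableEq ι]

def rel0 (F : Finset (Finset ι)) (x y : ι) : Prop := ∃ δ ∈ F, x ∈ δ ∧ y ∈ δ

def erg (F : Finset (Finset ι)) : ι → ι → Prop := Relation.EqvGen (rel0 F)

lemma erg_refl (F : Finset (Finset ι)) (x : ι) : erg F x x := Relation.EqvGen.refl x

lemma erg_symm {F : Finset (Finset ι)} {x y : ι} (h : erg F x y) : erg F y x :=
  Relation.EqvGen.symm x y h

lemma erg_trans {F : Finset (Finset ι)} {x y z : ι} (h : erg F x y) (h' : erg F y z) :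
    erg F x z := Relation.EqvGen.trans x y z h h'

lemma erg_rel {F : Finset (Finset ι)} {δ : Finset ι} (hδ : δ ∈ F) {x y : ι}
    (hx : x ∈ δ) (hy : y ∈ δ) : erg F x y := Relation.EqvGen.rel x y ⟨δ, hδ, hx, hy⟩

lemma erg_mono {F F' : Finset (Finset ι)} (h : F' ⊆ F) {x y : ι} (hxy : erg F' x y) :
    erg F x y := by
  induction hxy with
  | rel a b hab => obtain ⟨δ, hδ, h1, h2⟩ := hab; exact erg_rel (h hδ) h1 h2
  | refl a => exact erg_refl F a
  | symm a b _ ih => exact erg_symm ih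
  | trans a b c _ _ ih1 ih2 => exact erg_trans ih1 ih2

noncomputable def comp (S : Finset ι) (F : Finset (Finset ι)) (x : ι) : Finset ι :=
  S.filter (fun y => erg F x y)

noncomputable def compPart (S : Finset ι) (F : Finset (Finset ι)) : Finset (Finset ι) :=
  S.image (comp S F)

def conn (S : Finset ι) (F : Finset (Finset ι)) : Prop := (compPart S F).card = 1

def below (ρ π : Finset (Finset ι)) : Prop := ∀ B ∈ ρ, ∃ C ∈ π, B ⊆ C

lemma mem_comp {S : Finset ι} {F : Finset (Finset ι)} {x y : ι} :
    y ∈ comp S F x ↔ y ∈ S ∧ erg F x y := Finset.mem_filter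

lemma mem_comp_self {S : Finset ι} {F : Finset (Finset ι)} {x : ι} (hx : x ∈ S) :
    x ∈ comp S F x := mem_comp.2 ⟨hx, erg_refl F x⟩

lemma comp_congr {S : Finset ι} {F : Finset (Finset ι)} {x y : ι} (h : erg F x y) :
    comp S F x = comp S F y := by
  ext z
  simp only [mem_comp]
  exact ⟨fun ⟨hz, h1⟩ => ⟨hz, erg_trans (erg_symm h) h1⟩,
    fun ⟨hz, h1⟩ => ⟨hz, erg_trans h h1⟩⟩

lemma compPart_mem (S : Finset ι) (F : Finset (Finset ι)) :
    compPart S F ∈ partitionsOf S := by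
  rw [mem_partitionsOf]
  refine ⟨?_, ?_, ?_⟩
  · intro C hC
    obtain ⟨x, -, rfl⟩ := Finset.mem_image.1 hC
    exact Finset.filter_subset _ _
  · intro C hC
    obtain ⟨x, hx, rfl⟩ := Finset.mem_image.1 hC
    exact ⟨x, mem_comp_self hx⟩
  · intro j hj
    refine ⟨comp S F j, ⟨Finset.mem_image_of_mem _ hj, mem_comp_self hj⟩, ?_⟩
    rintro C ⟨hC, hjC⟩
    obtain ⟨x, -, rfl⟩ := Finset.mem_image.1 hC
    exact comp_congr (mem_comp.1 hjC).2

lemma erg_closed {S : Finset ι} {π F : Finset (Finset ι)} (hP : π ∈ partitionsOf S)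
    (hbel : below F π) {a b : ι} (h : erg F a b) : ∀ C ∈ π, (a ∈ C ↔ b ∈ C) := by
  induction h with
  | rel x y hxy =>
    intro C hC
    obtain ⟨δ, hδ, hx, hy⟩ := hxy
    obtain ⟨D, hD, hsub⟩ := hbel δ hδ
    constructor
    · intro hxC
      have : C = D := part_eq hP hC hD hxC (hsub hx)
      exact this ▸ hsub hy
    · intro hyC
      have : C = D := part_eq hP hC hD hyC (hsub hy)
      exact this ▸ hsub hx
  | refl a => exact fun C _ => Iff.rfl
  | symm a b _ ih => exact fun C hC => (ih C hC).symm
  | trans a b c _ _ ih1 ih2 => exact fun C hC => (ih1 C hC).trans (ih2 C hC)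

lemma below_compPart_iff {S : Finset ι} {π F : Finset (Finset ι)}
    (hP : π ∈ partitionsOf S) (hF : F ⊆ S.powerset.erase ∅) :
    below F π ↔ below (compPart S F) π := by
  constructor
  · intro hbel B hB
    obtain ⟨x, hx, rfl⟩ := Finset.mem_image.1 hB
    obtain ⟨C, hC, hxC⟩ := part_cover hP hx
    refine ⟨C, hC, fun z hz => ?_⟩
    obtain ⟨-, hxz⟩ := mem_comp.1 hz
    exact (erg_closed hP hbel hxz C hC).1 hxC
  · intro hbel δ hδ
    have hδ' := hF hδ
    rw [Finset.mem_erase, Finset.mem_powerset] at hδ'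
    obtain ⟨hne, hsub⟩ := hδ'
    obtain ⟨x, hx⟩ := Finset.nonempty_iff_ne_empty.2 hne
    have hxS : x ∈ S := hsub hx
    obtain ⟨C, hC, hBC⟩ := hbel (comp S F x) (Finset.mem_image_of_mem _ hxS)
    refine ⟨C, hC, fun y hy => hBC (mem_comp.2 ⟨hsub hy, erg_rel hδ hx hy⟩)⟩

lemma compPart_eq_top {S : Finset ι} {F : Finset (Finset ι)} (hconn : conn S F)
    (hS : S.Nonempty) : compPart S F = {S} := by
  obtain ⟨C, hC⟩ := Finset.card_eq_one.1 hconn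
  have hCm : C ∈ compPart S F := hC ▸ Finset.mem_singleton_self C
  have hCS : S ⊆ C := by
    intro x hx
    obtain ⟨D, hD, hxD⟩ := part_cover (compPart_mem S F) hx
    have : D = C := by rw [hC] at hD; exact Finset.mem_singleton.1 hD
    exact this ▸ hxD
  rw [hC, le_antisymm (part_subset (compPart_mem S F) hCm) hCS]

lemma erg_of_conn {S : Finset ι} {F : Finset (Finset ι)} (hconn : conn S F)
    {x y : ι} (hx : x ∈ S) (hy : y ∈ S) : erg F x y := by
  have h1 : comp S F x ∈ compPart S F := Finset.mem_image_of_mem _ hx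
  rw [compPart_eq_top hconn ⟨x, hx⟩, Finset.mem_singleton] at h1
  have : y ∈ comp S F x := by rw [h1]; exact hy
  exact (mem_comp.1 this).2

lemma conn_of_mem {S : Finset ι} {F : Finset (Finset ι)} (hSF : S ∈ F) (hS : S.Nonempty) :
    conn S F := by
  obtain ⟨x₀, hx₀⟩ := hS
  have hcomp : ∀ x ∈ S, comp S F x = S := by
    intro x hx
    apply le_antisymm (Finset.filter_subset _ _)
    intro y hy
    exact mem_comp.2 ⟨hy, erg_rel hSF hx hy⟩
  unfold conn compPart
  rw [Finset.card_eq_one]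
  refine ⟨S, Finset.Subset.antisymm ?_ ?_⟩
  · intro B hB
    obtain ⟨x, hx, rfl⟩ := Finset.mem_image.1 hB
    rw [hcomp x hx]; exact Finset.mem_singleton_self S
  · intro B hB
    rw [Finset.mem_singleton] at hB
    rw [hB]
    exact Finset.mem_image.2 ⟨x₀, hx₀, hcomp x₀ hx₀⟩

lemma erg_avoid {F : Finset (Finset ι)} {δ₀ : Finset ι} {x : ι}
    (hdisj : ∀ y, erg F x y → y ∉ δ₀) {z : ι} (h : erg (insert δ₀ F) x z) : erg F x z := by
  have key : ∀ a b, erg (insert δ₀ F) a b →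
      (erg F x a → erg F x b) ∧ (erg F x b → erg F x a) := by
    intro a b hab
    induction hab with
    | rel a b hab =>
      obtain ⟨δ, hδ, h1, h2⟩ := hab
      rcases Finset.mem_insert.1 hδ with rfl | hδF
      · constructor
        · intro hxa; exact absurd h1 (hdisj a hxa)
        · intro hxb; exact absurd h2 (hdisj b hxb)
      · exact ⟨fun hxa => erg_trans hxa (erg_rel hδF h1 h2),
          fun hxb => erg_trans hxb (erg_rel hδF h2 h1)⟩
    | refl a => exact ⟨id, id⟩
    | symm a b _ ih => exact ⟨ih.2, ih.1⟩
    | trans a b c _ _ ih1 ih2 => exact ⟨fun h => ih2.1 (ih1.1 h), fun h => ih1.2 (ih2.2 h)⟩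
  exact (key x z h).1 (erg_refl F x)

lemma erg_restrict {S : Finset ι} {F : Finset (Finset ι)} (hF : ∀ δ ∈ F, δ ⊆ S)
    {x₀ : ι} (hx₀ : x₀ ∈ S) {a b : ι} (hab : erg F a b) :
    (a ∈ comp S F x₀ → b ∈ comp S F x₀ ∧ erg (F.filter (· ⊆ comp S F x₀)) a b) ∧
    (b ∈ comp S F x₀ → a ∈ comp S F x₀ ∧ erg (F.filter (· ⊆ comp S F x₀)) b a) := by
  set B := comp S F x₀ with hB
  induction hab with
  | rel a b hab =>
    obtain ⟨δ, hδ, h1, h2⟩ := hab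
    have hkey : ∀ c d : ι, c ∈ δ → d ∈ δ → c ∈ B →
        d ∈ B ∧ erg (F.filter (· ⊆ B)) c d := by
      intro c d hc hd hcB
      have hδB : δ ⊆ B := by
        intro w hw
        have hcx : erg F x₀ c := (mem_comp.1 hcB).2
        exact mem_comp.2 ⟨hF δ hδ hw, erg_trans hcx (erg_rel hδ hc hw)⟩
      have hδ' : δ ∈ F.filter (· ⊆ B) := Finset.mem_filter.2 ⟨hδ, hδB⟩
      exact ⟨hδB hd, erg_rel hδ' hc hd⟩
    exact ⟨hkey a b h1 h2, hkey b a h2 h1⟩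
  | refl a => exact ⟨fun h => ⟨h, erg_refl _ a⟩, fun h => ⟨h, erg_refl _ a⟩⟩
  | symm a b _ ih => exact ⟨ih.2, ih.1⟩
  | trans a b c _ _ ih1 ih2 =>
    constructor
    · intro ha
      obtain ⟨hb, h1⟩ := ih1.1 ha
      obtain ⟨hc, h2⟩ := ih2.1 hb
      exact ⟨hc, erg_trans h1 h2⟩
    · intro hc
      obtain ⟨hb, h2⟩ := ih2.2 hc
      obtain ⟨ha, h1⟩ := ih1.2 hb
      exact ⟨ha, erg_trans h2 h1⟩

end QF2
namespace QF3
open QF QF2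
variable {ι : Type*} [DecidableEq ι]

/-- weight in the cumulant formula -/
def wgt (k : ℕ) : ℂ := (-1 : ℂ) ^ (k - 1) * ((k - 1).factorial : ℂ)

lemma wgt_cancel {k : ℕ} (hk : 1 ≤ k) : (k : ℂ) * wgt k + wgt (k + 1) = 0 := by
  unfold wgt
  obtain ⟨m, rfl⟩ := Nat.exists_eq_add_of_le hk
  have e1 : 1 + m - 1 = m := by omega
  have e2 : 1 + m + 1 - 1 = m + 1 := by omega
  rw [e1, e2]
  have h1 : ((m + 1).factorial : ℂ) = (m + 1 : ℕ) * (m.factorial : ℂ) := by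
    rw [Nat.factorial_succ]; push_cast; ring
  rw [pow_succ, h1]
  push_cast
  ring

lemma mem_partitionsOf_of {S : Finset ι} {P : Finset (Finset ι)}
    (h1 : ∀ C ∈ P, C ⊆ S) (h2 : ∀ C ∈ P, C.Nonempty)
    (h3 : ∀ C ∈ P, ∀ D ∈ P, C ≠ D → Disjoint C D)
    (h4 : ∀ x ∈ S, ∃ C ∈ P, x ∈ C) : P ∈ partitionsOf S := by
  rw [mem_partitionsOf]
  refine ⟨h1, h2, fun j hj => ?_⟩
  obtain ⟨C, hC, hjC⟩ := h4 j hj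
  refine ⟨C, ⟨hC, hjC⟩, ?_⟩
  rintro D ⟨hD, hjD⟩
  by_contra hne
  exact (Finset.disjoint_left.1 (h3 D hD C hC hne)) hjD hjC

lemma mobius_sum {S : Finset ι} {ρ : Finset (Finset ι)} (hρ : ρ ∈ partitionsOf S)
    (hS : S.Nonempty) :
    ∑ π ∈ (partitionsOf S).filter (below ρ), wgt π.card
      = if ρ.card = 1 then 1 else 0 := by
  by_cases h1 : ρ.card = 1
  · -- single block: ρ = {S}
    obtain ⟨B, hB⟩ := Finset.card_eq_one.1 h1
    have hBmem : B ∈ ρ := hB ▸ Finset.mem_singleton_self B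
    have hBS : B = S := by
      apply le_antisymm (part_subset hρ hBmem)
      intro x hx
      obtain ⟨C, hC, hxC⟩ := part_cover hρ hx
      have : C = B := by rw [hB] at hC; exact Finset.mem_singleton.1 hC
      exact this ▸ hxC
    have hfl : (partitionsOf S).filter (below ρ) = {({S} : Finset (Finset ι))} := by
      apply Finset.Subset.antisymm
      · intro π hπ
        rw [Finset.mem_filter] at hπ
        obtain ⟨hπp, hbel⟩ := hπ
        obtain ⟨C, hC, hSC⟩ := hbel B hBmem
        rw [Finset.mem_singleton]
        exact eq_top_of_top_subset hπp hC (hBS ▸ hSC)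
      · intro π hπ
        rw [Finset.mem_singleton] at hπ
        subst hπ
        rw [Finset.mem_filter]
        refine ⟨top_mem_partitionsOf hS, fun D hD => ?_⟩
        exact ⟨S, Finset.mem_singleton_self S, hBS ▸ part_subset hρ hD⟩
    rw [if_pos h1, hfl, Finset.sum_singleton]
    simp [wgt]
  · -- at least two blocks
    rw [if_neg h1]
    have hρpos : 1 ≤ ρ.card := part_card_pos hρ hS
    have hρ2 : 2 ≤ ρ.card := by omega
    obtain ⟨B₀, hB₀⟩ : ρ.Nonempty := Finset.card_pos.1 (by omega)
    have hB₀S : B₀ ⊆ S := part_subset hρ hB₀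
    have hB₀ne : B₀.Nonempty := part_nonempty hρ hB₀
    obtain ⟨x₀, hx₀⟩ := hB₀ne
    set S' : Finset ι := S \ B₀ with hS'def
    set ρ' : Finset (Finset ι) := ρ.erase B₀ with hρ'def
    have hdisjS' : ∀ {C : Finset ι}, C ⊆ S'  → Disjoint C B₀ :=
      fun hC => Finset.disjoint_of_subset_left hC Finset.sdiff_disjoint
    have hρ'mem : ρ' ∈ partitionsOf S' := by
      apply mem_partitionsOf_of
      · intro C hC
        have hCρ := Finset.mem_of_mem_erase hC
        have hne := Finset.ne_of_mem_erase hC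
        intro x hx
        rw [Finset.mem_sdiff]
        exact ⟨part_subset hρ hCρ hx,
          Finset.disjoint_left.1 (part_disj hρ hCρ hB₀ hne) hx⟩
      · exact fun C hC => part_nonempty hρ (Finset.mem_of_mem_erase hC)
      · intro C hC D hD hne
        exact part_disj hρ (Finset.mem_of_mem_erase hC) (Finset.mem_of_mem_erase hD) hne
      · intro x hx
        rw [Finset.mem_sdiff] at hx
        obtain ⟨C, hC, hxC⟩ := part_cover hρ hx.1
        refine ⟨C, Finset.mem_erase.2 ⟨?_, hC⟩, hxC⟩
        rintro rfl
        exact hx.2 hxC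
    have hρ'ne : ρ'.Nonempty := by
      rw [← Finset.card_pos, Finset.card_erase_of_mem hB₀]
      omega
    have hS'ne : S'.Nonempty := by
      obtain ⟨C, hC⟩ := hρ'ne
      obtain ⟨y, hy⟩ := part_nonempty hρ'mem hC
      exact ⟨y, part_subset hρ'mem hC hy⟩
    -- the block of x₀ in a partition
    set blk : Finset (Finset ι) → Finset ι := fun π => (π.filter (fun C => x₀ ∈ C)).sup id
      with hblk
    have hblk_eq : ∀ {π : Finset (Finset ι)} {T : Finset ι}, π ∈ partitionsOf S →
        T ∈ π → x₀ ∈ T → blk π = T := by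
      intro π T hπ hT hx₀T
      have : π.filter (fun C => x₀ ∈ C) = {T} := by
        apply Finset.Subset.antisymm
        · intro C hC
          rw [Finset.mem_filter] at hC
          rw [Finset.mem_singleton]
          exact part_eq hπ hC.1 hT hC.2 hx₀T
        · intro C hC
          rw [Finset.mem_singleton] at hC
          subst hC
          exact Finset.mem_filter.2 ⟨hT, hx₀T⟩
      rw [hblk]
      simp only [this, Finset.sup_singleton, id]
    set A : Finset (Finset (Finset ι)) := (partitionsOf S).filter (below ρ) with hA
    set A' : Finset (Finset (Finset ι)) := (partitionsOf S').filter (below ρ') with hA'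
    -- membership helper for A'
    have hmemA' : ∀ {π : Finset (Finset ι)}, π ∈ A' ↔
        π ∈ partitionsOf S' ∧ below ρ' π := by
      intro π; rw [hA', Finset.mem_filter]
    have hmemA : ∀ {π : Finset (Finset ι)}, π ∈ A ↔
        π ∈ partitionsOf S ∧ below ρ π := by
      intro π; rw [hA, Finset.mem_filter]
    have hnotsub : ¬ B₀ ⊆ S' := fun h => (Finset.mem_sdiff.1 (h hx₀)).2 hx₀
    -- Part A₁ : partitions containing B₀ as a block
    have hA1 : ∑ π ∈ A.filter (fun π => B₀ ∈ π), wgt π.card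
        = ∑ π' ∈ A', wgt (π'.card + 1) := by
      apply Finset.sum_nbij' (fun π => π.erase B₀) (fun π' => insert B₀ π')
      · -- maps into A'
        intro π hπ
        rw [Finset.mem_filter] at hπ
        obtain ⟨hπA, hB₀π⟩ := hπ
        obtain ⟨hπp, hbel⟩ := hmemA.1 hπA
        rw [hmemA']
        constructor
        · apply mem_partitionsOf_of
          · intro C hC x hx
            have hCπ := Finset.mem_of_mem_erase hC
            rw [Finset.mem_sdiff]
            exact ⟨part_subset hπp hCπ hx,
              Finset.disjoint_left.1 (part_disj hπp hCπ hB₀π (Finset.ne_of_mem_erase hC)) hx⟩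
          · exact fun C hC => part_nonempty hπp (Finset.mem_of_mem_erase hC)
          · intro C hC D hD hne
            exact part_disj hπp (Finset.mem_of_mem_erase hC) (Finset.mem_of_mem_erase hD) hne
          · intro x hx
            rw [Finset.mem_sdiff] at hx
            obtain ⟨C, hC, hxC⟩ := part_cover hπp hx.1
            refine ⟨C, Finset.mem_erase.2 ⟨?_, hC⟩, hxC⟩
            rintro rfl
            exact hx.2 hxC
        · intro B hB
          have hBρ := Finset.mem_of_mem_erase hB
          obtain ⟨C, hC, hBC⟩ := hbel B hBρ
          refine ⟨C, Finset.mem_erase.2 ⟨?_, hC⟩, hBC⟩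
          rintro rfl
          obtain ⟨y, hy⟩ := part_nonempty hρ hBρ
          exact Finset.disjoint_left.1
            (part_disj hρ hBρ hB₀ (Finset.ne_of_mem_erase hB)) hy (hBC hy)
      · -- inverse maps into A₁
        intro π' hπ'
        obtain ⟨hπ'p, hbel'⟩ := hmemA'.1 hπ'
        rw [Finset.mem_filter]
        refine ⟨hmemA.2 ⟨?_, ?_⟩, Finset.mem_insert_self _ _⟩
        · apply mem_partitionsOf_of
          · intro C hC
            rcases Finset.mem_insert.1 hC with rfl | hC'
            · exact hB₀S
            · exact (part_subset hπ'p hC').trans Finset.sdiff_subset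
          · intro C hC
            rcases Finset.mem_insert.1 hC with rfl | hC'
            · exact ⟨x₀, hx₀⟩
            · exact part_nonempty hπ'p hC'
          · intro C hC D hD hne
            rcases Finset.mem_insert.1 hC with rfl | hC' <;>
              rcases Finset.mem_insert.1 hD with rfl | hD'
            · exact absurd rfl hne
            · exact (hdisjS' (part_subset hπ'p hD')).symm
            · exact hdisjS' (part_subset hπ'p hC')
            · exact part_disj hπ'p hC' hD' hne
          · intro x hx
            by_cases hxB₀ : x ∈ B₀
            · exact ⟨B₀, Finset.mem_insert_self _ _, hxB₀⟩
            · obtain ⟨C, hC, hxC⟩ := part_cover hπ'p (Finset.mem_sdiff.2 ⟨hx, hxB₀⟩)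
              exact ⟨C, Finset.mem_insert_of_mem hC, hxC⟩
        · intro B hB
          by_cases hBB₀ : B = B₀
          · exact ⟨B₀, Finset.mem_insert_self _ _, hBB₀ ▸ Finset.Subset.refl B₀⟩
          · obtain ⟨C, hC, hBC⟩ := hbel' B (Finset.mem_erase.2 ⟨hBB₀, hB⟩)
            exact ⟨C, Finset.mem_insert_of_mem hC, hBC⟩
      · -- left inverse
        intro π hπ
        rw [Finset.mem_filter] at hπ
        exact Finset.insert_erase hπ.2
      · -- right inverse
        intro π' hπ'
        obtain ⟨hπ'p, -⟩ := hmemA'.1 hπ'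
        apply Finset.erase_insert
        intro hB₀π'
        exact hnotsub (part_subset hπ'p hB₀π')
      · -- values
        intro π hπ
        rw [Finset.mem_filter] at hπ
        congr 1
        rw [Finset.card_erase_of_mem hπ.2]
        have : 1 ≤ π.card := Finset.card_pos.2 ⟨B₀, hπ.2⟩
        omega
    -- Part A₂ : partitions where B₀ is strictly inside a block
    set Sig : Finset (Finset (Finset ι) × Finset ι) :=
      (A' ×ˢ S'.powerset).filter (fun p => p.2 ∈ p.1) with hSig
    have hmemSig : ∀ {p : Finset (Finset ι) × Finset ι},
        p ∈ Sig ↔ p.1 ∈ A' ∧ p.2 ∈ p.1 := by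
      intro p
      rw [hSig, Finset.mem_filter, Finset.mem_product]
      constructor
      · rintro ⟨⟨h1, -⟩, h2⟩; exact ⟨h1, h2⟩
      · rintro ⟨h1, h2⟩
        refine ⟨⟨h1, Finset.mem_powerset.2 ?_⟩, h2⟩
        exact part_subset (hmemA'.1 h1).1 h2
    have hA2 : ∑ π ∈ A.filter (fun π => B₀ ∉ π), wgt π.card
        = ∑ p ∈ Sig, wgt (p.1.card) := by
      apply Finset.sum_nbij'
        (fun π => (insert (blk π \ B₀) (π.erase (blk π)), blk π \ B₀))
        (fun p => insert (p.2 ∪ B₀) (p.1.erase p.2))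
      · -- forward into Sig
        intro π hπ
        rw [Finset.mem_filter] at hπ
        obtain ⟨hπA, hB₀π⟩ := hπ
        obtain ⟨hπp, hbel⟩ := hmemA.1 hπA
        obtain ⟨T, hT, hx₀T⟩ := part_cover hπp (hB₀S hx₀)
        have hblkT : blk π = T := hblk_eq hπp hT hx₀T
        obtain ⟨C', hC', hB₀C'⟩ := hbel B₀ hB₀
        have hC'T : C' = T := part_eq hπp hC' hT (hB₀C' hx₀) hx₀T
        have hB₀T : B₀ ⊆ T := hC'T ▸ hB₀C'
        have hTne : T ≠ B₀ := by rintro rfl; exact hB₀π hT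
        have hTdne : (T \ B₀).Nonempty := by
          rw [Finset.sdiff_nonempty]
          intro hsub
          exact hTne (le_antisymm hsub hB₀T)
        have hTd_not : T \ B₀ ∉ π.erase T := by
          intro hmem
          obtain ⟨y, hy⟩ := hTdne
          exact Finset.disjoint_left.1
            (part_disj hπp (Finset.mem_of_mem_erase hmem) hT (Finset.ne_of_mem_erase hmem))
            hy (Finset.sdiff_subset hy)
        rw [hblkT, hmemSig]
        refine ⟨hmemA'.2 ⟨?_, ?_⟩, Finset.mem_insert_self _ _⟩
        · apply mem_partitionsOf_of
          · intro C hC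
            rcases Finset.mem_insert.1 hC with rfl | hC'
            · intro x hx
              rw [Finset.mem_sdiff] at hx ⊢
              exact ⟨part_subset hπp hT hx.1, hx.2⟩
            · intro x hx
              rw [Finset.mem_sdiff]
              refine ⟨part_subset hπp (Finset.mem_of_mem_erase hC') hx, fun hxB₀ => ?_⟩
              exact Finset.disjoint_left.1
                (part_disj hπp (Finset.mem_of_mem_erase hC') hT (Finset.ne_of_mem_erase hC'))
                hx (hB₀T hxB₀)
          · intro C hC
            rcases Finset.mem_insert.1 hC with rfl | hC'
            · exact hTdne
            · exact part_nonempty hπp (Finset.mem_of_mem_erase hC')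
          · intro C hC D hD hne
            rcases Finset.mem_insert.1 hC with rfl | hC' <;>
              rcases Finset.mem_insert.1 hD with rfl | hD'
            · exact absurd rfl hne
            · exact Finset.disjoint_of_subset_left Finset.sdiff_subset
                (part_disj hπp hT (Finset.mem_of_mem_erase hD')
                  (Ne.symm (Finset.ne_of_mem_erase hD')))
            · exact Finset.disjoint_of_subset_right Finset.sdiff_subset
                (part_disj hπp (Finset.mem_of_mem_erase hC') hT (Finset.ne_of_mem_erase hC'))
            · exact part_disj hπp (Finset.mem_of_mem_erase hC') (Finset.mem_of_mem_erase hD') hne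
          · intro x hx
            have hxS : x ∈ S := Finset.sdiff_subset hx
            have hxB₀ : x ∉ B₀ := (Finset.mem_sdiff.1 hx).2
            obtain ⟨C, hC, hxC⟩ := part_cover hπp hxS
            by_cases hCT : C = T
            · exact ⟨T \ B₀, Finset.mem_insert_self _ _,
                Finset.mem_sdiff.2 ⟨hCT ▸ hxC, hxB₀⟩⟩
            · exact ⟨C, Finset.mem_insert_of_mem (Finset.mem_erase.2 ⟨hCT, hC⟩), hxC⟩
        · intro B hB
          have hBρ := Finset.mem_of_mem_erase hB
          obtain ⟨C, hC, hBC⟩ := hbel B hBρ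
          by_cases hCT : C = T
          · refine ⟨T \ B₀, Finset.mem_insert_self _ _, fun y hy => ?_⟩
            rw [Finset.mem_sdiff]
            refine ⟨hCT ▸ hBC hy, fun hyB₀ => ?_⟩
            exact Finset.disjoint_left.1
              (part_disj hρ hBρ hB₀ (Finset.ne_of_mem_erase hB)) hy hyB₀
          · exact ⟨C, Finset.mem_insert_of_mem (Finset.mem_erase.2 ⟨hCT, hC⟩), hBC⟩
      · -- backward into A₂
        rintro ⟨π', C⟩ hp
        obtain ⟨hπ'A, hCπ'⟩ := hmemSig.1 hp
        obtain ⟨hπ'p, hbel'⟩ := hmemA'.1 hπ'A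
        have hCS' : C ⊆ S' := part_subset hπ'p hCπ'
        have hCB₀ : Disjoint C B₀ := hdisjS' hCS'
        rw [Finset.mem_filter]
        constructor
        · apply hmemA.2
          constructor
          · apply mem_partitionsOf_of
            · intro D hD
              rcases Finset.mem_insert.1 hD with rfl | hD'
              · exact Finset.union_subset (hCS'.trans Finset.sdiff_subset) hB₀S
              · exact (part_subset hπ'p (Finset.mem_of_mem_erase hD')).trans
                  Finset.sdiff_subset
            · intro D hD
              rcases Finset.mem_insert.1 hD with rfl | hD'
              · exact ⟨x₀, Finset.mem_union_right _ hx₀⟩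
              · exact part_nonempty hπ'p (Finset.mem_of_mem_erase hD')
            · intro D hD E hE hne
              rcases Finset.mem_insert.1 hD with rfl | hD' <;>
                rcases Finset.mem_insert.1 hE with rfl | hE'
              · exact absurd rfl hne
              · refine Finset.disjoint_union_left.2 ⟨?_, ?_⟩
                · exact part_disj hπ'p hCπ' (Finset.mem_of_mem_erase hE')
                    (Ne.symm (Finset.ne_of_mem_erase hE'))
                · exact (hdisjS' (part_subset hπ'p (Finset.mem_of_mem_erase hE'))).symm
              · refine Finset.disjoint_union_right.2 ⟨?_, ?_⟩
                · exact part_disj hπ'p (Finset.mem_of_mem_erase hD') hCπ'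
                    (Finset.ne_of_mem_erase hD')
                · exact hdisjS' (part_subset hπ'p (Finset.mem_of_mem_erase hD'))
              · exact part_disj hπ'p (Finset.mem_of_mem_erase hD')
                  (Finset.mem_of_mem_erase hE') hne
            · intro x hx
              by_cases hxB₀ : x ∈ B₀
              · exact ⟨C ∪ B₀, Finset.mem_insert_self _ _, Finset.mem_union_right _ hxB₀⟩
              · obtain ⟨D, hD, hxD⟩ := part_cover hπ'p (Finset.mem_sdiff.2 ⟨hx, hxB₀⟩)
                by_cases hDC : D = C
                · exact ⟨C ∪ B₀, Finset.mem_insert_self _ _,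
                    Finset.mem_union_left _ (hDC ▸ hxD)⟩
                · exact ⟨D, Finset.mem_insert_of_mem (Finset.mem_erase.2 ⟨hDC, hD⟩), hxD⟩
          · intro B hB
            by_cases hBB₀ : B = B₀
            · exact ⟨C ∪ B₀, Finset.mem_insert_self _ _,
                hBB₀ ▸ Finset.subset_union_right⟩
            · obtain ⟨D, hD, hBD⟩ := hbel' B (Finset.mem_erase.2 ⟨hBB₀, hB⟩)
              by_cases hDC : D = C
              · exact ⟨C ∪ B₀, Finset.mem_insert_self _ _,
                  (hDC ▸ hBD).trans Finset.subset_union_left⟩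
              · exact ⟨D, Finset.mem_insert_of_mem (Finset.mem_erase.2 ⟨hDC, hD⟩), hBD⟩
        · -- B₀ not a block
          intro hB₀mem
          rcases Finset.mem_insert.1 hB₀mem with heq | hmem
          · obtain ⟨y, hy⟩ := part_nonempty hπ'p hCπ'
            have : y ∈ B₀ := heq ▸ Finset.mem_union_left _ hy
            exact Finset.disjoint_left.1 hCB₀ hy this
          · exact hnotsub (part_subset hπ'p (Finset.mem_of_mem_erase hmem))
      · -- left inverse
        intro π hπ
        rw [Finset.mem_filter] at hπ
        obtain ⟨hπA, hB₀π⟩ := hπ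
        obtain ⟨hπp, hbel⟩ := hmemA.1 hπA
        obtain ⟨T, hT, hx₀T⟩ := part_cover hπp (hB₀S hx₀)
        have hblkT : blk π = T := hblk_eq hπp hT hx₀T
        obtain ⟨C', hC', hB₀C'⟩ := hbel B₀ hB₀
        have hC'T : C' = T := part_eq hπp hC' hT (hB₀C' hx₀) hx₀T
        have hB₀T : B₀ ⊆ T := hC'T ▸ hB₀C'
        have hTne : T ≠ B₀ := by rintro rfl; exact hB₀π hT
        have hTdne : (T \ B₀).Nonempty := by
          rw [Finset.sdiff_nonempty]
          intro hsub
          exact hTne (le_antisymm hsub hB₀T)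
        have hTd_not : T \ B₀ ∉ π.erase T := by
          intro hmem
          obtain ⟨y, hy⟩ := hTdne
          exact Finset.disjoint_left.1
            (part_disj hπp (Finset.mem_of_mem_erase hmem) hT (Finset.ne_of_mem_erase hmem))
            hy (Finset.sdiff_subset hy)
        simp only [hblkT]
        rw [Finset.erase_insert hTd_not, Finset.sdiff_union_of_subset hB₀T,
          Finset.insert_erase hT]
      · -- right inverse
        rintro ⟨π', C⟩ hp
        obtain ⟨hπ'A, hCπ'⟩ := hmemSig.1 hp
        obtain ⟨hπ'p, hbel'⟩ := hmemA'.1 hπ'A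
        have hCS' : C ⊆ S' := part_subset hπ'p hCπ'
        have hCB₀ : Disjoint C B₀ := hdisjS' hCS'
        have hCuB : (C ∪ B₀) \ B₀ = C := by
          ext x
          rw [Finset.mem_sdiff, Finset.mem_union]
          constructor
          · rintro ⟨hx1 | hx1, hx2⟩
            · exact hx1
            · exact absurd hx1 hx2
          · intro hx
            exact ⟨Or.inl hx, Finset.disjoint_left.1 hCB₀ hx⟩
        have hπn : insert (C ∪ B₀) (π'.erase C) ∈ partitionsOf S := by
          apply mem_partitionsOf_of
          · intro D hD
            rcases Finset.mem_insert.1 hD with rfl | hD'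
            · exact Finset.union_subset (hCS'.trans Finset.sdiff_subset) hB₀S
            · exact (part_subset hπ'p (Finset.mem_of_mem_erase hD')).trans
                Finset.sdiff_subset
          · intro D hD
            rcases Finset.mem_insert.1 hD with rfl | hD'
            · exact ⟨x₀, Finset.mem_union_right _ hx₀⟩
            · exact part_nonempty hπ'p (Finset.mem_of_mem_erase hD')
          · intro D hD E hE hne
            rcases Finset.mem_insert.1 hD with rfl | hD' <;>
              rcases Finset.mem_insert.1 hE with rfl | hE'
            · exact absurd rfl hne
            · refine Finset.disjoint_union_left.2 ⟨?_, ?_⟩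
              · exact part_disj hπ'p hCπ' (Finset.mem_of_mem_erase hE')
                  (Ne.symm (Finset.ne_of_mem_erase hE'))
              · exact (hdisjS' (part_subset hπ'p (Finset.mem_of_mem_erase hE'))).symm
            · refine Finset.disjoint_union_right.2 ⟨?_, ?_⟩
              · exact part_disj hπ'p (Finset.mem_of_mem_erase hD') hCπ'
                  (Finset.ne_of_mem_erase hD')
              · exact hdisjS' (part_subset hπ'p (Finset.mem_of_mem_erase hD'))
            · exact part_disj hπ'p (Finset.mem_of_mem_erase hD')
                (Finset.mem_of_mem_erase hE') hne
          · intro x hx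
            by_cases hxB₀ : x ∈ B₀
            · exact ⟨C ∪ B₀, Finset.mem_insert_self _ _, Finset.mem_union_right _ hxB₀⟩
            · obtain ⟨D, hD, hxD⟩ := part_cover hπ'p (Finset.mem_sdiff.2 ⟨hx, hxB₀⟩)
              by_cases hDC : D = C
              · exact ⟨C ∪ B₀, Finset.mem_insert_self _ _,
                  Finset.mem_union_left _ (hDC ▸ hxD)⟩
              · exact ⟨D, Finset.mem_insert_of_mem (Finset.mem_erase.2 ⟨hDC, hD⟩), hxD⟩
        have hblkn : blk (insert (C ∪ B₀) (π'.erase C)) = C ∪ B₀ :=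
          hblk_eq hπn (Finset.mem_insert_self _ _) (Finset.mem_union_right _ hx₀)
        have hCuB_not : C ∪ B₀ ∉ π'.erase C := by
          intro hmem
          exact hnotsub ((Finset.subset_union_right).trans
            (part_subset hπ'p (Finset.mem_of_mem_erase hmem)))
        have h1 : (insert (C ∪ B₀) (π'.erase C)).erase (blk (insert (C ∪ B₀) (π'.erase C)))
            = π'.erase C := by
          rw [hblkn, Finset.erase_insert hCuB_not]
        simp only [hblkn, hCuB]
        rw [Finset.erase_insert hCuB_not, Finset.insert_erase hCπ']
      · -- values
        intro π hπ
        rw [Finset.mem_filter] at hπ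
        obtain ⟨hπA, hB₀π⟩ := hπ
        obtain ⟨hπp, hbel⟩ := hmemA.1 hπA
        obtain ⟨T, hT, hx₀T⟩ := part_cover hπp (hB₀S hx₀)
        have hblkT : blk π = T := hblk_eq hπp hT hx₀T
        obtain ⟨C', hC', hB₀C'⟩ := hbel B₀ hB₀
        have hC'T : C' = T := part_eq hπp hC' hT (hB₀C' hx₀) hx₀T
        have hB₀T : B₀ ⊆ T := hC'T ▸ hB₀C'
        have hTne : T ≠ B₀ := by rintro rfl; exact hB₀π hT
        have hTdne : (T \ B₀).Nonempty := by
          rw [Finset.sdiff_nonempty]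
          intro hsub
          exact hTne (le_antisymm hsub hB₀T)
        have hTd_not : T \ B₀ ∉ π.erase T := by
          intro hmem
          obtain ⟨y, hy⟩ := hTdne
          exact Finset.disjoint_left.1
            (part_disj hπp (Finset.mem_of_mem_erase hmem) hT (Finset.ne_of_mem_erase hmem))
            hy (Finset.sdiff_subset hy)
        simp only [hblkT]
        congr 1
        rw [Finset.card_insert_of_notMem hTd_not, Finset.card_erase_of_mem hT]
        have : 1 ≤ π.card := Finset.card_pos.2 ⟨T, hT⟩
        omega
    -- combine
    have hSigsum : ∑ p ∈ Sig, wgt (p.1.card)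
        = ∑ π' ∈ A', (π'.card : ℂ) * wgt π'.card := by
      rw [Finset.sum_finset_product Sig A' (fun π' => π')
        (fun p => by rw [hmemSig])]
      apply Finset.sum_congr rfl
      intro π' hπ'
      simp only [Finset.sum_const, nsmul_eq_mul]
    have htot : ∑ π ∈ A, wgt π.card
        = (∑ π ∈ A.filter (fun π => B₀ ∈ π), wgt π.card)
          + ∑ π ∈ A.filter (fun π => B₀ ∉ π), wgt π.card :=
      (Finset.sum_filter_add_sum_filter_not A _ _).symm
    rw [htot, hA1, hA2, hSigsum, ← Finset.sum_add_distrib]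
    apply Finset.sum_eq_zero
    intro π' hπ'
    obtain ⟨hπ'p, -⟩ := hmemA'.1 hπ'
    have hpos : 1 ≤ π'.card := part_card_pos hπ'p hS'ne
    have := wgt_cancel hpos
    rw [add_comm] at this
    exact this
end QF3
namespace QF4
open QF QF2 QF3
variable {ι : Type*} [DecidableEq ι]

lemma erg_empty {x y : ι} (h : erg (∅ : Finset (Finset ι)) x y) : x = y := by
  induction h with
  | rel a b hab => obtain ⟨δ, hδ, -⟩ := hab; exact absurd hδ (Finset.notMem_empty δ)
  | refl a => rfl
  | symm a b _ ih => exact ih.symm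
  | trans a b c _ _ ih1 ih2 => exact ih1.trans ih2

lemma conn_empty {S : Finset ι} (hconn : conn S (∅ : Finset (Finset ι))) : S.card = 1 := by
  have himg : compPart S (∅ : Finset (Finset ι)) = S.image (fun x => {x}) := by
    apply Finset.image_congr
    intro x hx
    ext y
    rw [mem_comp, Finset.mem_singleton]
    constructor
    · rintro ⟨-, h⟩; exact (erg_empty h).symm
    · rintro rfl; exact ⟨hx, erg_refl _ _⟩
  have hcard : (compPart S (∅ : Finset (Finset ι))).card = S.card := by
    rw [himg]
    apply Finset.card_image_of_injOn
    intro x _ y _ hxy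
    simpa using hxy
  rw [← hcard]; exact hconn

/-- the key combinatorial inequality : a connecting family needs total weight
`card S - 1`. -/
lemma conn_card_le : ∀ (n : ℕ) (F : Finset (Finset ι)) (S : Finset ι), F.card ≤ n →
    F ⊆ S.powerset.erase ∅ → conn S F → S.card ≤ (∑ δ ∈ F, (δ.card - 1)) + 1 := by
  intro n
  induction n with
  | zero =>
    intro F S hcard hF hconn
    have : F = ∅ := Finset.card_eq_zero.1 (Nat.le_zero.1 hcard)
    subst this
    simp [conn_empty hconn]
  | succ n ih =>
    intro F S hcard hF hconn
    rcases Finset.eq_empty_or_nonempty F with rfl | ⟨δ₀, hδ₀⟩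
    · simp [conn_empty hconn]
    have hδ₀S : δ₀ ⊆ S := Finset.mem_powerset.1 (Finset.mem_of_mem_erase (hF hδ₀))
    have hδ₀ne : δ₀ ≠ ∅ := Finset.ne_of_mem_erase (hF hδ₀)
    have hδ₀pos : 1 ≤ δ₀.card := Finset.card_pos.2 (Finset.nonempty_iff_ne_empty.2 hδ₀ne)
    set F' : Finset (Finset ι) := F.erase δ₀ with hF'def
    have hF'sub : F' ⊆ S.powerset.erase ∅ := (Finset.erase_subset δ₀ F).trans hF
    have hF'card : F'.card ≤ n := by
      rw [hF'def, Finset.card_erase_of_mem hδ₀]; omega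
    have hF'S : ∀ δ ∈ F', δ ⊆ S :=
      fun δ hδ => Finset.mem_powerset.1 (Finset.mem_of_mem_erase (hF'sub hδ))
    set ρ' : Finset (Finset ι) := compPart S F' with hρ'def
    have hρ'mem : ρ' ∈ partitionsOf S := compPart_mem S F'
    by_cases hρ1 : ρ'.card = 1
    · -- F' already connects S
      have := ih F' S hF'card hF'sub hρ1
      have hsum : ∑ δ ∈ F', (δ.card - 1) ≤ ∑ δ ∈ F, (δ.card - 1) :=
        Finset.sum_le_sum_of_subset (Finset.erase_subset δ₀ F)
      omega
    -- every component of F' meets δ₀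
    obtain ⟨y₁, hy₁⟩ := Finset.nonempty_iff_ne_empty.2 hδ₀ne
    have hSne : S.Nonempty := ⟨y₁, hδ₀S hy₁⟩
    have hmeet : ∀ B ∈ ρ', ∃ y, y ∈ δ₀ ∧ y ∈ B := by
      intro B hB
      by_contra hnone
      push_neg at hnone
      obtain ⟨x, hxS, rfl⟩ := Finset.mem_image.1 hB
      -- B = comp S F' x is closed under erg F
      have hcompeq : comp S F x = comp S F' x := by
        apply Finset.Subset.antisymm
        · intro z hz
          obtain ⟨hzS, hzerg⟩ := mem_comp.1 hz
          have hinsert : insert δ₀ F' = F := Finset.insert_erase hδ₀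
          have hdisj : ∀ y, erg F' x y → y ∉ δ₀ := by
            intro y hy hyδ₀
            exact hnone y hyδ₀ (mem_comp.2 ⟨hδ₀S hyδ₀, hy⟩)
          exact mem_comp.2 ⟨hzS, erg_avoid hdisj (hinsert ▸ hzerg)⟩
        · intro z hz
          obtain ⟨hzS, hzerg⟩ := mem_comp.1 hz
          exact mem_comp.2 ⟨hzS, erg_mono (Finset.erase_subset δ₀ F) hzerg⟩
      have hcompF : comp S F x ∈ compPart S F := Finset.mem_image_of_mem _ hxS
      rw [compPart_eq_top hconn hSne, Finset.mem_singleton] at hcompF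
      have hBS : comp S F' x = S := by rw [← hcompeq, hcompF]
      -- then ρ' = {S}, contradicting hρ1
      have : ρ' = {S} := by
        apply eq_top_of_top_subset hρ'mem (hρ'def ▸ hB)
        rw [hBS]
      rw [this] at hρ1
      simp at hρ1
    have hρ'le : ρ'.card ≤ δ₀.card := by
      obtain ⟨y₀, hy₀⟩ := hSne
      have hch : ∀ B : Finset ι, ∃ y, B ∈ ρ' → (y ∈ δ₀ ∧ y ∈ B) := by
        intro B
        by_cases hB : B ∈ ρ'
        · obtain ⟨y, hy1, hy2⟩ := hmeet B hB
          exact ⟨y, fun _ => ⟨hy1, hy2⟩⟩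
        · exact ⟨y₀, fun h => absurd h hB⟩
      choose f hf using hch
      apply Finset.card_le_card_of_injOn f
      · intro B hB; exact (hf B hB).1
      · intro B hB B' hB' heq
        rw [Finset.mem_coe] at hB hB'
        apply part_eq hρ'mem hB hB' (hf B hB).2
        rw [heq]; exact (hf B' hB').2
    -- each component is connected by its restricted family
    have hIH : ∀ B ∈ ρ', B.card ≤ (∑ δ ∈ F'.filter (· ⊆ B), (δ.card - 1)) + 1 := by
      intro B hB
      obtain ⟨x, hxS, rfl⟩ := Finset.mem_image.1 hB
      set B := comp S F' x with hBdef
      apply ih (F'.filter (· ⊆ B)) B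
      · calc (F'.filter (· ⊆ B)).card ≤ F'.card := Finset.card_le_card (Finset.filter_subset _ _)
        _ ≤ n := hF'card
      · intro δ hδ
        rw [Finset.mem_filter] at hδ
        rw [Finset.mem_erase, Finset.mem_powerset]
        exact ⟨Finset.ne_of_mem_erase (hF'sub hδ.1), hδ.2⟩
      · -- conn B (F'.filter (· ⊆ B))
        have hcomp_all : ∀ y ∈ B, comp B (F'.filter (· ⊆ B)) y = B := by
          intro y hy
          apply Finset.Subset.antisymm (Finset.filter_subset _ _)
          intro z hz
          have hyz : erg F' y z :=
            erg_trans (erg_symm (mem_comp.1 hy).2) (mem_comp.1 hz).2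
          have := (erg_restrict hF'S hxS hyz).1 hy
          exact mem_comp.2 ⟨hz, this.2⟩
        unfold conn compPart
        rw [Finset.card_eq_one]
        refine ⟨B, Finset.Subset.antisymm ?_ ?_⟩
        · intro D hD
          obtain ⟨y, hy, rfl⟩ := Finset.mem_image.1 hD
          rw [hcomp_all y hy]; exact Finset.mem_singleton_self B
        · intro D hD
          rw [Finset.mem_singleton] at hD
          rw [hD]
          exact Finset.mem_image.2 ⟨x, mem_comp_self hxS, hcomp_all x (mem_comp_self hxS)⟩
    -- sum everything
    have hdouble : ∑ B ∈ ρ', ∑ δ ∈ F'.filter (· ⊆ B), (δ.card - 1)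
        ≤ ∑ δ ∈ F', (δ.card - 1) := by
      have hpd : (↑ρ' : Set (Finset ι)).PairwiseDisjoint
          (fun B => F'.filter (· ⊆ B)) := by
        intro B hB B' hB' hne
        apply Finset.disjoint_left.2
        intro δ hδ1 hδ2
        rw [Finset.mem_filter] at hδ1 hδ2
        obtain ⟨w, hw⟩ := Finset.nonempty_iff_ne_empty.2 (Finset.ne_of_mem_erase (hF'sub hδ1.1))
        exact hne (part_eq hρ'mem (Finset.mem_coe.1 hB) (Finset.mem_coe.1 hB')
          (hδ1.2 hw) (hδ2.2 hw))
      rw [← Finset.sum_biUnion hpd]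
      apply Finset.sum_le_sum_of_subset
      intro δ hδ
      rw [Finset.mem_biUnion] at hδ
      obtain ⟨B, -, hδB⟩ := hδ
      exact (Finset.filter_subset _ _) hδB
    have hcards : ∑ B ∈ ρ', B.card = S.card := part_sum_card hρ'mem
    have hstep : S.card ≤ (∑ δ ∈ F', (δ.card - 1)) + ρ'.card := by
      calc S.card = ∑ B ∈ ρ', B.card := hcards.symm
        _ ≤ ∑ B ∈ ρ', ((∑ δ ∈ F'.filter (· ⊆ B), (δ.card - 1)) + 1) :=
            Finset.sum_le_sum hIH
        _ = (∑ B ∈ ρ', ∑ δ ∈ F'.filter (· ⊆ B), (δ.card - 1)) + ρ'.card := by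
            rw [Finset.sum_add_distrib, Finset.sum_const, smul_eq_mul, mul_one]
        _ ≤ (∑ δ ∈ F', (δ.card - 1)) + ρ'.card := by omega
    have hsumF : ∑ δ ∈ F, (δ.card - 1) = (δ₀.card - 1) + ∑ δ ∈ F', (δ.card - 1) :=
      (Finset.add_sum_erase F _ hδ₀).symm
    omega

end QF4
namespace QF5
open QF QF2 QF3 QF4
variable {ι : Type*} [DecidableEq ι]

lemma prod_one_add {α : Type*} [DecidableEq α] (s : Finset α) (u : α → ℂ) :
    ∏ i ∈ s, (u i + 1) = ∑ F ∈ s.powerset, ∏ δ ∈ F, u δ := by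
  rw [Finset.prod_add]
  exact Finset.sum_congr rfl (fun t ht => by rw [Finset.prod_const_one, mul_one])

lemma mobius_conn {S : Finset ι} (hS : S.Nonempty) {F : Finset (Finset ι)}
    (hF : F ⊆ S.powerset.erase ∅) :
    ∑ π ∈ (partitionsOf S).filter (fun π => below F π), wgt π.card
      = if conn S F then 1 else 0 := by
  have hfil : (partitionsOf S).filter (fun π => below F π)
      = (partitionsOf S).filter (fun π => below (compPart S F) π) :=
    Finset.filter_congr (fun π hπ => below_compPart_iff hπ hF)
  rw [hfil, mobius_sum (compPart_mem S F) hS]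
  by_cases h : (compPart S F).card = 1 <;> simp [conn, h]

lemma master {S : Finset ι} (hS : S.Nonempty) (u : Finset ι → ℂ) (hu : u ∅ = 0) :
    cumulantOn S (fun Δ => ∏ δ ∈ Δ.powerset, (u δ + 1))
      = ∑ F ∈ (S.powerset.erase ∅).powerset.filter (fun F => conn S F),
          ∏ δ ∈ F, u δ := by
  have hprod : ∀ π ∈ partitionsOf S,
      ∏ C ∈ π, ∏ δ ∈ C.powerset, (u δ + 1)
        = ∑ F ∈ (S.powerset.erase ∅).powerset,
            (if below F π then ∏ δ ∈ F, u δ else 0) := by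
    intro π hπ
    have h1 : ∀ C ∈ π, ∏ δ ∈ C.powerset, (u δ + 1)
        = ∏ δ ∈ C.powerset.erase ∅, (u δ + 1) := by
      intro C _
      rw [← Finset.mul_prod_erase _ _ (Finset.empty_mem_powerset C), hu, zero_add, one_mul]
    rw [Finset.prod_congr rfl h1]
    have hdisj : (↑π : Set (Finset ι)).PairwiseDisjoint
        (fun C => C.powerset.erase ∅) := by
      intro C hC D hD hne
      apply Finset.disjoint_left.2
      intro δ hδ1 hδ2
      rw [Finset.mem_erase, Finset.mem_powerset] at hδ1 hδ2
      obtain ⟨y, hy⟩ := Finset.nonempty_iff_ne_empty.2 hδ1.1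
      exact hne (part_eq hπ (Finset.mem_coe.1 hC) (Finset.mem_coe.1 hD)
        (hδ1.2 hy) (hδ2.2 hy))
    rw [← Finset.prod_biUnion hdisj, prod_one_add]
    have hset : (π.biUnion (fun C => C.powerset.erase ∅)).powerset
        = (S.powerset.erase ∅).powerset.filter (fun F => below F π) := by
      ext F
      rw [Finset.mem_powerset, Finset.mem_filter, Finset.mem_powerset]
      constructor
      · intro hFsub
        constructor
        · intro δ hδ
          obtain ⟨C, hC, hδC⟩ := Finset.mem_biUnion.1 (hFsub hδ)
          rw [Finset.mem_erase, Finset.mem_powerset] at hδC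
          rw [Finset.mem_erase, Finset.mem_powerset]
          exact ⟨hδC.1, hδC.2.trans (part_subset hπ hC)⟩
        · intro δ hδ
          obtain ⟨C, hC, hδC⟩ := Finset.mem_biUnion.1 (hFsub hδ)
          rw [Finset.mem_erase, Finset.mem_powerset] at hδC
          exact ⟨C, hC, hδC.2⟩
      · rintro ⟨hFsub, hbel⟩
        intro δ hδ
        obtain ⟨C, hC, hδC⟩ := hbel δ hδ
        have := hFsub hδ
        rw [Finset.mem_erase] at this
        exact Finset.mem_biUnion.2 ⟨C, hC, Finset.mem_erase.2 ⟨this.1,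
          Finset.mem_powerset.2 hδC⟩⟩
    rw [hset, Finset.sum_filter]
  unfold cumulantOn
  have hre : ∀ π ∈ partitionsOf S,
      (-1 : ℂ) ^ (π.card - 1) * ((π.card - 1).factorial : ℂ)
          * ∏ C ∈ π, ((fun Δ => ∏ δ ∈ Δ.powerset, (u δ + 1)) C)
        = ∑ F ∈ (S.powerset.erase ∅).powerset,
            (if below F π then wgt π.card * ∏ δ ∈ F, u δ else 0) := by
    intro π hπ
    have : ∏ C ∈ π, ((fun Δ => ∏ δ ∈ Δ.powerset, (u δ + 1)) C)
        = ∏ C ∈ π, ∏ δ ∈ C.powerset, (u δ + 1) := rfl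
    rw [this, hprod π hπ, Finset.mul_sum]
    apply Finset.sum_congr rfl
    intro F hF
    rw [mul_ite, mul_zero]
    rfl
  rw [Finset.sum_congr rfl hre, Finset.sum_comm]
  have hinner : ∀ F ∈ (S.powerset.erase ∅).powerset,
      ∑ π ∈ partitionsOf S, (if below F π then wgt π.card * ∏ δ ∈ F, u δ else 0)
        = if conn S F then ∏ δ ∈ F, u δ else 0 := by
    intro F hF
    rw [← Finset.sum_filter, ← Finset.sum_mul,
      mobius_conn hS (Finset.mem_powerset.1 hF)]
    by_cases h : conn S F <;> simp [h]
  rw [Finset.sum_congr rfl hinner, ← Finset.sum_filter]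

end QF5
namespace QF6
open QF QF2 QF3 QF4 QF5
variable {ι : Type*} [DecidableEq ι]

lemma zpow_sum' {α : Type*} (x : ℝ) (hx : x ≠ 0) (F : Finset α) (f : α → ℤ) :
    x ^ (∑ i ∈ F, f i) = ∏ i ∈ F, x ^ f i := by
  classical
  induction F using Finset.cons_induction with
  | empty => simp
  | cons a s ha ih => rw [Finset.sum_cons, Finset.prod_cons, zpow_add₀ hx, ih]

lemma core_bound {F : Finset (Finset ι)} (c : Finset ι → ℝ) (hc0 : ∀ δ, 0 ≤ c δ)
    (v : Finset ι → ℂ) {N : ℕ} (hN : 1 ≤ N)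
    (hb : ∀ δ ∈ F, ‖v δ‖ ≤ c δ * (N : ℝ) ^ (1 - (δ.card : ℤ)))
    {e : ℤ} (he : ∑ δ ∈ F, (1 - (δ.card : ℤ)) ≤ e) :
    ‖∏ δ ∈ F, v δ‖ ≤ (∏ δ ∈ F, c δ) * (N : ℝ) ^ e := by
  have hN1 : (1 : ℝ) ≤ (N : ℝ) := by exact_mod_cast hN
  have hNne : (N : ℝ) ≠ 0 := by positivity
  have h1 : ‖∏ δ ∈ F, v δ‖ ≤ ∏ δ ∈ F, (c δ * (N : ℝ) ^ (1 - (δ.card : ℤ))) := by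
    rw [norm_prod]
    exact Finset.prod_le_prod (fun δ _ => norm_nonneg _) (fun δ hδ => hb δ hδ)
  have h2 : ∏ δ ∈ F, (c δ * (N : ℝ) ^ (1 - (δ.card : ℤ)))
      = (∏ δ ∈ F, c δ) * (N : ℝ) ^ (∑ δ ∈ F, (1 - (δ.card : ℤ))) := by
    rw [Finset.prod_mul_distrib, zpow_sum' _ hNne]
  have h3 : (N : ℝ) ^ (∑ δ ∈ F, (1 - (δ.card : ℤ))) ≤ (N : ℝ) ^ e :=
    zpow_le_zpow_right₀ hN1 he
  calc ‖∏ δ ∈ F, v δ‖ ≤ (∏ δ ∈ F, c δ) * (N : ℝ) ^ (∑ δ ∈ F, (1 - (δ.card : ℤ))) := by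
        rw [← h2]; exact h1
    _ ≤ (∏ δ ∈ F, c δ) * (N : ℝ) ^ e :=
        mul_le_mul_of_nonneg_left h3 (Finset.prod_nonneg (fun δ _ => hc0 δ))

lemma conn_exp {Δ : Finset ι} {F : Finset (Finset ι)} (hF : F ⊆ Δ.powerset.erase ∅)
    (hconn : conn Δ F) : ∑ δ ∈ F, (1 - (δ.card : ℤ)) ≤ 1 - (Δ.card : ℤ) := by
  have h := conn_card_le F.card F Δ le_rfl hF hconn
  have h1 : ∀ δ ∈ F, 1 ≤ δ.card := fun δ hδ =>
    Finset.card_pos.2 (Finset.nonempty_iff_ne_empty.2 (Finset.ne_of_mem_erase (hF hδ)))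
  have h2 : ((∑ δ ∈ F, (δ.card - 1) : ℕ) : ℤ) = ∑ δ ∈ F, ((δ.card : ℤ) - 1) := by
    rw [Nat.cast_sum]
    exact Finset.sum_congr rfl (fun δ hδ => Nat.cast_sub (h1 δ hδ))
  have h3 : (Δ.card : ℤ) ≤ (∑ δ ∈ F, ((δ.card : ℤ) - 1)) + 1 := by
    rw [← h2]
    exact_mod_cast h
  have h4 : ∑ δ ∈ F, (1 - (δ.card : ℤ)) = - ∑ δ ∈ F, ((δ.card : ℤ) - 1) := by
    rw [← Finset.sum_neg_distrib]
    exact Finset.sum_congr rfl (fun δ _ => by ring)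
  omega

lemma fam_bound {Δ : Finset ι} {F : Finset (Finset ι)} (hF : F ⊆ Δ.powerset.erase ∅)
    (c : Finset ι → ℝ) (hc0 : ∀ δ, 0 ≤ c δ) (v : Finset ι → ℂ)
    (hv1 : ∀ δ ∈ F, δ.card = 1 → v δ = 0)
    {N : ℕ} (hN : 1 ≤ N)
    (hb : ∀ δ ∈ F, 2 ≤ δ.card → ‖v δ‖ ≤ c δ * (N : ℝ) ^ (1 - (δ.card : ℤ)))
    {e : ℤ} (he : (∀ δ ∈ F, 2 ≤ δ.card) → ∑ δ ∈ F, (1 - (δ.card : ℤ)) ≤ e) :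
    ‖∏ δ ∈ F, v δ‖ ≤ (∏ δ ∈ F, c δ) * (N : ℝ) ^ e := by
  by_cases hsing : ∃ δ ∈ F, δ.card = 1
  · obtain ⟨δ₀, hδ₀, hc1⟩ := hsing
    rw [Finset.prod_eq_zero hδ₀ (hv1 δ₀ hδ₀ hc1), norm_zero]
    have : (0:ℝ) < (N:ℝ) ^ e := zpow_pos (by positivity) e
    exact mul_nonneg (Finset.prod_nonneg fun δ _ => hc0 δ) this.le
  · push_neg at hsing
    have hall : ∀ δ ∈ F, 2 ≤ δ.card := by
      intro δ hδ
      have h1 : 1 ≤ δ.card := Finset.card_pos.2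
        (Finset.nonempty_iff_ne_empty.2 (Finset.ne_of_mem_erase (hF hδ)))
      have := hsing δ hδ
      omega
    exact core_bound c hc0 v hN (fun δ hδ => hb δ hδ (hall δ hδ)) (he hall)

end QF6


/-- Lemma 2.2 (general criterion for small cumulants): for sequences of (complex-valued)
random variables with expectation 1 and nonzero joint moments, the quasi-factorization
property (I) is equivalent to the small cumulant property (II).  The family `U` is the
unique family satisfying `Π_{δ ⊆ Δ} U_δ = M_Δ`. -/
theorem quasi_factorization_iff_small_cumulants
    {Ω : Type} [MeasurableSpace Ω] (μ : MeasureTheory.Measure Ω)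
    [MeasureTheory.IsProbabilityMeasure μ]
    (ℓ : ℕ) (A : ℕ → Fin ℓ → Ω → ℂ)
    (hint : ∀ (N : ℕ) (Δ : Finset (Fin ℓ)),
      MeasureTheory.Integrable (fun ω => ∏ j ∈ Δ, A N j ω) μ)
    (hmean : ∀ (N : ℕ) (j : Fin ℓ), (∫ ω, A N j ω ∂μ) = 1)
    (M : ℕ → Finset (Fin ℓ) → ℂ)
    (hM : ∀ (N : ℕ) (Δ : Finset (Fin ℓ)), M N Δ = ∫ ω, ∏ j ∈ Δ, A N j ω ∂μ)
    (hMne : ∀ (N : ℕ) (Δ : Finset (Fin ℓ)), M N Δ ≠ 0)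
    (U : ℕ → Finset (Fin ℓ) → ℂ)
    (hU : ∀ (N : ℕ) (Δ : Finset (Fin ℓ)), ∏ δ ∈ Δ.powerset, U N δ = M N Δ) :
    ((∀ Δ : Finset (Fin ℓ), 2 ≤ Δ.card → ∃ C : ℝ, ∀ N : ℕ, 1 ≤ N →
        ‖U N Δ - 1‖ ≤ C * (N : ℝ) ^ (1 - (Δ.card : ℤ))) ↔
      (∀ Δ : Finset (Fin ℓ), 2 ≤ Δ.card → ∃ C : ℝ, ∀ N : ℕ, 1 ≤ N →
        ‖cumulantOn Δ (M N)‖ ≤ C * (N : ℝ) ^ (1 - (Δ.card : ℤ)))) := by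
  classical
  have hM1 : ∀ N : ℕ, M N ∅ = 1 := by
    intro N
    rw [hM]
    simp
  have hUe : ∀ N : ℕ, U N (∅ : Finset (Fin ℓ)) = 1 := by
    intro N
    have h := hU N ∅
    rwa [Finset.powerset_empty, Finset.prod_singleton, hM1 N] at h
  have hUs : ∀ (N : ℕ) (j : Fin ℓ), U N {j} = 1 := by
    intro N j
    have h := hU N {j}
    have hps : ({j} : Finset (Fin ℓ)).powerset = {∅, {j}} := by
      ext s
      simp [Finset.subset_singleton_iff]
    rw [hps, Finset.prod_pair (Ne.symm (Finset.singleton_ne_empty j)), hUe N, one_mul] at h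
    rw [h, hM]
    have : (fun ω => ∏ j' ∈ ({j} : Finset (Fin ℓ)), A N j' ω) = fun ω => A N j ω := by
      funext ω; rw [Finset.prod_singleton]
    rw [this]
    exact hmean N j
  have hu1 : ∀ (N : ℕ) (δ : Finset (Fin ℓ)), δ.card = 1 → U N δ - 1 = 0 := by
    intro N δ hδ
    obtain ⟨j, rfl⟩ := Finset.card_eq_one.1 hδ
    rw [hUs N j, sub_self]
  have hmaster : ∀ (N : ℕ) (Δ : Finset (Fin ℓ)), Δ.Nonempty →
      cumulantOn Δ (M N) = ∑ F ∈ (Δ.powerset.erase ∅).powerset.filter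
        (fun F => QF2.conn Δ F), ∏ δ ∈ F, (U N δ - 1) := by
    intro N Δ hΔ
    have hfun : (fun Δ' : Finset (Fin ℓ) =>
        ∏ δ ∈ Δ'.powerset, ((U N δ - 1) + 1)) = M N := by
      funext Δ'
      rw [← hU N Δ']
      exact Finset.prod_congr rfl (fun δ _ => by ring)
    rw [← hfun]
    exact QF5.master hΔ (fun δ => U N δ - 1) (by show U N ∅ - 1 = 0; rw [hUe N]; ring)
  constructor
  · -- (I) → (II)
    intro h1 Δ hΔ2
    have hΔne : Δ.Nonempty := Finset.card_pos.1 (by omega)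
    have hchoice : ∀ δ : Finset (Fin ℓ), ∃ cc : ℝ, 0 ≤ cc ∧
        (2 ≤ δ.card → ∀ N : ℕ, 1 ≤ N →
          ‖U N δ - 1‖ ≤ cc * (N : ℝ) ^ (1 - (δ.card : ℤ))) := by
      intro δ
      by_cases h : 2 ≤ δ.card
      · obtain ⟨C, hC⟩ := h1 δ h
        refine ⟨max C 0, le_max_right _ _, fun _ N hN => ?_⟩
        refine (hC N hN).trans ?_
        refine mul_le_mul_of_nonneg_right (le_max_left _ _) ?_
        have : (0:ℝ) < (N:ℝ) := by exact_mod_cast hN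
        exact (zpow_pos this _).le
      · exact ⟨0, le_rfl, fun h' => absurd h' h⟩
    choose c hc0 hcb using hchoice
    refine ⟨∑ F ∈ (Δ.powerset.erase ∅).powerset.filter (fun F => QF2.conn Δ F),
      ∏ δ ∈ F, c δ, ?_⟩
    intro N hN
    rw [hmaster N Δ hΔne]
    refine le_trans (norm_sum_le _ _) ?_
    rw [Finset.sum_mul]
    apply Finset.sum_le_sum
    intro F hF
    rw [Finset.mem_filter, Finset.mem_powerset] at hF
    exact QF6.fam_bound hF.1 c hc0 _ (fun δ _ h1' => hu1 N δ h1') hN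
      (fun δ _ h2' => hcb δ h2' N hN) (fun _ => QF6.conn_exp hF.1 hF.2)
  · -- (II) → (I)
    intro h2
    suffices H : ∀ n : ℕ, ∀ Δ : Finset (Fin ℓ), Δ.card ≤ n → 2 ≤ Δ.card →
        ∃ C : ℝ, ∀ N : ℕ, 1 ≤ N →
          ‖U N Δ - 1‖ ≤ C * (N : ℝ) ^ (1 - (Δ.card : ℤ)) by
      exact fun Δ hΔ => H Δ.card Δ le_rfl hΔ
    intro n
    induction n with
    | zero => intro Δ h hΔ2; omega
    | succ n ih =>
      intro Δ hle hΔ2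
      by_cases hcase : Δ.card ≤ n
      · exact ih Δ hcase hΔ2
      have hΔne : Δ.Nonempty := Finset.card_pos.1 (by omega)
      have hΔW : Δ ∈ Δ.powerset.erase ∅ :=
        Finset.mem_erase.2 ⟨Finset.nonempty_iff_ne_empty.1 hΔne, Finset.mem_powerset_self Δ⟩
      have hchoice : ∀ δ : Finset (Fin ℓ), ∃ cc : ℝ, 0 ≤ cc ∧
          (δ.card ≤ n → 2 ≤ δ.card → ∀ N : ℕ, 1 ≤ N →
            ‖U N δ - 1‖ ≤ cc * (N : ℝ) ^ (1 - (δ.card : ℤ))) := by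
        intro δ
        by_cases h : δ.card ≤ n ∧ 2 ≤ δ.card
        · obtain ⟨C, hC⟩ := ih δ h.1 h.2
          refine ⟨max C 0, le_max_right _ _, fun _ _ N hN => ?_⟩
          refine (hC N hN).trans ?_
          refine mul_le_mul_of_nonneg_right (le_max_left _ _) ?_
          have : (0:ℝ) < (N:ℝ) := by exact_mod_cast hN
          exact (zpow_pos this _).le
        · exact ⟨0, le_rfl, fun ha hb => absurd ⟨ha, hb⟩ h⟩
      choose c hc0 hcb using hchoice
      have hprop : ∀ δ : Finset (Fin ℓ), δ ⊆ Δ → δ ≠ Δ → 2 ≤ δ.card → ∀ N : ℕ, 1 ≤ N →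
          ‖U N δ - 1‖ ≤ c δ * (N : ℝ) ^ (1 - (δ.card : ℤ)) := by
        intro δ hsub hne h2'
        have : δ.card < Δ.card := Finset.card_lt_card (lt_of_le_of_ne hsub hne)
        exact hcb δ (by omega) h2'
      obtain ⟨Cκ, hCκ⟩ := h2 Δ hΔ2
      have hCκ' : ∀ N : ℕ, 1 ≤ N →
          ‖cumulantOn Δ (M N)‖ ≤ max Cκ 0 * (N : ℝ) ^ (1 - (Δ.card : ℤ)) := by
        intro N hN
        refine (hCκ N hN).trans (mul_le_mul_of_nonneg_right (le_max_left _ _) ?_)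
        have : (0:ℝ) < (N:ℝ) := by exact_mod_cast hN
        exact (zpow_pos this _).le
      set W : Finset (Finset (Fin ℓ)) := Δ.powerset.erase ∅ with hW
      set cf : Finset (Finset (Finset (Fin ℓ))) :=
        W.powerset.filter (fun F => QF2.conn Δ F) with hcf
      -- part 1 : families containing Δ
      have hpart1 : ∀ N : ℕ, ∑ F ∈ cf.filter (fun F => Δ ∈ F), ∏ δ ∈ F, (U N δ - 1)
          = (U N Δ - 1) * ∏ δ ∈ W.erase Δ, U N δ := by
        intro N
        have hbij : ∑ F ∈ cf.filter (fun F => Δ ∈ F), ∏ δ ∈ F, (U N δ - 1)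
            = ∑ F' ∈ (W.erase Δ).powerset,
                ((U N Δ - 1) * ∏ δ ∈ F', (U N δ - 1)) := by
          apply Finset.sum_nbij' (fun F => F.erase Δ) (fun F' => insert Δ F')
          · intro F hF
            rw [Finset.mem_filter, hcf, Finset.mem_filter, Finset.mem_powerset] at hF
            rw [Finset.mem_powerset]
            exact Finset.erase_subset_erase Δ hF.1.1
          · intro F' hF'
            rw [Finset.mem_powerset] at hF'
            rw [Finset.mem_filter]
            refine ⟨?_, Finset.mem_insert_self _ _⟩
            rw [hcf, Finset.mem_filter, Finset.mem_powerset]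
            refine ⟨?_, QF2.conn_of_mem (Finset.mem_insert_self _ _) hΔne⟩
            exact Finset.insert_subset hΔW (hF'.trans (Finset.erase_subset _ _))
          · intro F hF
            rw [Finset.mem_filter] at hF
            exact Finset.insert_erase hF.2
          · intro F' hF'
            rw [Finset.mem_powerset] at hF'
            apply Finset.erase_insert
            intro hΔF'
            exact (Finset.mem_erase.1 (hF' hΔF')).1 rfl
          · intro F hF
            rw [Finset.mem_filter] at hF
            exact (Finset.mul_prod_erase F _ hF.2).symm
        rw [hbij, ← Finset.mul_sum, ← QF5.prod_one_add]
        congr 1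
        exact Finset.prod_congr rfl (fun δ _ => by ring)
      have hsplit : ∀ N : ℕ, cumulantOn Δ (M N)
          = (U N Δ - 1) * (∏ δ ∈ W.erase Δ, U N δ)
            + ∑ F ∈ cf.filter (fun F => Δ ∉ F), ∏ δ ∈ F, (U N δ - 1) := by
        intro N
        rw [hmaster N Δ hΔne,
          ← Finset.sum_filter_add_sum_filter_not cf (fun F => Δ ∈ F), hpart1 N]
      -- bound on D
      set CD : ℝ := ∑ F ∈ cf.filter (fun F => Δ ∉ F), ∏ δ ∈ F, c δ with hCDdef
      have hCD : ∀ N : ℕ, 1 ≤ N →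
          ‖∑ F ∈ cf.filter (fun F => Δ ∉ F), ∏ δ ∈ F, (U N δ - 1)‖
            ≤ CD * (N : ℝ) ^ (1 - (Δ.card : ℤ)) := by
        intro N hN
        refine le_trans (norm_sum_le _ _) ?_
        rw [hCDdef, Finset.sum_mul]
        apply Finset.sum_le_sum
        intro F hF
        rw [Finset.mem_filter, hcf, Finset.mem_filter, Finset.mem_powerset] at hF
        obtain ⟨⟨hFW, hFconn⟩, hΔF⟩ := hF
        refine QF6.fam_bound hFW c hc0 _ (fun δ _ h1' => hu1 N δ h1') hN ?_
          (fun _ => QF6.conn_exp hFW hFconn)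
        intro δ hδ h2'
        have hδW := hFW hδ
        rw [hW, Finset.mem_erase, Finset.mem_powerset] at hδW
        refine hprop δ hδW.2 ?_ h2' N hN
        rintro rfl
        exact hΔF hδ
      have hCD0 : 0 ≤ CD :=
        Finset.sum_nonneg (fun F _ => Finset.prod_nonneg (fun δ _ => hc0 δ))
      -- bound on R - 1
      set CR : ℝ := ∑ F ∈ ((W.erase Δ).powerset).erase ∅, ∏ δ ∈ F, c δ with hCRdef
      have hCR0 : 0 ≤ CR :=
        Finset.sum_nonneg (fun F _ => Finset.prod_nonneg (fun δ _ => hc0 δ))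
      have hRsum : ∀ N : ℕ, (∏ δ ∈ W.erase Δ, U N δ) - 1
          = ∑ F ∈ ((W.erase Δ).powerset).erase ∅, ∏ δ ∈ F, (U N δ - 1) := by
        intro N
        have h1 : ∏ δ ∈ W.erase Δ, U N δ
            = ∏ δ ∈ W.erase Δ, ((U N δ - 1) + 1) :=
          Finset.prod_congr rfl (fun δ _ => by ring)
        rw [h1, QF5.prod_one_add,
          ← Finset.add_sum_erase _ _ (Finset.empty_mem_powerset (W.erase Δ))]
        simp
      have hCR : ∀ N : ℕ, 1 ≤ N →
          ‖(∏ δ ∈ W.erase Δ, U N δ) - 1‖ ≤ CR * (N : ℝ) ^ (-1 : ℤ) := by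
        intro N hN
        rw [hRsum N]
        refine le_trans (norm_sum_le _ _) ?_
        rw [hCRdef, Finset.sum_mul]
        apply Finset.sum_le_sum
        intro F hF
        rw [Finset.mem_erase, Finset.mem_powerset] at hF
        obtain ⟨hFne, hFsub⟩ := hF
        have hFW : F ⊆ Δ.powerset.erase ∅ := by
          refine hFsub.trans ?_
          rw [hW]
          exact Finset.erase_subset _ _
        refine QF6.fam_bound hFW c hc0 _ (fun δ _ h1' => hu1 N δ h1') hN ?_ ?_
        · intro δ hδ h2'
          have hδW := hFsub hδ
          rw [Finset.mem_erase] at hδW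
          have hδΔ : δ ⊆ Δ := by
            have := hδW.2
            rw [hW, Finset.mem_erase, Finset.mem_powerset] at this
            exact this.2
          exact hprop δ hδΔ hδW.1 h2' N hN
        · intro hall
          have hFpos : 1 ≤ F.card :=
            Finset.card_pos.2 (Finset.nonempty_iff_ne_empty.2 hFne)
          calc ∑ δ ∈ F, (1 - (δ.card : ℤ)) ≤ ∑ _δ ∈ F, (-1 : ℤ) := by
                apply Finset.sum_le_sum
                intro δ hδ
                have := hall δ hδ
                have : (2 : ℤ) ≤ (δ.card : ℤ) := by exact_mod_cast this
                omega
            _ = -(F.card : ℤ) := by simp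
            _ ≤ -1 := by
                have : (1 : ℤ) ≤ (F.card : ℤ) := by exact_mod_cast hFpos
                omega
      -- assemble
      set N₀ : ℕ := ⌈2 * CR⌉₊ + 1 with hN₀def
      set K0 : ℝ := ∑ k ∈ Finset.range (N₀ + 1), ‖U k Δ - 1‖ with hK0def
      have hK00 : 0 ≤ K0 := Finset.sum_nonneg (fun k _ => norm_nonneg _)
      set e' : ℕ := Δ.card - 1 with he'def
      refine ⟨max (2 * (max Cκ 0 + CD)) (K0 * (N₀ : ℝ) ^ e'), ?_⟩
      intro N hN
      have hNpos : (0:ℝ) < (N:ℝ) := by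
        have : (1:ℝ) ≤ (N:ℝ) := by exact_mod_cast hN
        linarith
      have hzpos : (0:ℝ) < (N:ℝ) ^ (1 - (Δ.card : ℤ)) := zpow_pos hNpos _
      by_cases hNle : N ≤ N₀
      · -- small N
        have h1 : ‖U N Δ - 1‖ ≤ K0 := by
          rw [hK0def]
          exact Finset.single_le_sum (f := fun k => ‖U k Δ - 1‖)
            (fun k _ => norm_nonneg _) (Finset.mem_range.2 (by omega))
        have hinv : (N:ℝ) ^ (1 - (Δ.card : ℤ)) = ((N:ℝ) ^ e')⁻¹ := by
          have he : (1 - (Δ.card : ℤ)) = -(e' : ℤ) := by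
            rw [he'def]
            have : ((Δ.card - 1 : ℕ) : ℤ) = (Δ.card : ℤ) - 1 := by
              exact_mod_cast Nat.cast_sub (by omega : 1 ≤ Δ.card)
            omega
          rw [he, zpow_neg, zpow_natCast]
        have hNe'pos : (0:ℝ) < (N:ℝ) ^ e' := by positivity
        have hNN₀ : (N:ℝ) ^ e' ≤ (N₀:ℝ) ^ e' := by
          apply pow_le_pow_left₀ (le_of_lt hNpos)
          exact_mod_cast hNle
        have h2' : K0 ≤ (K0 * (N₀:ℝ) ^ e') * ((N:ℝ) ^ e')⁻¹ := by
          rw [← div_eq_mul_inv, le_div_iff₀ hNe'pos]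
          exact mul_le_mul_of_nonneg_left hNN₀ hK00
        refine h1.trans (h2'.trans ?_)
        rw [← hinv]
        exact mul_le_mul_of_nonneg_right (le_max_right _ _) hzpos.le
      · -- large N
        push_neg at hNle
        have hRlow : (1:ℝ)/2 ≤ ‖∏ δ ∈ W.erase Δ, U N δ‖ := by
          have h1 := hCR N hN
          have hCRN : CR * (N:ℝ) ^ (-1 : ℤ) ≤ 1/2 := by
            have h2CR : 2 * CR ≤ (N₀ : ℝ) := by
              rw [hN₀def]
              push_cast
              have := Nat.le_ceil (2 * CR)
              linarith
            have hN₀N : (N₀:ℝ) + 1 ≤ (N:ℝ) := by exact_mod_cast hNle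
            rw [zpow_neg_one, ← div_eq_mul_inv, div_le_iff₀ hNpos]
            nlinarith
          have htri : ‖(1:ℂ)‖ ≤ ‖∏ δ ∈ W.erase Δ, U N δ‖
              + ‖(∏ δ ∈ W.erase Δ, U N δ) - 1‖ := by
            have h3 := norm_sub_le (∏ δ ∈ W.erase Δ, U N δ)
              ((∏ δ ∈ W.erase Δ, U N δ) - 1)
            simpa using h3
          rw [norm_one] at htri
          linarith [h1.trans hCRN]
        have h2' : (U N Δ - 1) * (∏ δ ∈ W.erase Δ, U N δ)
            = cumulantOn Δ (M N)
              - ∑ F ∈ cf.filter (fun F => Δ ∉ F), ∏ δ ∈ F, (U N δ - 1) := by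
          rw [hsplit N]; ring
        have hnorm : ‖U N Δ - 1‖ * ‖∏ δ ∈ W.erase Δ, U N δ‖
            ≤ max Cκ 0 * (N:ℝ) ^ (1 - (Δ.card : ℤ))
              + CD * (N:ℝ) ^ (1 - (Δ.card : ℤ)) := by
          rw [← norm_mul, h2']
          exact (norm_sub_le _ _).trans (add_le_add (hCκ' N hN) (hCD N hN))
        have hhalf : (1/2) * ‖U N Δ - 1‖
            ≤ ‖U N Δ - 1‖ * ‖∏ δ ∈ W.erase Δ, U N δ‖ := by
          rw [mul_comm (1/2 : ℝ)]
          exact mul_le_mul_of_nonneg_left hRlow (norm_nonneg _)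
        have hfin : ‖U N Δ - 1‖
            ≤ 2 * (max Cκ 0 + CD) * (N:ℝ) ^ (1 - (Δ.card : ℤ)) := by
          nlinarith [hhalf, hnorm]
        exact hfin.trans (mul_le_mul_of_nonneg_right (le_max_left _ _) hzpos.le)

end
end

section
/- Let ℓ ≥ 2 be an integer and a_1, …, a_{ℓ−1} positive integers. Then, as the real number X tends to +∞, ∏_{δ ⊆ [ℓ−1]} ( X − Σ_{j ∈ δ} a_j )^{(−1)^{|δ|}} = 1 + O(X^{−ℓ+1}), where the product runs over all subsets δ of [ℓ−1] (including the empty set) and each factor appears with exponent +1 if |δ| is even and −1 if |δ| is odd. -/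
set_option maxHeartbeats 1000000

open scoped BigOperators

noncomputable def logF : ℕ → ℝ → ℝ
  | 0 => Real.log
  | (k+1) => fun x => (-1)^k * (Nat.factorial k) / x^(k+1)

lemma logF_succ (k : ℕ) : logF (k+1) = fun x => (-1:ℝ)^k * (Nat.factorial k) / x^(k+1) := rfl

lemma logF_hasDerivAt (k : ℕ) {x : ℝ} (hx : 0 < x) :
    HasDerivAt (logF k) (logF (k+1) x) x := by
  cases k with
  | zero =>
      have h := Real.hasDerivAt_log hx.ne'
      have : logF 1 x = x⁻¹ := by rw [logF_succ]; norm_num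
      rw [show logF 0 = Real.log from rfl, this]
      exact h
  | succ k =>
      have h1 : HasDerivAt (fun y : ℝ => y ^ (k+1)) (((k:ℝ)+1) * x^k) x := by
        simpa using hasDerivAt_pow (k+1) x
      have h2 := (h1.inv (pow_ne_zero _ hx.ne')).const_mul ((-1:ℝ)^k * (Nat.factorial k))
      have heq : (-1:ℝ)^k * (Nat.factorial k) * (-(((k:ℝ)+1) * x^k) / (x^(k+1))^2)
          = (-1)^(k+1) * (Nat.factorial (k+1)) / x^(k+2) := by
        rw [Nat.factorial_succ]
        push_cast
        field_simp
        ring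
      have h3 : (fun y : ℝ => (-1:ℝ)^k * (Nat.factorial k) * (y^(k+1))⁻¹) = logF (k+1) := by
        funext y
        simp only [logF_succ, div_eq_mul_inv]
      simp only [Pi.inv_apply] at h2
      rw [h3, heq] at h2
      exact h2

lemma alt_sum_bound {ι : Type*} [DecidableEq ι] (s : Finset ι) :
    ∀ (F : ℕ → ℝ → ℝ) (lo hi M : ℝ) (b : ι → ℝ),
    (∀ i ∈ s, 0 ≤ b i) →
    (∀ k, ∀ x ∈ Set.Icc lo hi, HasDerivAt (F k) (F (k+1) x) x) →
    (∀ x ∈ Set.Icc lo hi, |F s.card x| ≤ M) →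
    ∀ X : ℝ, lo ≤ X - ∑ i ∈ s, b i → X ≤ hi →
    |∑ δ ∈ s.powerset, (-1:ℝ)^δ.card * F 0 (X - ∑ i ∈ δ, b i)| ≤ M * ∏ i ∈ s, b i := by
  induction s using Finset.induction_on with
  | empty =>
      intro F lo hi M b _ _ hM X hX1 hX2
      simp only [Finset.powerset_empty, Finset.sum_singleton, Finset.card_empty, pow_zero,
        Finset.sum_empty, one_mul, Finset.prod_empty, mul_one, sub_zero] at *
      exact hM X ⟨by linarith, hX2⟩
  | @insert a s ha IH =>
      intro F lo hi M b hb hF hM X hX1 hX2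
      set c := b a with hc
      have hc0 : 0 ≤ c := hb a (Finset.mem_insert_self a s)
      have hsum : ∑ i ∈ insert a s, b i = c + ∑ i ∈ s, b i := Finset.sum_insert ha
      have hbs : 0 ≤ ∑ i ∈ s, b i :=
        Finset.sum_nonneg fun i hi => hb i (Finset.mem_insert_of_mem hi)
      set G : ℕ → ℝ → ℝ := fun k x => F k x - F k (x - c) with hG
      have hGderiv : ∀ k, ∀ x ∈ Set.Icc (lo + c) hi, HasDerivAt (G k) (G (k+1) x) x := by
        intro k x hx
        have hx1 : x ∈ Set.Icc lo hi := ⟨by linarith [hx.1], hx.2⟩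
        have hx2 : x - c ∈ Set.Icc lo hi := ⟨by linarith [hx.1], by linarith [hx.2]⟩
        have h1 := hF k x hx1
        have h2 : HasDerivAt (fun y => F k (y - c)) (F (k+1) (x - c)) x := by
          simpa [Function.comp_def] using (hF k (x - c) hx2).comp x ((hasDerivAt_id x).sub_const c)
        exact h1.sub h2
      have hGbound : ∀ x ∈ Set.Icc (lo + c) hi, |G s.card x| ≤ M * c := by
        intro x hx
        have hsub : Set.Icc (x - c) x ⊆ Set.Icc lo hi := by
          intro y hy
          exact ⟨by linarith [hy.1, hx.1], by linarith [hy.2, hx.2]⟩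
        have hcard : (insert a s).card = s.card + 1 := Finset.card_insert_of_notMem ha
        have key := Convex.norm_image_sub_le_of_norm_hasDerivWithin_le
          (f := F s.card) (f' := F (s.card + 1)) (s := Set.Icc (x - c) x) (C := M)
          (fun y hy => (hF s.card y (hsub hy)).hasDerivWithinAt)
          (fun y hy => by simpa [Real.norm_eq_abs, hcard] using hM y (hsub hy))
          (convex_Icc _ _)
          (Set.left_mem_Icc.2 (by linarith)) (Set.right_mem_Icc.2 (by linarith))
        simpa [Real.norm_eq_abs, abs_of_nonneg hc0, mul_comm] using key
      have hIH := IH G (lo + c) hi (M * c) b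
        (fun i hi => hb i (Finset.mem_insert_of_mem hi))
        hGderiv hGbound X (by rw [hsum] at hX1; linarith) hX2
      have hsplit : ∑ δ ∈ (insert a s).powerset, (-1:ℝ)^δ.card * F 0 (X - ∑ i ∈ δ, b i)
          = ∑ δ ∈ s.powerset, (-1:ℝ)^δ.card * G 0 (X - ∑ i ∈ δ, b i) := by
        rw [Finset.sum_powerset_insert ha, ← Finset.sum_add_distrib]
        refine Finset.sum_congr rfl fun δ hδ => ?_
        have haδ : a ∉ δ := fun h => ha (Finset.mem_powerset.1 hδ h)
        rw [Finset.card_insert_of_notMem haδ, Finset.sum_insert haδ]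
        rw [show X - (c + ∑ i ∈ δ, b i) = X - ∑ i ∈ δ, b i - c by ring]
        simp only [hG, pow_succ]
        ring
      rw [hsplit, Finset.prod_insert ha]
      calc |∑ δ ∈ s.powerset, (-1:ℝ)^δ.card * G 0 (X - ∑ i ∈ δ, b i)|
          ≤ (M * c) * ∏ i ∈ s, b i := hIH
        _ = M * (c * ∏ i ∈ s, b i) := by ring

/-- Lemma 2.3: for positive integers `a_1,…,a_{ℓ−1}`,
`Π_{δ ⊆ [ℓ−1]} (X − Σ_{j∈δ} a_j)^{(−1)^{|δ|}} = 1 + O(X^{−ℓ+1})` as `X → +∞`. -/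
theorem alternating_product_estimate (ℓ : ℕ) (hℓ : 2 ≤ ℓ)
    (a : Fin (ℓ - 1) → ℕ) (ha : ∀ j, 0 < a j) :
    ∃ C X₀ : ℝ, ∀ X : ℝ, X₀ ≤ X →
      |(∏ δ ∈ (Finset.univ : Finset (Fin (ℓ - 1))).powerset,
          (X - ∑ j ∈ δ, (a j : ℝ)) ^ ((-1 : ℤ) ^ δ.card)) - 1|
        ≤ C / X ^ (ℓ - 1) := by
  obtain ⟨m, rfl⟩ : ∃ m, ℓ = m + 2 := ⟨ℓ - 2, by omega⟩
  set A : ℝ := ∑ j, (a j : ℝ) with hAdef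
  set B : ℝ := (Nat.factorial m : ℝ) * ∏ j, (a j : ℝ) with hBdef
  have hA0 : 0 ≤ A := Finset.sum_nonneg fun j _ => by positivity
  have hB1 : 1 ≤ B := by
    have h1 : (1:ℝ) ≤ (Nat.factorial m : ℝ) := by
      exact_mod_cast Nat.one_le_iff_ne_zero.2 (Nat.factorial_ne_zero m)
    have h2 : (1:ℝ) ≤ ∏ j, (a j : ℝ) := by
      rw [← Nat.cast_prod]
      exact_mod_cast Nat.one_le_iff_ne_zero.2 (Finset.prod_pos fun j _ => ha j).ne'
    nlinarith
  refine ⟨2^(m+2) * B, 2*A + 2*B + 2, ?_⟩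
  intro X hX
  have hXA : 0 < X - A := by linarith
  have hXA1 : 1 ≤ X - A := by linarith
  have hXA2B : 2*B ≤ X - A := by linarith
  have hX0 : 0 < X := by linarith
  have hXhalf : X/2 ≤ X - A := by linarith
  -- apply the key lemma
  have hcard : (Finset.univ : Finset (Fin (m + 2 - 1))).card = m + 1 := by simp
  have hfacnn : (0:ℝ) ≤ (Nat.factorial m : ℝ) := by positivity
  have key := alt_sum_bound (Finset.univ : Finset (Fin (m + 2 - 1))) logF (X - A) X
      ((Nat.factorial m : ℝ) / (X - A)^(m+1)) (fun j => (a j : ℝ))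
      (fun i _ => by positivity)
      (fun k x hx => logF_hasDerivAt k (lt_of_lt_of_le hXA hx.1))
      (fun x hx => by
        have hx0 : 0 < x := lt_of_lt_of_le hXA hx.1
        rw [hcard, logF_succ]
        rw [abs_div]
        have habs : |(-1:ℝ)^m * (Nat.factorial m : ℝ)| = (Nat.factorial m : ℝ) := by
          rw [abs_mul, abs_pow, abs_neg, abs_one, one_pow, one_mul, abs_of_nonneg hfacnn]
        rw [habs, abs_of_nonneg (by positivity : (0:ℝ) ≤ x^(m+1))]
        gcongr
        exact hx.1)
      X (by rw [hAdef]) le_rfl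
  set S : ℝ := ∑ δ ∈ (Finset.univ : Finset (Fin (m + 2 - 1))).powerset,
      (-1:ℝ)^δ.card * logF 0 (X - ∑ j ∈ δ, (a j : ℝ)) with hSdef
  have hS1 : |S| ≤ B / (X - A)^(m+1) := by
    calc |S| ≤ ((Nat.factorial m : ℝ) / (X - A)^(m+1)) * ∏ j, (a j : ℝ) := key
      _ = B / (X - A)^(m+1) := by rw [hBdef, div_mul_eq_mul_div]
  have hSle1 : |S| ≤ 1 := by
    have h1 : X - A ≤ (X - A)^(m+1) := le_self_pow₀ hXA1 (Nat.succ_ne_zero m)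
    have h2 : B / (X - A)^(m+1) ≤ B / (X - A) := by
      gcongr
    have h3 : B / (X - A) ≤ 1 := by
      rw [div_le_one hXA]; linarith
    linarith
  -- the product and its logarithm
  have hfac : ∀ δ ∈ (Finset.univ : Finset (Fin (m + 2 - 1))).powerset,
      0 < X - ∑ j ∈ δ, (a j : ℝ) := by
    intro δ _
    have : ∑ j ∈ δ, (a j : ℝ) ≤ A := by
      rw [hAdef]
      exact Finset.sum_le_univ_sum_of_nonneg fun j => by positivity
    linarith
  set P : ℝ := ∏ δ ∈ (Finset.univ : Finset (Fin (m + 2 - 1))).powerset,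
      (X - ∑ j ∈ δ, (a j : ℝ)) ^ ((-1 : ℤ) ^ δ.card) with hPdef
  have hP : 0 < P := Finset.prod_pos fun δ hδ => zpow_pos (hfac δ hδ) _
  have hlog : Real.log P = S := by
    rw [hPdef, Real.log_prod (fun δ hδ => (zpow_pos (hfac δ hδ) _).ne')]
    refine Finset.sum_congr rfl fun δ hδ => ?_
    rw [Real.log_zpow]
    push_cast
    rfl
  have hexp : P = Real.exp S := by rw [← hlog, Real.exp_log hP]
  have hbound : |P - 1| ≤ 2 * |S| := by
    rw [hexp]; exact Real.abs_exp_sub_one_le hSle1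
  have hpow : (X/2)^(m+1) ≤ (X - A)^(m+1) := by
    gcongr
  have hfin : 2 * (B / (X - A)^(m+1)) ≤ 2^(m+2) * B / X^(m+1) := by
    have h1 : 2 * (B / (X - A)^(m+1)) ≤ 2 * (B / (X/2)^(m+1)) := by
      gcongr
    have h2 : 2 * (B / (X/2)^(m+1)) = 2^(m+2) * B / X^(m+1) := by
      rw [div_pow]
      field_simp
      ring
    linarith
  show |P - 1| ≤ 2^(m+2) * B / X^(m+1)
  calc |P - 1| ≤ 2 * |S| := hbound
    _ ≤ 2 * (B / (X - A)^(m+1)) := by linarith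
    _ ≤ 2^(m+2) * B / X^(m+1) := hfin
end

section
/- Let ℓ ≥ 2 be an integer and a_1, …, a_{ℓ−1} positive integers. Define the polynomials R_ev(X) = ∏_δ (X − Σ_{j∈δ} a_j), the product over subsets δ ⊆ [ℓ−1] of even cardinality, and R_odd(X) = ∏_δ (X − Σ_{j∈δ} a_j), the product over subsets δ ⊆ [ℓ−1] of odd cardinality. Then both R_ev and R_odd are monic polynomials of degree 2^{ℓ−2}, and the difference R_ev − R_odd is a polynomial of degree at most 2^{ℓ−2} − ℓ + 1. -/
open scoped BigOperators

noncomputable section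

/-- The polynomial `R_ev(X) = Π_{δ ⊆ [ℓ−1], |δ| even} (X − Σ_{j∈δ} a_j)`. -/
def Rev (ℓ : ℕ) (a : Fin (ℓ - 1) → ℕ) : Polynomial ℝ :=
  ∏ δ ∈ (Finset.univ : Finset (Fin (ℓ - 1))).powerset.filter (fun δ => Even δ.card),
    (Polynomial.X - Polynomial.C (∑ j ∈ δ, (a j : ℝ)))

/-- The polynomial `R_odd(X) = Π_{δ ⊆ [ℓ−1], |δ| odd} (X − Σ_{j∈δ} a_j)`. -/
def Rodd (ℓ : ℕ) (a : Fin (ℓ - 1) → ℕ) : Polynomial ℝ :=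
  ∏ δ ∈ (Finset.univ : Finset (Fin (ℓ - 1))).powerset.filter (fun δ => Odd δ.card),
    (Polynomial.X - Polynomial.C (∑ j ∈ δ, (a j : ℝ)))

namespace RevAux

open Polynomial Finset

variable {ι : Type*} [DecidableEq ι]

/-- The even-subset product, over a general finset. -/
def EvP (s : Finset ι) (a : ι → ℝ) : Polynomial ℝ :=
  ∏ δ ∈ s.powerset.filter (fun δ => Even δ.card), (X - C (∑ j ∈ δ, a j))

/-- The odd-subset product, over a general finset. -/
def OdP (s : Finset ι) (a : ι → ℝ) : Polynomial ℝ :=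
  ∏ δ ∈ s.powerset.filter (fun δ => Odd δ.card), (X - C (∑ j ∈ δ, a j))

lemma powerset_single (i : ι) : ({i} : Finset ι).powerset = {∅, {i}} := by
  rw [show ({i} : Finset ι) = insert i ∅ from rfl, powerset_insert]
  ext t; simp [or_comm]

lemma EvP_single (i : ι) (a : ι → ℝ) : EvP {i} a = X := by
  simp [EvP, powerset_single, filter_insert, filter_singleton]

lemma OdP_single (i : ι) (a : ι → ℝ) : OdP {i} a = X - C (a i) := by
  simp [OdP, powerset_single, filter_insert, filter_singleton, Nat.odd_iff]

lemma prod_insert_filter (i : ι) (s : Finset ι) (h : i ∉ s) (a : ι → ℝ)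
    (p q : ℕ → Prop) [DecidablePred p] [DecidablePred q]
    (hpq : ∀ n, p (n + 1) ↔ q n) :
    ∏ δ ∈ (insert i s).powerset.filter (fun δ => p δ.card), (X - C (∑ j ∈ δ, a j)) =
      (∏ δ ∈ s.powerset.filter (fun δ => p δ.card), (X - C (∑ j ∈ δ, a j))) *
      (∏ δ ∈ s.powerset.filter (fun δ : Finset ι => q δ.card), (X - C (∑ j ∈ δ, a j))).comp
        (X - C (a i)) := by
  rw [powerset_insert, filter_union, prod_union, filter_image, Polynomial.prod_comp]
  · congr 1
    rw [prod_image]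
    · apply Finset.prod_congr
      · apply filter_congr
        intro δ hδ
        have hiδ : i ∉ δ := fun hi => h (mem_powerset.mp hδ hi)
        rw [card_insert_of_notMem hiδ, hpq]
      · intro δ hδ
        have hiδ : i ∉ δ := fun hi => h (mem_powerset.mp (mem_filter.mp hδ).1 hi)
        rw [sum_insert hiδ, sub_comp, X_comp, C_comp, C_add]
        ring
    · intro δ₁ h₁ δ₂ h₂ hins
      have h₁' : i ∉ δ₁ := fun hi => h (mem_powerset.mp (mem_filter.mp h₁).1 hi)
      have h₂' : i ∉ δ₂ := fun hi => h (mem_powerset.mp (mem_filter.mp h₂).1 hi)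
      have := congrArg (fun t => Finset.erase t i) hins
      simpa [Finset.erase_insert h₁', Finset.erase_insert h₂'] using this
  · rw [Finset.disjoint_left]
    intro δ h₁ h₂
    have h₁' : i ∉ δ := fun hi => h (mem_powerset.mp (mem_filter.mp h₁).1 hi)
    rcases mem_image.mp (mem_filter.mp h₂).1 with ⟨t, _, rfl⟩
    exact h₁' (mem_insert_self i t)

lemma EvP_insert (i : ι) (s : Finset ι) (h : i ∉ s) (a : ι → ℝ) :
    EvP (insert i s) a = EvP s a * (OdP s a).comp (X - C (a i)) :=
  prod_insert_filter i s h a _ _ (fun n => by rw [Nat.even_add_one, Nat.not_even_iff_odd])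

lemma OdP_insert (i : ι) (s : Finset ι) (h : i ∉ s) (a : ι → ℝ) :
    OdP (insert i s) a = OdP s a * (EvP s a).comp (X - C (a i)) :=
  prod_insert_filter i s h a _ _ (fun n => by rw [Nat.odd_add_one, Nat.not_odd_iff_even])

lemma leadingCoeff_comp_linear (p : Polynomial ℝ) (c : ℝ) :
    (p.comp (X - C c)).leadingCoeff = p.leadingCoeff := by
  rcases eq_or_ne p 0 with rfl | hp
  · simp
  · rw [leadingCoeff_comp (by simp [natDegree_X_sub_C])]
    simp [(monic_X_sub_C c).leadingCoeff]

lemma monic_comp_linear {p : Polynomial ℝ} (hp : p.Monic) (c : ℝ) :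
    (p.comp (X - C c)).Monic := by
  unfold Polynomial.Monic
  rw [leadingCoeff_comp_linear, hp.leadingCoeff]

lemma comp_linear_ne_zero {p : Polynomial ℝ} (hp : p ≠ 0) (c : ℝ) :
    p.comp (X - C c) ≠ 0 := by
  intro h
  apply hp
  rw [← leadingCoeff_eq_zero, ← leadingCoeff_comp_linear p c, h, leadingCoeff_zero]

lemma natDegree_comp_linear (p : Polynomial ℝ) (c : ℝ) :
    (p.comp (X - C c)).natDegree = p.natDegree := by
  rw [natDegree_comp, natDegree_X_sub_C, mul_one]

lemma degree_comp_linear (p : Polynomial ℝ) (c : ℝ) :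
    (p.comp (X - C c)).degree = p.degree := by
  rcases eq_or_ne p 0 with rfl | hp
  · simp
  · rw [degree_eq_natDegree (comp_linear_ne_zero hp c), degree_eq_natDegree hp,
      natDegree_comp_linear]

/-- Shifting a polynomial drops the degree of the difference. -/
lemma degree_comp_sub_lt (p : Polynomial ℝ) (c : ℝ) (d : ℕ) (hp : p.degree ≤ d) :
    (p.comp (X - C c) - p).degree < (d : WithBot ℕ) := by
  rcases eq_or_ne p 0 with rfl | h0
  · simp only [zero_comp, sub_self, degree_zero, Nat.cast_withBot]
    exact WithBot.bot_lt_coe d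
  · have h1 : (p.comp (X - C c)).degree = p.degree := degree_comp_linear p c
    have := degree_sub_lt h1 (comp_linear_ne_zero h0 c) (leadingCoeff_comp_linear p c)
    exact lt_of_lt_of_le this (h1.le.trans hp)

lemma degree_le_pred {q : Polynomial ℝ} {n : ℕ} (h : q.degree < (n : WithBot ℕ)) :
    q.degree ≤ ((n - 1 : ℕ) : WithBot ℕ) := by
  rcases eq_or_ne q 0 with rfl | hq
  · simp
  · rw [degree_eq_natDegree hq] at h ⊢
    have : q.natDegree < n := by exact_mod_cast h
    exact_mod_cast Nat.le_pred_of_lt this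

lemma degree_mul_le_nat {p q : Polynomial ℝ} {dp dq : ℕ} (hp : p.degree ≤ dp)
    (hq : q.degree ≤ dq) : (p * q).degree ≤ ((dp + dq : ℕ) : WithBot ℕ) := by
  refine (degree_mul_le p q).trans ?_
  calc p.degree + q.degree ≤ (dp : WithBot ℕ) + dq := add_le_add hp hq
    _ = ((dp + dq : ℕ) : WithBot ℕ) := by exact_mod_cast rfl

lemma main (s : Finset ι) (hs : s.Nonempty) (a : ι → ℝ) :
    (EvP s a).Monic ∧ (OdP s a).Monic ∧
    (EvP s a).natDegree = 2 ^ (s.card - 1) ∧ (OdP s a).natDegree = 2 ^ (s.card - 1) ∧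
    (EvP s a - OdP s a).degree ≤ ((2 ^ (s.card - 1) - s.card : ℕ) : WithBot ℕ) := by
  induction hs using Finset.Nonempty.cons_induction with
  | singleton i =>
    refine ⟨?_, ?_, ?_, ?_, ?_⟩ <;>
      simp [EvP_single, OdP_single, monic_X, monic_X_sub_C, natDegree_X_sub_C, degree_C_le]
  | cons i s hi hs IH =>
    obtain ⟨hEm, hOm, hEd, hOd, hD⟩ := IH
    rw [Finset.cons_eq_insert]
    set m := s.card with hm
    have hm1 : 1 ≤ m := Finset.card_pos.mpr hs
    set N : ℕ := 2 ^ (m - 1) with hN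
    have hmN : m ≤ N := by
      have := (m - 1).lt_two_pow_self
      omega
    have hcard : (insert i s).card = m + 1 := by rw [card_insert_of_notMem hi]
    have hpow : 2 ^ ((insert i s).card - 1) = 2 * N := by
      rw [hcard, Nat.add_sub_cancel, hN, ← pow_succ']
      congr 1
      omega
    set c := a i
    set E := EvP s a
    set O := OdP s a
    set E' := E.comp (X - C c) with hE'
    set O' := O.comp (X - C c) with hO'
    have hEm' : E'.Monic := monic_comp_linear hEm c
    have hOm' : O'.Monic := monic_comp_linear hOm c
    have h1 : (EvP (insert i s) a).Monic := by
      rw [EvP_insert i s hi a]; exact hEm.mul hOm'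
    have h2 : (OdP (insert i s) a).Monic := by
      rw [OdP_insert i s hi a]; exact hOm.mul hEm'
    have h3 : (EvP (insert i s) a).natDegree = 2 ^ ((insert i s).card - 1) := by
      rw [EvP_insert i s hi a, hpow]
      show (E * O').natDegree = 2 * N
      rw [hEm.natDegree_mul hOm', hEd, hO', natDegree_comp_linear O c, hOd]
      ring
    have h4 : (OdP (insert i s) a).natDegree = 2 ^ ((insert i s).card - 1) := by
      rw [OdP_insert i s hi a, hpow]
      show (O * E').natDegree = 2 * N
      rw [hOm.natDegree_mul hEm', hOd, hE', natDegree_comp_linear E c, hEd]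
      ring
    refine ⟨h1, h2, h3, h4, ?_⟩
    have hEdeg : E.degree ≤ (N : WithBot ℕ) := by
      rw [degree_eq_natDegree hEm.ne_zero, hEd]
    have hid : EvP (insert i s) a - OdP (insert i s) a
        = (E - O) * (E' - E) - E * ((E - O).comp (X - C c) - (E - O)) := by
      rw [EvP_insert i s hi a, OdP_insert i s hi a, sub_comp, ← hE', ← hO']
      ring
    rw [hid, hpow, hcard]
    have hA : ((E - O) * (E' - E)).degree ≤ (((N - m) + (N - 1) : ℕ) : WithBot ℕ) := by
      refine degree_mul_le_nat hD ?_
      exact degree_le_pred (degree_comp_sub_lt E c N hEdeg)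
    have hBlt : ((E - O).comp (X - C c) - (E - O)).degree < ((N - m : ℕ) : WithBot ℕ) :=
      degree_comp_sub_lt (E - O) c (N - m) hD
    refine (degree_sub_le _ _).trans (max_le ?_ ?_)
    · refine hA.trans ?_
      have : (N - m) + (N - 1) ≤ 2 * N - (m + 1) := by omega
      exact_mod_cast Nat.cast_le.mpr this
    · rcases eq_or_ne ((E - O).comp (X - C c) - (E - O)) 0 with hz | hz
      · rw [hz, mul_zero, degree_zero]
        exact bot_le
      · have hnd : ((E - O).comp (X - C c) - (E - O)).natDegree < N - m := by
          rw [degree_eq_natDegree hz] at hBlt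
          exact_mod_cast hBlt
        have h1m : 1 ≤ N - m := by omega
        have hB : (E * ((E - O).comp (X - C c) - (E - O))).degree
            ≤ ((N + (N - m - 1) : ℕ) : WithBot ℕ) :=
          degree_mul_le_nat hEdeg (degree_le_pred hBlt)
        refine hB.trans ?_
        have : N + (N - m - 1) ≤ 2 * N - (m + 1) := by omega
        exact_mod_cast Nat.cast_le.mpr this

end RevAux

/-- `R_ev` and `R_odd` are monic of degree `2^{ℓ−2}`, and their difference has degree at
most `2^{ℓ−2} − ℓ + 1` (written `2^{ℓ−2} + 1 − ℓ` to avoid truncated subtraction). -/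
theorem Rev_sub_Rodd_degree (ℓ : ℕ) (hℓ : 2 ≤ ℓ) (a : Fin (ℓ - 1) → ℕ)
    (ha : ∀ j, 0 < a j) :
    (Rev ℓ a).Monic ∧ (Rodd ℓ a).Monic ∧
    (Rev ℓ a).natDegree = 2 ^ (ℓ - 2) ∧ (Rodd ℓ a).natDegree = 2 ^ (ℓ - 2) ∧
    (Rev ℓ a - Rodd ℓ a).degree ≤ ((2 ^ (ℓ - 2) + 1 - ℓ : ℕ) : WithBot ℕ) := by
  haveI : Nonempty (Fin (ℓ - 1)) := ⟨⟨0, by omega⟩⟩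
  have hs : (Finset.univ : Finset (Fin (ℓ - 1))).Nonempty := Finset.univ_nonempty
  have hRev : Rev ℓ a = RevAux.EvP Finset.univ (fun j => (a j : ℝ)) := rfl
  have hRodd : Rodd ℓ a = RevAux.OdP Finset.univ (fun j => (a j : ℝ)) := rfl
  have hcard : (Finset.univ : Finset (Fin (ℓ - 1))).card = ℓ - 1 := by
    simp
  obtain ⟨h1, h2, h3, h4, h5⟩ := RevAux.main Finset.univ hs (fun j => (a j : ℝ))
  rw [hcard] at h3 h4 h5
  have hexp : ℓ - 1 - 1 = ℓ - 2 := by omega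
  rw [hexp] at h3 h4 h5
  have hbound : 2 ^ (ℓ - 2) - (ℓ - 1) = 2 ^ (ℓ - 2) + 1 - ℓ := by omega
  rw [hbound] at h5
  exact ⟨hRev ▸ h1, hRodd ▸ h2, hRev ▸ h3, hRodd ▸ h4, by rw [hRev, hRodd]; exact h5⟩

end
end

section
/- Let G be a finite graph with vertex set V, and let f : V → W be a surjective map. Then the number of connected components of G satisfies #Conn(G) ≤ #Conn(G/f) + Σ_{w ∈ W} ( #Conn(G[f^{−1}(w)]) − 1 ), where G/f is the quotient graph and G[f^{−1}(w)] is the subgraph induced on the fiber f^{−1}(w). -/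
open scoped BigOperators

set_option linter.unusedSectionVars false

namespace CQBAux

open SimpleGraph

variable {V W : Type} [Fintype V] [Fintype W]

/-- The number of connected components of a graph. -/
noncomputable abbrev cc {V : Type} (G : SimpleGraph V) : ℕ := Nat.card G.ConnectedComponent

lemma walk_lift {X : SimpleGraph V} {β : Sort*} (g : V → β)
    (h : ∀ u v, X.Adj u v → g u = g v) :
    ∀ (u v : V) (_ : X.Walk u v), g u = g v := by
  intro u v p
  induction p with
  | nil => rfl
  | cons hadj _ ih => exact (h _ _ hadj).trans ih

lemma comp_map_surj {X Y : SimpleGraph V} (h : X ≤ Y) :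
    Function.Surjective (ConnectedComponent.map (Hom.ofLE h)) := by
  intro C
  refine C.ind fun v => ?_
  exact ⟨X.connectedComponentMk v, rfl⟩

lemma reach_decomp {G : SimpleGraph V} {u v a b : V}
    (h : (G ⊔ edge u v).Reachable a b) :
    G.Reachable a b ∨ (G.Reachable a u ∧ G.Reachable v b) ∨
      (G.Reachable a v ∧ G.Reachable u b) := by
  obtain ⟨p⟩ := h
  induction p with
  | nil => exact Or.inl (Reachable.refl _)
  | @cons a c b hadj p ih =>
    rcases hadj with hG | hE
    · rcases ih with h1 | ⟨h1, h2⟩ | ⟨h1, h2⟩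
      · exact Or.inl (hG.reachable.trans h1)
      · exact Or.inr (Or.inl ⟨hG.reachable.trans h1, h2⟩)
      · exact Or.inr (Or.inr ⟨hG.reachable.trans h1, h2⟩)
    · rw [edge_adj] at hE
      obtain ⟨(⟨rfl, rfl⟩ | ⟨rfl, rfl⟩), hne⟩ := hE
      · rcases ih with h1 | ⟨h1, h2⟩ | ⟨h1, h2⟩
        · exact Or.inr (Or.inl ⟨Reachable.refl _, h1⟩)
        · exact Or.inl (h1.symm.trans h2)
        · exact Or.inl h2
      · rcases ih with h1 | ⟨h1, h2⟩ | ⟨h1, h2⟩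
        · exact Or.inr (Or.inr ⟨Reachable.refl _, h1⟩)
        · exact Or.inl h2
        · exact Or.inl (h1.symm.trans h2)

/-- Adding one edge decreases the number of components by at most one. -/
lemma cc_le_sup_edge_add_one (G : SimpleGraph V) (u v : V) :
    cc G ≤ cc (G ⊔ edge u v) + 1 := by
  classical
  set G' := G ⊔ edge u v with hG'
  let φ : G.ConnectedComponent → G'.ConnectedComponent :=
    ConnectedComponent.map (Hom.ofLE le_sup_left)
  have hφ : ∀ x : V, φ (G.connectedComponentMk x) = G'.connectedComponentMk x := fun x => rfl
  let ψ : G.ConnectedComponent → G'.ConnectedComponent ⊕ Unit := fun C =>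
    if C = G.connectedComponentMk v ∧
        G.connectedComponentMk v ≠ G.connectedComponentMk u then Sum.inr ()
    else Sum.inl (φ C)
  have hinj : Function.Injective ψ := by
    intro C D hCD
    by_cases hC : C = G.connectedComponentMk v ∧
        G.connectedComponentMk v ≠ G.connectedComponentMk u <;>
      by_cases hD : D = G.connectedComponentMk v ∧
        G.connectedComponentMk v ≠ G.connectedComponentMk u
    · exact hC.1.trans hD.1.symm
    · simp only [ψ, if_pos hC, if_neg hD] at hCD
      exact absurd hCD (by simp)
    · simp only [ψ, if_neg hC, if_pos hD] at hCD
      exact absurd hCD (by simp)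
    · simp only [ψ, if_neg hC, if_neg hD, Sum.inl.injEq] at hCD
      revert hCD hC hD
      refine C.ind fun a => D.ind fun b => ?_
      intro hC hD hCD
      have hC' : G.connectedComponentMk a = G.connectedComponentMk v →
          G.connectedComponentMk v = G.connectedComponentMk u :=
        fun h => Classical.byContradiction fun hne => hC ⟨h, hne⟩
      have hD' : G.connectedComponentMk b = G.connectedComponentMk v →
          G.connectedComponentMk v = G.connectedComponentMk u :=
        fun h => Classical.byContradiction fun hne => hD ⟨h, hne⟩
      rw [hφ, hφ] at hCD
      rcases reach_decomp (ConnectedComponent.exact hCD) with h1 | ⟨h1, h2⟩ | ⟨h1, h2⟩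
      · exact ConnectedComponent.sound h1
      · have hbv : G.connectedComponentMk b = G.connectedComponentMk v :=
          ConnectedComponent.sound h2.symm
        calc G.connectedComponentMk a = G.connectedComponentMk u := ConnectedComponent.sound h1
          _ = G.connectedComponentMk v := (hD' hbv).symm
          _ = G.connectedComponentMk b := hbv.symm
      · have hav : G.connectedComponentMk a = G.connectedComponentMk v :=
          ConnectedComponent.sound h1
        calc G.connectedComponentMk a = G.connectedComponentMk v := hav
          _ = G.connectedComponentMk u := hC' hav
          _ = G.connectedComponentMk b := ConnectedComponent.sound h2
  calc cc G ≤ Nat.card (G'.ConnectedComponent ⊕ Unit) := Nat.card_le_card_of_injective ψ hinj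
    _ = cc G' + 1 := by simp [Nat.card_sum]

/-- Adding an edge between two already-reachable vertices keeps the number of components. -/
lemma cc_sup_edge_of_reachable {G : SimpleGraph V} {u v : V} (h : G.Reachable u v) :
    cc (G ⊔ edge u v) = cc G := by
  let φ : G.ConnectedComponent → (G ⊔ edge u v).ConnectedComponent :=
    ConnectedComponent.map (Hom.ofLE le_sup_left)
  have hbij : Function.Bijective φ := by
    refine ⟨?_, comp_map_surj le_sup_left⟩
    intro C D
    refine C.ind fun a => D.ind fun b => ?_
    intro hCD
    rcases reach_decomp (ConnectedComponent.exact hCD) with h1 | ⟨h1, h2⟩ | ⟨h1, h2⟩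
    · exact ConnectedComponent.sound h1
    · exact ConnectedComponent.sound ((h1.trans h).trans h2)
    · exact ConnectedComponent.sound ((h1.trans h.symm).trans h2)
  exact (Nat.card_eq_of_bijective φ hbij).symm

/-- Adding an edge between two non-reachable vertices strictly decreases the count. -/
lemma cc_sup_edge_lt {G : SimpleGraph V} {u v : V} (h : ¬ G.Reachable u v) :
    cc (G ⊔ edge u v) < cc G := by
  classical
  have huv : u ≠ v := fun he => h (he ▸ Reachable.refl u)
  have hF1 := Fintype.ofFinite G.ConnectedComponent
  have hF2 := Fintype.ofFinite (G ⊔ edge u v).ConnectedComponent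
  let φ : G.ConnectedComponent → (G ⊔ edge u v).ConnectedComponent :=
    ConnectedComponent.map (Hom.ofLE le_sup_left)
  have hsurj : Function.Surjective φ := comp_map_surj le_sup_left
  have hninj : ¬ Function.Injective φ := by
    intro hinj
    apply h
    have hadj : (G ⊔ edge u v).Adj u v := Or.inr (by rw [edge_adj]; exact ⟨Or.inl ⟨rfl, rfl⟩, huv⟩)
    have : φ (G.connectedComponentMk u) = φ (G.connectedComponentMk v) :=
      ConnectedComponent.sound hadj.reachable
    exact ConnectedComponent.exact (hinj this)
  rw [cc, cc, Nat.card_eq_fintype_card, Nat.card_eq_fintype_card]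
  exact Fintype.card_lt_of_surjective_not_injective φ hsurj hninj

/-- Submodularity-type inequality for the number of connected components. -/
lemma submod_aux : ∀ n : ℕ, ∀ Y X : SimpleGraph V, (Y.edgeSet \ X.edgeSet).ncard = n →
    cc X + cc Y ≤ cc (X ⊔ Y) + cc (X ⊓ Y) := by
  intro n
  induction n using Nat.strong_induction_on with
  | _ n ih =>
    intro Y X hn
    rcases Set.eq_empty_or_nonempty (Y.edgeSet \ X.edgeSet) with hemp | ⟨e, he⟩
    · have hYX : Y ≤ X := by
        rw [← edgeSet_subset_edgeSet]
        intro e heY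
        by_contra heX
        exact Set.eq_empty_iff_forall_notMem.mp hemp e ⟨heY, heX⟩
      rw [sup_eq_left.mpr hYX, inf_eq_right.mpr hYX]
    · revert he
      refine e.ind fun u v => ?_
      intro he
      have hadjY : Y.Adj u v := he.1
      have hnX : ¬ X.Adj u v := fun hx => he.2 hx
      have huv : u ≠ v := hadjY.ne
      set Y' := Y.deleteEdges {s(u, v)} with hY'
      have hYdec : Y = Y' ⊔ edge u v := by
        ext a b
        simp only [hY', sup_adj, deleteEdges_adj, Set.mem_singleton_iff, edge_adj, Sym2.eq_iff]
        constructor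
        · intro hab
          by_cases hc : a = u ∧ b = v ∨ a = v ∧ b = u
          · exact Or.inr ⟨hc, hab.ne⟩
          · exact Or.inl ⟨hab, hc⟩
        · rintro (⟨hab, _⟩ | ⟨(⟨rfl, rfl⟩ | ⟨rfl, rfl⟩), _⟩)
          · exact hab
          · exact hadjY
          · exact hadjY.symm
      have hXinf : X ⊓ Y' = X ⊓ Y := by
        ext a b
        simp only [hY', inf_adj, deleteEdges_adj, Set.mem_singleton_iff, Sym2.eq_iff]
        constructor
        · rintro ⟨hx, hy, _⟩; exact ⟨hx, hy⟩
        · rintro ⟨hx, hy⟩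
          refine ⟨hx, hy, ?_⟩
          rintro (⟨rfl, rfl⟩ | ⟨rfl, rfl⟩)
          · exact hnX hx
          · exact hnX hx.symm
      have hsub : Y'.edgeSet \ X.edgeSet = (Y.edgeSet \ X.edgeSet) \ {s(u, v)} := by
        rw [hY', edgeSet_deleteEdges]
        ext x
        simp only [Set.mem_diff, Set.mem_singleton_iff]
        tauto
      have hlt : (Y'.edgeSet \ X.edgeSet).ncard < n := by
        rw [hsub, ← hn]
        exact Set.ncard_diff_singleton_lt_of_mem he (Set.toFinite _)
      have IH := ih _ hlt Y' X rfl
      rw [hXinf] at IH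
      by_cases hr : Y'.Reachable u v
      · have e1 : cc Y = cc Y' := by rw [hYdec]; exact cc_sup_edge_of_reachable hr
        have e2 : cc (X ⊔ Y) = cc (X ⊔ Y') := by
          have hxy : X ⊔ Y = (X ⊔ Y') ⊔ edge u v := by rw [hYdec, sup_assoc]
          rw [hxy]
          exact cc_sup_edge_of_reachable (hr.mono le_sup_right)
        rw [e1, e2]; exact IH
      · have l1 : cc Y < cc Y' := by rw [hYdec]; exact cc_sup_edge_lt hr
        have l2 : cc (X ⊔ Y') ≤ cc (X ⊔ Y) + 1 := by
          have hxy : X ⊔ Y = (X ⊔ Y') ⊔ edge u v := by rw [hYdec, sup_assoc]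
          rw [hxy]
          exact cc_le_sup_edge_add_one _ u v
        omega

lemma submod (X Y : SimpleGraph V) : cc X + cc Y ≤ cc (X ⊔ Y) + cc (X ⊓ Y) :=
  submod_aux _ Y X rfl

lemma card_fiber_sum {A : Type} [Finite A] (F : A → W) :
    Nat.card A = ∑ w : W, Nat.card {a // F a = w} := by
  classical
  have := Fintype.ofFinite A
  rw [Nat.card_eq_fintype_card, ← Fintype.card_congr (Equiv.sigmaFiberEquiv F),
    Fintype.card_sigma]
  simp [Nat.card_eq_fintype_card]

variable (G : SimpleGraph V) (f : V → W)

/-- The graph connecting distinct vertices lying in a common fiber of `f`. -/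
def fiberGraph : SimpleGraph V where
  Adj u v := u ≠ v ∧ f u = f v
  symm := ⟨fun u v ⟨h1, h2⟩ => ⟨h1.symm, h2.symm⟩⟩
  loopless := ⟨fun u h => h.1 rfl⟩

lemma cc_fiberGraph (hf : Function.Surjective f) : cc (fiberGraph f) = Fintype.card W := by
  let α : (fiberGraph f).ConnectedComponent → W :=
    ConnectedComponent.lift f
      (fun u v p _ => walk_lift f (fun u v (h : (fiberGraph f).Adj u v) => h.2) u v p)
  have hbij : Function.Bijective α := by
    constructor
    · intro C D
      refine C.ind fun a => D.ind fun b => ?_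
      intro hab
      by_cases h : a = b
      · rw [h]
      · exact ConnectedComponent.sound (Adj.reachable (⟨h, hab⟩ : (fiberGraph f).Adj a b))
    · intro w
      obtain ⟨v, rfl⟩ := hf w
      exact ⟨(fiberGraph f).connectedComponentMk v, rfl⟩
  rw [cc, Nat.card_eq_of_bijective α hbij, Nat.card_eq_fintype_card]

lemma cc_sup_fiberGraph (hf : Function.Surjective f) :
    cc (G ⊔ fiberGraph f) =
      cc (SimpleGraph.fromRel (fun w w' => ∃ v v', G.Adj v v' ∧ f v = w ∧ f v' = w')) := by
  set Q := SimpleGraph.fromRel (fun w w' => ∃ v v', G.Adj v v' ∧ f v = w ∧ f v' = w') with hQ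
  have hadj : ∀ u v, (G ⊔ fiberGraph f).Adj u v →
      Q.connectedComponentMk (f u) = Q.connectedComponentMk (f v) := by
    intro u v h
    rcases h with h | h
    · by_cases hfe : f u = f v
      · rw [hfe]
      · refine ConnectedComponent.sound (Adj.reachable ?_)
        rw [hQ, fromRel_adj]
        exact ⟨hfe, Or.inl ⟨u, v, h, rfl, rfl⟩⟩
    · rw [h.2]
  let α : (G ⊔ fiberGraph f).ConnectedComponent → Q.ConnectedComponent :=
    ConnectedComponent.lift (fun v => Q.connectedComponentMk (f v))
      (fun u v p _ => walk_lift _ hadj u v p)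
  have hsame : ∀ a b : V, f a = f b → (G ⊔ fiberGraph f).Reachable a b := by
    intro a b hab
    by_cases h : a = b
    · rw [h]
    · exact Adj.reachable (Or.inr ⟨h, hab⟩)
  have hlift : ∀ (w w' : W) (_ : Q.Walk w w') (a b : V), f a = w → f b = w' →
      (G ⊔ fiberGraph f).Reachable a b := by
    intro w w' p
    induction p with
    | nil => intro a b ha hb; exact hsame a b (ha.trans hb.symm)
    | @cons w c w' hadj' p ih =>
      intro a b ha hb
      rw [hQ, fromRel_adj] at hadj'
      obtain ⟨-, (⟨x, y, hxy, hx, hy⟩ | ⟨x, y, hxy, hx, hy⟩)⟩ := hadj'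
      · exact ((hsame a x (ha.trans hx.symm)).trans
          (Adj.reachable (Or.inl hxy))).trans (ih y b hy hb)
      · exact ((hsame a y (ha.trans hy.symm)).trans
          (Adj.reachable (Or.inl hxy.symm))).trans (ih x b hx hb)
  have hbij : Function.Bijective α := by
    constructor
    · intro C D
      refine C.ind fun a => D.ind fun b => ?_
      intro hab
      obtain ⟨p⟩ := ConnectedComponent.exact hab
      exact ConnectedComponent.sound (hlift _ _ p a b rfl rfl)
    · intro q
      refine q.ind fun w => ?_
      obtain ⟨v, rfl⟩ := hf w
      exact ⟨(G ⊔ fiberGraph f).connectedComponentMk v, rfl⟩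
  exact Nat.card_eq_of_bijective α hbij

lemma cc_inf_fiberGraph :
    cc (G ⊓ fiberGraph f) = ∑ w : W, cc (G.induce (f ⁻¹' {w})) := by
  classical
  let F : (G ⊓ fiberGraph f).ConnectedComponent → W :=
    ConnectedComponent.lift f
      (fun u v p _ => walk_lift f (fun u v (h : (G ⊓ fiberGraph f).Adj u v) => h.2.2) u v p)
  have hfib : ∀ w : W, cc (G.induce (f ⁻¹' {w})) = Nat.card {C // F C = w} := by
    intro w
    let φw : G.induce (f ⁻¹' {w}) →g (G ⊓ fiberGraph f) :=
      ⟨Subtype.val, by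
        rintro ⟨a, ha⟩ ⟨b, hb⟩ hab
        refine ⟨hab, Adj.ne hab, ?_⟩
        simp only [Set.mem_preimage, Set.mem_singleton_iff] at ha hb
        rw [ha, hb]⟩
    let β : (G.induce (f ⁻¹' {w})).ConnectedComponent → {C // F C = w} := fun c =>
      ⟨c.map φw, by
        refine c.ind fun x => ?_
        have hx := x.2
        simp only [Set.mem_preimage, Set.mem_singleton_iff] at hx
        exact hx⟩
    have hwalk : ∀ (a b : V) (_ : (G ⊓ fiberGraph f).Walk a b) (ha : f a = w) (hb : f b = w),
        (G.induce (f ⁻¹' {w})).Reachable ⟨a, ha⟩ ⟨b, hb⟩ := by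
      intro a b p
      induction p with
      | nil => intro ha hb; rfl
      | @cons a c b hadj' p ih =>
        intro ha hb
        have hc : f c = w := hadj'.2.2 ▸ ha
        exact Reachable.trans (Adj.reachable
          (show (G.induce (f ⁻¹' {w})).Adj ⟨a, ha⟩ ⟨c, hc⟩ from hadj'.1)) (ih hc hb)
    have hbij : Function.Bijective β := by
      constructor
      · intro c d
        refine c.ind fun x => d.ind fun y => ?_
        intro hcd
        have : (G ⊓ fiberGraph f).connectedComponentMk x.val =
            (G ⊓ fiberGraph f).connectedComponentMk y.val := congrArg Subtype.val hcd
        obtain ⟨p⟩ := ConnectedComponent.exact this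
        have hx := x.2
        have hy := y.2
        simp only [Set.mem_preimage, Set.mem_singleton_iff] at hx hy
        have := hwalk x.val y.val p hx hy
        exact ConnectedComponent.sound (by convert this <;> exact Subtype.ext rfl)
      · rintro ⟨C, hC⟩
        obtain ⟨v, rfl⟩ := C.exists_rep
        have hv : f v = w := hC
        exact ⟨(G.induce (f ⁻¹' {w})).connectedComponentMk ⟨v, hv⟩, rfl⟩
    exact Nat.card_eq_of_bijective β hbij
  calc cc (G ⊓ fiberGraph f) = ∑ w : W, Nat.card {C // F C = w} := card_fiber_sum F
    _ = _ := Finset.sum_congr rfl fun w _ => (hfib w).symm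

end CQBAux

/-- Lemma 3.1: for a finite graph `G` and a surjective map `f : V → W`,
`#Conn(G) ≤ #Conn(G/f) + Σ_{w ∈ W} (#Conn(G[f⁻¹(w)]) − 1)`, where the quotient graph `G/f`
has an edge between `w` and `w'` iff `G` has an edge between the fibers of `w` and `w'`. -/
theorem components_quotient_bound (V W : Type) [Fintype V] [Fintype W]
    (G : SimpleGraph V) (f : V → W) (hf : Function.Surjective f) :
    Nat.card G.ConnectedComponent ≤
      Nat.card (SimpleGraph.fromRel
          (fun w w' => ∃ v v', G.Adj v v' ∧ f v = w ∧ f v' = w')).ConnectedComponent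
        + ∑ w : W, (Nat.card (G.induce (f ⁻¹' {w})).ConnectedComponent - 1) := by
  classical
  have key := CQBAux.submod G (CQBAux.fiberGraph f)
  rw [CQBAux.cc_fiberGraph f hf, CQBAux.cc_sup_fiberGraph G f hf,
    CQBAux.cc_inf_fiberGraph G f] at key
  have hpos : ∀ w : W, 1 ≤ CQBAux.cc (G.induce (f ⁻¹' {w})) := by
    intro w
    obtain ⟨v, hv⟩ := hf w
    haveI : Nonempty (G.induce (f ⁻¹' {w})).ConnectedComponent :=
      ⟨(G.induce (f ⁻¹' {w})).connectedComponentMk ⟨v, hv⟩⟩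
    exact Nat.card_pos
  have hsum : ∑ w : W, CQBAux.cc (G.induce (f ⁻¹' {w}))
      = ∑ w : W, (CQBAux.cc (G.induce (f ⁻¹' {w})) - 1) + Fintype.card W := by
    calc ∑ w : W, CQBAux.cc (G.induce (f ⁻¹' {w}))
        = ∑ w : W, ((CQBAux.cc (G.induce (f ⁻¹' {w})) - 1) + 1) :=
          Finset.sum_congr rfl fun w _ => (Nat.succ_pred_eq_of_pos (hpos w)).symm
      _ = ∑ w : W, (CQBAux.cc (G.induce (f ⁻¹' {w})) - 1) + Fintype.card W := by
          rw [Finset.sum_add_distrib, Finset.sum_const, Finset.card_univ, smul_eq_mul, mul_one]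
  show CQBAux.cc G ≤ CQBAux.cc (SimpleGraph.fromRel
      (fun w w' => ∃ v v', G.Adj v v' ∧ f v = w ∧ f v' = w'))
    + ∑ w : W, (CQBAux.cc (G.induce (f ⁻¹' {w})) - 1)
  omega
end
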